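/- arXiv:1705.02297 — 9 statements merged into one kernel-verified Lean document; each statement's English description precedes it below -/
import Mathlib

section
/- Let f : ℝ^q → ℝ ∪ {±∞} be quasi-concave, let C ⊆ ℝ^q be a pointed polyhedral convex cone such that f is C-monotone on the set P[S] − C and the recession cone of P[S] is contained in C, and assume S ≠ ∅. Then the problem min f(Px) s.t. Ax ≥ b has an optimal solution x* ∈ S such that f(Px*) = min over the vertices y of the upper image 𝒫 := P[S] + C of f(y). -/
open Pointwise



section ConeLib
variable {M : Type*} [AddCommGroup M] [Module ℝ M]

/-- finitely generated convex cone (nonneg combinations of a finite set) -/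
def mcone (W : Finset M) : Set M :=
  {x | ∃ μ : M → ℝ, (∀ w, 0 ≤ μ w) ∧ x = ∑ w ∈ W, μ w • w}

/-- finite convex hull -/
def mconv (V : Finset M) : Set M :=
  {x | ∃ l : M → ℝ, (∀ v, 0 ≤ l v) ∧ (∑ v ∈ V, l v) = 1 ∧ x = ∑ v ∈ V, l v • v}

lemma mcone_zero_mem (W : Finset M) : (0 : M) ∈ mcone W :=
  ⟨fun _ => 0, fun _ => le_refl 0, by simp⟩

lemma mcone_smul_single_mem {W : Finset M} {w₀ : M} (hw : w₀ ∈ W) {c : ℝ} (hc : 0 ≤ c) :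
    c • w₀ ∈ mcone W := by
  classical
  refine ⟨fun w => if w = w₀ then c else 0, fun w => by dsimp; split <;> simp [hc], ?_⟩
  rw [Finset.sum_eq_single_of_mem w₀ hw]
  · simp
  · intro w _ hne; simp [hne]

lemma mcone_self_mem {W : Finset M} {w₀ : M} (hw : w₀ ∈ W) : w₀ ∈ mcone W := by
  simpa using mcone_smul_single_mem hw (zero_le_one)

lemma mcone_add_mem {W : Finset M} {x y : M} (hx : x ∈ mcone W) (hy : y ∈ mcone W) :
    x + y ∈ mcone W := by
  obtain ⟨μ, hμ, rfl⟩ := hx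
  obtain ⟨ν, hν, rfl⟩ := hy
  exact ⟨μ + ν, fun w => add_nonneg (hμ w) (hν w), by
    rw [← Finset.sum_add_distrib]; exact Finset.sum_congr rfl fun w _ => (add_smul _ _ _).symm⟩

lemma mcone_smul_mem {W : Finset M} {x : M} (hx : x ∈ mcone W) {c : ℝ} (hc : 0 ≤ c) :
    c • x ∈ mcone W := by
  obtain ⟨μ, hμ, rfl⟩ := hx
  refine ⟨fun w => c * μ w, fun w => mul_nonneg hc (hμ w), ?_⟩
  rw [Finset.smul_sum]
  exact Finset.sum_congr rfl fun w _ => (smul_smul _ _ _)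

lemma mcone_sum_mem {ι : Type*} {W : Finset M} (s : Finset ι) (g : ι → M)
    (h : ∀ i ∈ s, g i ∈ mcone W) : (∑ i ∈ s, g i) ∈ mcone W := by
  classical
  induction s using Finset.induction_on with
  | empty => simpa using mcone_zero_mem W
  | insert _ _ hnot ih =>
    rename_i a s
    rw [Finset.sum_insert hnot]
    exact mcone_add_mem (h a (Finset.mem_insert_self a s))
      (ih fun i hi => h i (Finset.mem_insert_of_mem hi))

lemma mcone_mono {W W' : Finset M} (h : W ⊆ W') : mcone W ⊆ mcone W' := by
  rintro x ⟨μ, hμ, rfl⟩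
  exact mcone_sum_mem W _ fun w hw => mcone_smul_single_mem (h hw) (hμ w)

/-- cone is contained in any set closed under the operations containing generators -/
lemma mcone_subset {W : Finset M} {D : Set M} (h0 : (0:M) ∈ D)
    (hadd : ∀ x ∈ D, ∀ y ∈ D, x + y ∈ D)
    (hsmul : ∀ x ∈ D, ∀ c : ℝ, 0 ≤ c → c • x ∈ D)
    (hW : ∀ w ∈ W, w ∈ D) : mcone W ⊆ D := by
  classical
  rintro x ⟨μ, hμ, rfl⟩
  induction W using Finset.induction_on with
  | empty => simpa using h0
  | insert _ _ hnot ih =>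
    rename_i a s
    rw [Finset.sum_insert hnot]
    exact hadd _ (hsmul _ (hW a (Finset.mem_insert_self a s)) _ (hμ a))
      _ (ih fun w hw => hW w (Finset.mem_insert_of_mem hw))

lemma sum_mem_mcone {ι : Type*} [DecidableEq M] (s : Finset ι) (c : ι → ℝ) (g : ι → M)
    (hc : ∀ i ∈ s, 0 ≤ c i) : (∑ i ∈ s, c i • g i) ∈ mcone (s.image g) :=
  mcone_sum_mem _ _ fun i hi =>
    mcone_smul_single_mem (Finset.mem_image_of_mem g hi) (hc i hi)

lemma mconv_mono {V V' : Finset M} (h : V ⊆ V') : mconv V ⊆ mconv V' := by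
  classical
  rintro x ⟨l, hl, hsum, rfl⟩
  refine ⟨fun v => if v ∈ V then l v else 0, fun v => by dsimp; split <;> simp [hl], ?_, ?_⟩
  · rw [← Finset.sum_subset h (fun v _ hv => by simp [if_neg hv])]
    rw [← hsum]; exact Finset.sum_congr rfl fun v hv => by simp [if_pos hv]
  · rw [← Finset.sum_subset h (fun v _ hv => by simp [if_neg hv])]
    exact Finset.sum_congr rfl fun v hv => by simp [if_pos hv]

lemma sum_mem_mconv {ι : Type*} [DecidableEq M] (s : Finset ι) (c : ι → ℝ) (g : ι → M)
    (hc : ∀ i ∈ s, 0 ≤ c i) (hsum : ∑ i ∈ s, c i = 1) :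
    (∑ i ∈ s, c i • g i) ∈ mconv (s.image g) := by
  classical
  refine ⟨fun v => ∑ i ∈ s.filter (fun i => g i = v), c i, fun v => Finset.sum_nonneg
    (fun i hi => hc i (Finset.mem_filter.1 hi).1), ?_, ?_⟩
  · rw [Finset.sum_fiberwise_of_maps_to (fun i hi => Finset.mem_image_of_mem g hi) c, hsum]
  · rw [← Finset.sum_fiberwise_of_maps_to (fun i hi => Finset.mem_image_of_mem g hi)
      (fun i => c i • g i)]
    refine Finset.sum_congr rfl fun v _ => ?_
    rw [Finset.sum_smul]
    exact Finset.sum_congr rfl fun i hi => by rw [(Finset.mem_filter.1 hi).2]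

lemma mconv_self_mem {V : Finset M} {v₀ : M} (hv : v₀ ∈ V) : v₀ ∈ mconv V := by
  classical
  refine mconv_mono (Finset.singleton_subset_iff.2 hv) ?_
  exact ⟨fun v => if v = v₀ then 1 else 0, fun v => by dsimp; split <;> simp, by simp, by simp⟩

end ConeLib

section Master
variable {M : Type} [AddCommGroup M] [Module ℝ M] [DecidableEq M]

lemma master_lemma (φ : M →ₗ[ℝ] ℝ) (W : Finset M)
    (hclosed : ∀ w ∈ W, ∀ u ∈ W, φ w < 0 → 0 < φ u → (φ u) • w + (-(φ w)) • u ∈ W) :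
    ∀ k (μ : M → ℝ), (W.filter (fun w => μ w ≠ 0 ∧ φ w ≠ 0)).card ≤ k →
    (∀ w, 0 ≤ μ w) → 0 ≤ ∑ w ∈ W, μ w * φ w →
    (∑ w ∈ W, μ w • w) ∈ mcone (W.filter (fun w => 0 ≤ φ w)) := by
  intro k
  induction k with
  | zero =>
    intro μ hcard hμ _
    have hempty : W.filter (fun w => μ w ≠ 0 ∧ φ w ≠ 0) = ∅ :=
      Finset.card_eq_zero.1 (Nat.le_zero.1 hcard)
    have hall : ∀ w ∈ W, μ w • w ≠ 0 → 0 ≤ φ w := by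
      intro w hw hne
      by_contra hneg
      have h1 : μ w ≠ 0 := fun h => hne (by simp [h])
      have h2 : φ w ≠ 0 := fun h => hneg (le_of_eq h.symm)
      have : w ∈ W.filter (fun w => μ w ≠ 0 ∧ φ w ≠ 0) := Finset.mem_filter.2 ⟨hw, h1, h2⟩
      simp [hempty] at this
    rw [← Finset.sum_filter_of_ne hall]
    exact ⟨μ, hμ, rfl⟩
  | succ k ih =>
    intro μ hcard hμ htot
    by_cases hneg : ∃ w ∈ W, μ w ≠ 0 ∧ φ w < 0
    · obtain ⟨w₀, hw₀W, hμw₀, hφw₀⟩ := hneg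
      have hμw₀pos : 0 < μ w₀ := lt_of_le_of_ne (hμ w₀) (Ne.symm hμw₀)
      -- find positive item
      have hpos : ∃ u ∈ W, 0 < μ u * φ u := by
        by_contra hno
        push_neg at hno
        have : ∑ w ∈ W, μ w * φ w < 0 := by
          rw [← Finset.sum_erase_add W _ hw₀W]
          have h1 : ∑ w ∈ W.erase w₀, μ w * φ w ≤ 0 :=
            Finset.sum_nonpos fun w hw => hno w (Finset.mem_of_mem_erase hw)
          have h2 : μ w₀ * φ w₀ < 0 := mul_neg_of_pos_of_neg hμw₀pos hφw₀
          linarith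
        linarith
      obtain ⟨u₀, hu₀W, hu₀⟩ := hpos
      have hφu₀ : 0 < φ u₀ := by
        rcases le_or_gt (φ u₀) 0 with h | h
        · exact absurd (mul_nonpos_of_nonneg_of_nonpos (hμ u₀) h) (not_le.2 hu₀)
        · exact h
      have hμu₀pos : 0 < μ u₀ := by
        rcases eq_or_lt_of_le (hμ u₀) with h | h
        · rw [← h] at hu₀; simp at hu₀
        · exact h
      have hwu : w₀ ≠ u₀ := fun h => absurd (h ▸ hφu₀) (not_lt.2 (le_of_lt hφw₀))
      set z := (φ u₀) • w₀ + (-(φ w₀)) • u₀ with hz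
      have hzW : z ∈ W := hclosed w₀ hw₀W u₀ hu₀W hφw₀ hφu₀
      have hφz : φ z = 0 := by
        simp only [hz, map_add, map_smul, smul_eq_mul]; ring
      have hzw₀ : z ≠ w₀ := fun h => (ne_of_lt hφw₀) (h ▸ hφz)
      have hzu₀ : z ≠ u₀ := fun h => (ne_of_gt hφu₀) (h ▸ hφz)
      set k₀ := min (μ w₀ / φ u₀) (μ u₀ / (-(φ w₀))) with hk₀
      have hk₀nn : 0 ≤ k₀ := le_min (div_nonneg (hμ w₀) (le_of_lt hφu₀))
        (div_nonneg (hμ u₀) (by linarith))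
      have hk₀w : k₀ * φ u₀ ≤ μ w₀ := by
        have := min_le_left (μ w₀ / φ u₀) (μ u₀ / (-(φ w₀)))
        calc k₀ * φ u₀ ≤ (μ w₀ / φ u₀) * φ u₀ := by
              exact mul_le_mul_of_nonneg_right this (le_of_lt hφu₀)
          _ = μ w₀ := div_mul_cancel₀ _ (ne_of_gt hφu₀)
      have hk₀u : k₀ * (-(φ w₀)) ≤ μ u₀ := by
        have := min_le_right (μ w₀ / φ u₀) (μ u₀ / (-(φ w₀)))
        calc k₀ * (-(φ w₀)) ≤ (μ u₀ / (-(φ w₀))) * (-(φ w₀)) := by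
              exact mul_le_mul_of_nonneg_right this (by linarith)
          _ = μ u₀ := div_mul_cancel₀ _ (by linarith)
      set μ' : M → ℝ := fun w =>
        if w = w₀ then μ w₀ - k₀ * φ u₀
        else if w = u₀ then μ u₀ - k₀ * (-(φ w₀))
        else if w = z then μ z + k₀ else μ w with hμ'
      have hμ'w₀ : μ' w₀ = μ w₀ - k₀ * φ u₀ := by simp [hμ']
      have hμ'u₀ : μ' u₀ = μ u₀ - k₀ * (-(φ w₀)) := by simp [hμ', Ne.symm hwu]
      have hμ'z : μ' z = μ z + k₀ := by simp [hμ', hzw₀, hzu₀]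
      have hμ'other : ∀ w, w ≠ w₀ → w ≠ u₀ → w ≠ z → μ' w = μ w := by
        intro w h1 h2 h3; simp [hμ', h1, h2, h3]
      have hμ'nn : ∀ w, 0 ≤ μ' w := by
        intro w
        rcases eq_or_ne w w₀ with rfl | h1
        · rw [hμ'w₀]; linarith
        rcases eq_or_ne w u₀ with rfl | h2
        · rw [hμ'u₀]; linarith
        rcases eq_or_ne w z with rfl | h3
        · rw [hμ'z]; have := hμ z; linarith
        · rw [hμ'other w h1 h2 h3]; exact hμ w
      -- difference supported on {w₀, u₀, z}
      have hsub : ({w₀, u₀, z} : Finset M) ⊆ W := by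
        intro x hx
        simp only [Finset.mem_insert, Finset.mem_singleton] at hx
        rcases hx with rfl | rfl | rfl <;> assumption
      have tri : ∀ {N : Type} [inst : AddCommGroup N] (F : M → N),
          (∀ x, x ≠ w₀ → x ≠ u₀ → x ≠ z → F x = 0) →
          ∑ w ∈ W, F w = F w₀ + F u₀ + F z := by
        intro N inst F hvan
        rw [← Finset.sum_subset hsub]
        · rw [Finset.sum_insert (by simp [hwu, Ne.symm hzw₀]),
            Finset.sum_insert (by simp [Ne.symm hzu₀]), Finset.sum_singleton, add_assoc]
        · intro x _ hxn
          simp only [Finset.mem_insert, Finset.mem_singleton] at hxn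
          push_neg at hxn
          exact hvan x hxn.1 hxn.2.1 hxn.2.2
      have hsum_eq : ∑ w ∈ W, μ' w • w = ∑ w ∈ W, μ w • w := by
        have h1 : ∑ w ∈ W, μ' w • w - ∑ w ∈ W, μ w • w = ∑ w ∈ W, (μ' w - μ w) • w := by
          rw [← Finset.sum_sub_distrib]
          exact Finset.sum_congr rfl fun w _ => (sub_smul _ _ _).symm
        have h2 := tri (fun w => (μ' w - μ w) • w)
          (fun x h1' h2' h3' => by
            show (μ' x - μ x) • x = 0
            rw [hμ'other x h1' h2' h3']; simp)
        simp only [hμ'w₀, hμ'u₀, hμ'z] at h2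
        have h3 : (μ w₀ - k₀ * φ u₀ - μ w₀) • w₀ + (μ u₀ - k₀ * -φ w₀ - μ u₀) • u₀
            + (μ z + k₀ - μ z) • z = 0 := by
          rw [hz]; module
        rw [h2, h3] at h1
        exact sub_eq_zero.1 h1
      have hφsum_eq : ∑ w ∈ W, μ' w * φ w = ∑ w ∈ W, μ w * φ w := by
        have h1 : ∑ w ∈ W, μ' w * φ w - ∑ w ∈ W, μ w * φ w
            = ∑ w ∈ W, (μ' w - μ w) * φ w := by
          rw [← Finset.sum_sub_distrib]
          exact Finset.sum_congr rfl fun w _ => (sub_mul _ _ _).symm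
        have h2 := tri (fun w => (μ' w - μ w) * φ w)
          (fun x h1' h2' h3' => by
            show (μ' x - μ x) * φ x = 0
            rw [hμ'other x h1' h2' h3']; simp)
        simp only [hμ'w₀, hμ'u₀, hμ'z, hφz] at h2
        rw [h2] at h1
        have h1' : ∑ w ∈ W, μ' w * φ w - ∑ w ∈ W, μ w * φ w = 0 := by rw [h1]; ring
        linarith
      -- one of the two weights vanishes
      have hvanish : μ' w₀ = 0 ∨ μ' u₀ = 0 := by
        rcases min_cases (μ w₀ / φ u₀) (μ u₀ / (-(φ w₀))) with ⟨hk, _⟩ | ⟨hk, _⟩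
        · left
          rw [hμ'w₀, hk₀, hk, div_mul_cancel₀ _ (ne_of_gt hφu₀)]; ring
        · right
          rw [hμ'u₀, hk₀, hk, div_mul_cancel₀ _ (by linarith : -(φ w₀) ≠ 0)]; ring
      obtain ⟨x₁, hx₁mem, hx₁zero⟩ : ∃ x₁, x₁ ∈ ({w₀, u₀} : Finset M) ∧ μ' x₁ = 0 := by
        rcases hvanish with h | h
        · exact ⟨w₀, by simp, h⟩
        · exact ⟨u₀, by simp, h⟩
      have hx₁W : x₁ ∈ W := hsub (by
        simp only [Finset.mem_insert, Finset.mem_singleton] at hx₁mem ⊢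
        tauto)
      have hx₁F : x₁ ∈ W.filter (fun w => μ w ≠ 0 ∧ φ w ≠ 0) := by
        refine Finset.mem_filter.2 ⟨hx₁W, ?_⟩
        simp only [Finset.mem_insert, Finset.mem_singleton] at hx₁mem
        rcases hx₁mem with rfl | rfl
        · exact ⟨hμw₀, ne_of_lt hφw₀⟩
        · exact ⟨ne_of_gt hμu₀pos, ne_of_gt hφu₀⟩
      have hcard' : (W.filter (fun w => μ' w ≠ 0 ∧ φ w ≠ 0)).card ≤ k := by
        have hss : W.filter (fun w => μ' w ≠ 0 ∧ φ w ≠ 0)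
            ⊆ (W.filter (fun w => μ w ≠ 0 ∧ φ w ≠ 0)).erase x₁ := by
          intro w hw
          obtain ⟨hwW, hw1, hw2⟩ := Finset.mem_filter.1 hw
          refine Finset.mem_erase.2 ⟨fun h => hw1 (h ▸ hx₁zero), Finset.mem_filter.2 ⟨hwW, ?_, hw2⟩⟩
          rcases eq_or_ne w w₀ with rfl | h1
          · exact hμw₀
          rcases eq_or_ne w u₀ with rfl | h2
          · exact ne_of_gt hμu₀pos
          rcases eq_or_ne w z with rfl | h3
          · exact absurd hφz hw2
          · rw [← hμ'other w h1 h2 h3]; exact hw1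
        calc (W.filter (fun w => μ' w ≠ 0 ∧ φ w ≠ 0)).card
            ≤ ((W.filter (fun w => μ w ≠ 0 ∧ φ w ≠ 0)).erase x₁).card := Finset.card_le_card hss
          _ = (W.filter (fun w => μ w ≠ 0 ∧ φ w ≠ 0)).card - 1 := Finset.card_erase_of_mem hx₁F
          _ ≤ k := by omega
      have := ih μ' hcard' hμ'nn (by rw [hφsum_eq]; exact htot)
      rw [hsum_eq] at this
      exact this
    · push_neg at hneg
      have hall : ∀ w ∈ W, μ w • w ≠ 0 → 0 ≤ φ w := by
        intro w hw hne
        have h1 : μ w ≠ 0 := fun h => hne (by simp [h])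
        exact not_lt.1 (fun h => absurd (hneg w hw h1) (not_le.2 h))
      rw [← Finset.sum_filter_of_ne hall]
      exact ⟨μ, hμ, rfl⟩

end Master

section MW
variable {M : Type} [AddCommGroup M] [Module ℝ M] [DecidableEq M]

lemma phi_mcone_nonneg {φ : M →ₗ[ℝ] ℝ} {G : Finset M} (hG : ∀ w ∈ G, 0 ≤ φ w)
    {x : M} (hx : x ∈ mcone G) : 0 ≤ φ x := by
  obtain ⟨μ, hμ, rfl⟩ := hx
  rw [map_sum]
  exact Finset.sum_nonneg fun w hw => by
    rw [map_smul, smul_eq_mul]; exact mul_nonneg (hμ w) (hG w hw)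

lemma mw_cone (G0 : Finset M) (hG0 : ∀ x : M, x ∈ mcone G0)
    (L : List (M →ₗ[ℝ] ℝ)) :
    ∃ G : Finset M, {x : M | ∀ φ ∈ L, 0 ≤ φ x} = mcone G := by
  induction L with
  | nil =>
    exact ⟨G0, Set.eq_of_subset_of_subset (fun x _ => hG0 x) (fun x _ => by simp)⟩
  | cons φ L ih =>
    obtain ⟨G, hG⟩ := ih
    set mix : Finset M :=
      ((G ×ˢ G).filter (fun p => φ p.1 < 0 ∧ 0 < φ p.2)).image
        (fun p => (φ p.2) • p.1 + (-(φ p.1)) • p.2) with hmix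
    set Wh : Finset M := G ∪ mix with hWh
    have hmix_phi : ∀ w ∈ mix, φ w = 0 := by
      intro w hw
      obtain ⟨p, hp, rfl⟩ := Finset.mem_image.1 hw
      simp only [map_add, map_smul, smul_eq_mul]; ring
    have hmix_cone : ∀ w ∈ mix, w ∈ mcone G := by
      intro w hw
      obtain ⟨p, hp, rfl⟩ := Finset.mem_image.1 hw
      obtain ⟨hpmem, hp1, hp2⟩ := Finset.mem_filter.1 hp
      obtain ⟨h1, h2⟩ := Finset.mem_product.1 hpmem
      exact mcone_add_mem (mcone_smul_single_mem h1 (le_of_lt hp2))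
        (mcone_smul_single_mem h2 (by linarith))
    have hWh_cone : mcone Wh ⊆ mcone G := by
      refine mcone_subset (mcone_zero_mem G) (fun x hx y hy => mcone_add_mem hx hy)
        (fun x hx c hc => mcone_smul_mem hx hc) ?_
      intro w hw
      rcases Finset.mem_union.1 hw with h | h
      · exact mcone_self_mem h
      · exact hmix_cone w h
    have hclosed : ∀ w ∈ Wh, ∀ u ∈ Wh, φ w < 0 → 0 < φ u →
        (φ u) • w + (-(φ w)) • u ∈ Wh := by
      intro w hw u hu hφw hφu
      have hwG : w ∈ G := by
        rcases Finset.mem_union.1 hw with h | h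
        · exact h
        · exact absurd (hmix_phi w h) (ne_of_lt hφw)
      have huG : u ∈ G := by
        rcases Finset.mem_union.1 hu with h | h
        · exact h
        · exact absurd (hmix_phi u h) (ne_of_gt hφu)
      refine Finset.mem_union.2 (Or.inr (Finset.mem_image.2 ⟨(w, u), ?_, rfl⟩))
      exact Finset.mem_filter.2 ⟨Finset.mem_product.2 ⟨hwG, huG⟩, hφw, hφu⟩
    refine ⟨Wh.filter (fun w => 0 ≤ φ w), Set.eq_of_subset_of_subset ?_ ?_⟩
    · rintro x hx
      have hx1 : 0 ≤ φ x := hx φ (List.mem_cons_self)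
      have hx2 : x ∈ mcone G := by
        rw [← hG]; exact fun ψ hψ => hx ψ (List.mem_cons_of_mem _ hψ)
      obtain ⟨μ, hμ, rfl⟩ := hx2
      set μh : M → ℝ := fun w => if w ∈ G then μ w else 0 with hμh
      have hsame : ∑ w ∈ Wh, μh w • w = ∑ w ∈ G, μ w • w := by
        rw [← Finset.sum_subset (Finset.subset_union_left) (fun w _ hw => by
          simp [hμh, if_neg hw])]
        exact Finset.sum_congr rfl fun w hw => by simp [hμh, if_pos hw]
      have hφsame : ∑ w ∈ Wh, μh w * φ w = ∑ w ∈ G, μ w * φ w := by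
        rw [← Finset.sum_subset (Finset.subset_union_left) (fun w _ hw => by
          simp [hμh, if_neg hw])]
        exact Finset.sum_congr rfl fun w hw => by simp [hμh, if_pos hw]
      have hφx : φ (∑ w ∈ G, μ w • w) = ∑ w ∈ G, μ w * φ w := by
        rw [map_sum]; exact Finset.sum_congr rfl fun w _ => by rw [map_smul, smul_eq_mul]
      have := master_lemma φ Wh hclosed
        (Wh.filter (fun w => μh w ≠ 0 ∧ φ w ≠ 0)).card μh (le_refl _)
        (fun w => by dsimp [μh]; split; exacts [hμ w, le_refl 0])
        (by rw [hφsame, ← hφx]; exact hx1)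
      rw [hsame] at this
      exact this
    · intro x hx
      have hxG : x ∈ mcone G :=
        hWh_cone (mcone_mono (Finset.filter_subset _ _) hx)
      intro ψ hψ
      rcases List.mem_cons.1 hψ with rfl | hψ'
      · exact phi_mcone_nonneg (fun w hw => (Finset.mem_filter.1 hw).2) hx
      · rw [← hG] at hxG; exact hxG ψ hψ'

end MW

section Poly
variable {n : ℕ}

/-- every element of the product space is a nonnegative combination of ± basis vectors -/
lemma univ_gen (n : ℕ) : ∃ G0 : Finset ((Fin n → ℝ) × ℝ),
    ∀ x : (Fin n → ℝ) × ℝ, x ∈ mcone G0 := by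
  classical
  refine ⟨((Finset.univ.image fun i : Fin n => ((Pi.single i 1 : Fin n → ℝ), (0:ℝ))) ∪
      (Finset.univ.image fun i : Fin n => (-(Pi.single i 1 : Fin n → ℝ), (0:ℝ)))) ∪
      {((0 : Fin n → ℝ), (1:ℝ)), ((0 : Fin n → ℝ), (-1:ℝ))}, ?_⟩
  intro x
  set G0 := ((Finset.univ.image fun i : Fin n => ((Pi.single i 1 : Fin n → ℝ), (0:ℝ))) ∪
      (Finset.univ.image fun i : Fin n => (-(Pi.single i 1 : Fin n → ℝ), (0:ℝ)))) ∪
      {((0 : Fin n → ℝ), (1:ℝ)), ((0 : Fin n → ℝ), (-1:ℝ))} with hG0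
  have hx : x = (∑ i : Fin n, (x.1 i) • ((Pi.single i 1 : Fin n → ℝ), (0:ℝ)))
      + x.2 • ((0 : Fin n → ℝ), (1:ℝ)) := by
    refine Prod.ext ?_ ?_
    · rw [Prod.fst_add, Prod.fst_sum]
      simp only [Prod.smul_fst, Prod.smul_snd]
      have : ∀ i : Fin n, (x.1 i) • (Pi.single i 1 : Fin n → ℝ) = Pi.single i (x.1 i) := by
        intro i; ext j; simp [Pi.single_apply, mul_ite]
      rw [Finset.sum_congr rfl fun i _ => this i, Finset.univ_sum_single]
      simp
    · rw [Prod.snd_add, Prod.snd_sum]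
      simp
  rw [hx]
  refine mcone_add_mem (mcone_sum_mem _ _ fun i _ => ?_) ?_
  · rcases le_or_gt 0 (x.1 i) with h | h
    · refine mcone_smul_single_mem ?_ h
      exact Finset.mem_union.2 (Or.inl (Finset.mem_union.2 (Or.inl
        (Finset.mem_image.2 ⟨i, Finset.mem_univ i, rfl⟩))))
    · have heq : (x.1 i) • ((Pi.single i 1 : Fin n → ℝ), (0:ℝ))
          = (-(x.1 i)) • ((-(Pi.single i 1 : Fin n → ℝ)), (0:ℝ)) := by
        refine Prod.ext ?_ ?_ <;> simp
      rw [heq]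
      refine mcone_smul_single_mem ?_ (by linarith)
      exact Finset.mem_union.2 (Or.inl (Finset.mem_union.2 (Or.inr
        (Finset.mem_image.2 ⟨i, Finset.mem_univ i, rfl⟩))))
  · rcases le_or_gt 0 x.2 with h | h
    · refine mcone_smul_single_mem ?_ h
      exact Finset.mem_union.2 (Or.inr (by simp))
    · have heq : x.2 • ((0 : Fin n → ℝ), (1:ℝ)) = (-x.2) • ((0 : Fin n → ℝ), (-1:ℝ)) := by
        refine Prod.ext ?_ ?_ <;> simp
      rw [heq]
      refine mcone_smul_single_mem ?_ (by linarith)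
      exact Finset.mem_union.2 (Or.inr (by simp))

/-- Minkowski–Weyl, hard direction: every H-polyhedron is finitely generated. -/
lemma poly_decomp {m : ℕ} (A : Matrix (Fin m) (Fin n) ℝ) (b : Fin m → ℝ) :
    ∃ V W : Finset (Fin n → ℝ),
      {x : Fin n → ℝ | b ≤ A.mulVec x} = mconv V + mcone W := by
  classical
  obtain ⟨G0, hG0⟩ := univ_gen n
  -- linear functionals
  set φ : Fin m → ((Fin n → ℝ) × ℝ →ₗ[ℝ] ℝ) := fun i =>
    { toFun := fun p => A.mulVec p.1 i - p.2 * b i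
      map_add' := by
        intro p q
        simp [Matrix.mulVec_add, Pi.add_apply]
        ring
      map_smul' := by
        intro c p
        simp [Matrix.mulVec_smul, Pi.smul_apply, smul_eq_mul]
        ring } with hφ
  set φt : ((Fin n → ℝ) × ℝ) →ₗ[ℝ] ℝ := LinearMap.snd ℝ _ _ with hφt
  obtain ⟨G, hG⟩ := mw_cone G0 hG0 ((List.ofFn φ) ++ [φt])
  have hKmem : ∀ p : (Fin n → ℝ) × ℝ, p ∈ mcone G ↔
      ((∀ i, 0 ≤ A.mulVec p.1 i - p.2 * b i) ∧ 0 ≤ p.2) := by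
    intro p
    rw [← hG]
    constructor
    · intro hp
      constructor
      · intro i
        have := hp (φ i) (by
          refine List.mem_append.2 (Or.inl ?_)
          exact List.mem_ofFn.2 ⟨i, rfl⟩)
        simpa [hφ] using this
      · have := hp φt (by simp)
        simpa [hφt] using this
    · rintro ⟨h1, h2⟩ ψ hψ
      rcases List.mem_append.1 hψ with h | h
      · obtain ⟨i, rfl⟩ := List.mem_ofFn.1 h
        simpa [hφ] using h1 i
      · have : ψ = φt := by simpa using h
        rw [this]; exact h2
  -- generators are in K
  have hgenK : ∀ g ∈ G, (∀ i, 0 ≤ A.mulVec g.1 i - g.2 * b i) ∧ 0 ≤ g.2 :=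
    fun g hg => (hKmem g).1 (mcone_self_mem hg)
  set Vg : Finset ((Fin n → ℝ) × ℝ) := G.filter (fun g => 0 < g.2) with hVg
  set V : Finset (Fin n → ℝ) := Vg.image (fun g => g.2⁻¹ • g.1) with hV
  set W : Finset (Fin n → ℝ) := (G.filter (fun g => ¬ 0 < g.2)).image Prod.fst with hW
  refine ⟨V, W, Set.eq_of_subset_of_subset ?_ ?_⟩
  · -- Q ⊆ mconv V + mcone W
    intro x hx
    have hxK : ((x, (1:ℝ)) : (Fin n → ℝ) × ℝ) ∈ mcone G := by
      rw [hKmem]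
      refine ⟨fun i => by simpa using sub_nonneg.2 (hx i), by norm_num⟩
    obtain ⟨μ, hμ, hsum⟩ := hxK
    have hfst : x = ∑ g ∈ G, μ g • g.1 := by
      have := congrArg Prod.fst hsum
      rw [Prod.fst_sum] at this
      simpa using this
    have hsnd : (1:ℝ) = ∑ g ∈ G, μ g * g.2 := by
      have := congrArg Prod.snd hsum
      rw [Prod.snd_sum] at this
      simpa using this
    have hsplit : ∑ g ∈ G, μ g • g.1 =
        ∑ g ∈ Vg, μ g • g.1 + ∑ g ∈ G.filter (fun g => ¬ 0 < g.2), μ g • g.1 := by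
      rw [hVg, Finset.sum_filter_add_sum_filter_not]
    have hzero : ∀ g ∈ G.filter (fun g => ¬ 0 < g.2), g.2 = 0 := by
      intro g hg
      obtain ⟨hgG, hgn⟩ := Finset.mem_filter.1 hg
      exact le_antisymm (not_lt.1 hgn) (hgenK g hgG).2
    have hsnd' : ∑ g ∈ Vg, μ g * g.2 = 1 := by
      rw [hsnd]
      rw [← Finset.sum_filter_add_sum_filter_not G (fun g => 0 < g.2) (fun g => μ g * g.2)]
      have : ∑ g ∈ G.filter (fun g => ¬ 0 < g.2), μ g * g.2 = 0 :=
        Finset.sum_eq_zero fun g hg => by rw [hzero g hg, mul_zero]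
      rw [hVg, this, add_zero]
    have hconv : ∑ g ∈ Vg, μ g • g.1 ∈ mconv V := by
      have hre : ∑ g ∈ Vg, μ g • g.1 = ∑ g ∈ Vg, (μ g * g.2) • (g.2⁻¹ • g.1) := by
        refine Finset.sum_congr rfl fun g hg => ?_
        have hpos : 0 < g.2 := (Finset.mem_filter.1 hg).2
        rw [smul_smul, mul_assoc, mul_inv_cancel₀ (ne_of_gt hpos), mul_one]
      rw [hre, hV]
      exact sum_mem_mconv Vg (fun g => μ g * g.2) (fun g => g.2⁻¹ • g.1)
        (fun g hg => mul_nonneg (hμ g) (le_of_lt (Finset.mem_filter.1 hg).2)) hsnd'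
    have hcone : ∑ g ∈ G.filter (fun g => ¬ 0 < g.2), μ g • g.1 ∈ mcone W := by
      rw [hW]
      exact sum_mem_mcone _ μ Prod.fst (fun g _ => hμ g)
    rw [hfst, hsplit]
    exact Set.add_mem_add hconv hcone
  · -- mconv V + mcone W ⊆ Q
    rintro y hy
    obtain ⟨v, hv, w, hw, rfl⟩ := Set.mem_add.1 hy
    have hvK : ∀ v' ∈ V, ((v', (1:ℝ)) : (Fin n → ℝ) × ℝ) ∈ mcone G := by
      intro v' hv'
      obtain ⟨g, hg, rfl⟩ := Finset.mem_image.1 hv'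
      obtain ⟨hgG, hgpos⟩ := Finset.mem_filter.1 hg
      have : ((g.2⁻¹ • g.1, (1:ℝ)) : (Fin n → ℝ) × ℝ) = g.2⁻¹ • g := by
        refine Prod.ext (by simp) ?_
        simp [inv_mul_cancel₀ (ne_of_gt hgpos)]
      rw [this]
      exact mcone_smul_mem (mcone_self_mem hgG) (inv_nonneg.2 (le_of_lt hgpos))
    have hwK : ∀ w' ∈ W, ((w', (0:ℝ)) : (Fin n → ℝ) × ℝ) ∈ mcone G := by
      intro w' hw'
      obtain ⟨g, hg, rfl⟩ := Finset.mem_image.1 hw'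
      obtain ⟨hgG, hgn⟩ := Finset.mem_filter.1 hg
      have hg2 : g.2 = 0 := le_antisymm (not_lt.1 hgn) (hgenK g hgG).2
      have : ((g.1, (0:ℝ)) : (Fin n → ℝ) × ℝ) = g := Prod.ext rfl hg2.symm
      rw [this]
      exact mcone_self_mem hgG
    obtain ⟨l, hl, hlsum, rfl⟩ := hv
    obtain ⟨μ, hμ, rfl⟩ := hw
    have hyK : ((∑ v' ∈ V, l v' • v' + ∑ w' ∈ W, μ w' • w', (1:ℝ)) :
        (Fin n → ℝ) × ℝ) ∈ mcone G := by
      have hrep : ((∑ v' ∈ V, l v' • v' + ∑ w' ∈ W, μ w' • w', (1:ℝ)) :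
          (Fin n → ℝ) × ℝ) = (∑ v' ∈ V, l v' • ((v', (1:ℝ)) : (Fin n → ℝ) × ℝ))
          + ∑ w' ∈ W, μ w' • ((w', (0:ℝ)) : (Fin n → ℝ) × ℝ) := by
        refine Prod.ext ?_ ?_
        · rw [Prod.fst_add, Prod.fst_sum, Prod.fst_sum]
          simp
        · rw [Prod.snd_add, Prod.snd_sum, Prod.snd_sum]
          simp only [Prod.smul_snd, smul_eq_mul, mul_one, mul_zero,
            Finset.sum_const_zero, add_zero]
          exact hlsum.symm
      rw [hrep]
      exact mcone_add_mem
        (mcone_sum_mem _ _ fun v' hv' => mcone_smul_mem (hvK v' hv') (hl v'))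
        (mcone_sum_mem _ _ fun w' hw' => mcone_smul_mem (hwK w' hw') (hμ w'))
    have := ((hKmem _).1 hyK).1
    intro i
    have hi := this i
    simp only [one_mul] at hi
    linarith

end Poly

section Extreme
variable {M : Type*} [AddCommGroup M] [Module ℝ M] [DecidableEq M]
variable {D : Set M}

/-- removing a redundant generator -/
lemma mconv_erase_eq (hD0 : (0:M) ∈ D) (hDadd : ∀ x ∈ D, ∀ y ∈ D, x + y ∈ D)
    (hDsmul : ∀ x ∈ D, ∀ c : ℝ, 0 ≤ c → c • x ∈ D)
    {V : Finset M} {v : M} (hv : v ∈ V) (hred : v ∈ mconv (V.erase v) + D) :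
    mconv V + D = mconv (V.erase v) + D := by
  classical
  refine Set.eq_of_subset_of_subset ?_
    (Set.add_subset_add_right (mconv_mono (Finset.erase_subset v V)))
  rintro x hx
  obtain ⟨p, hp, c, hc, rfl⟩ := Set.mem_add.1 hx
  obtain ⟨l, hl, hlsum, rfl⟩ := hp
  obtain ⟨z, hz, c', hc', hvz⟩ := Set.mem_add.1 hred
  obtain ⟨κ, hκ, hκsum, rfl⟩ := hz
  have hsplit : ∑ u ∈ V, l u • u
      = ∑ u ∈ V.erase v, l u • u + l v • v := (Finset.sum_erase_add V _ hv).symm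
  have hlv : l v • v = ∑ u ∈ V.erase v, (l v * κ u) • u + l v • c' := by
    have h0 : l v • v = l v • (∑ u ∈ V.erase v, κ u • u + c') := by rw [hvz]
    rw [h0, smul_add, Finset.smul_sum]
    congr 1
    exact Finset.sum_congr rfl fun u _ => smul_smul _ _ _
  refine Set.mem_add.2 ⟨∑ u ∈ V.erase v, (l u + l v * κ u) • u, ?_, l v • c' + c, ?_, ?_⟩
  · refine ⟨fun u => l u + l v * κ u,
      fun u => add_nonneg (hl u) (mul_nonneg (hl v) (hκ u)), ?_, rfl⟩
    have h1 : ∑ u ∈ V.erase v, l u = 1 - l v := by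
      have := Finset.sum_erase_add V l hv
      linarith
    rw [Finset.sum_add_distrib, h1, ← Finset.mul_sum, hκsum]
    ring
  · exact hDadd _ (hDsmul _ hc' _ (hl v)) _ hc
  · have hdist : ∑ u ∈ V.erase v, (l u + l v * κ u) • u
        = ∑ u ∈ V.erase v, (l u • u + (l v * κ u) • u) :=
      Finset.sum_congr rfl fun u _ => add_smul _ _ _
    rw [hsplit, hlv, hdist, Finset.sum_add_distrib]
    abel

lemma exists_minimal_gen (hD0 : (0:M) ∈ D) (hDadd : ∀ x ∈ D, ∀ y ∈ D, x + y ∈ D)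
    (hDsmul : ∀ x ∈ D, ∀ c : ℝ, 0 ≤ c → c • x ∈ D) :
    ∀ (k : ℕ) (V : Finset M), V.card ≤ k →
    ∃ V₁, V₁ ⊆ V ∧ (mconv V + D = mconv V₁ + D) ∧
      ∀ v ∈ V₁, v ∉ mconv (V₁.erase v) + D := by
  classical
  intro k
  induction k with
  | zero =>
    intro V hV
    have : V = ∅ := Finset.card_eq_zero.1 (Nat.le_zero.1 hV)
    exact ⟨V, Finset.Subset.refl V, rfl, by simp [this]⟩
  | succ k ih =>
    intro V hV
    by_cases hred : ∃ v ∈ V, v ∈ mconv (V.erase v) + D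
    · obtain ⟨v, hv, hvred⟩ := hred
      have hcard : (V.erase v).card ≤ k := by
        have := Finset.card_erase_of_mem hv
        omega
      obtain ⟨V₁, hsub, heq, hmin⟩ := ih (V.erase v) hcard
      exact ⟨V₁, hsub.trans (Finset.erase_subset v V),
        (mconv_erase_eq hD0 hDadd hDsmul hv hvred).trans heq, hmin⟩
    · push_neg at hred
      exact ⟨V, Finset.Subset.refl V, rfl, hred⟩

/-- minimal generators are extreme points, provided `D` is pointed -/
lemma minimal_mem_extreme (hD0 : (0:M) ∈ D) (hDadd : ∀ x ∈ D, ∀ y ∈ D, x + y ∈ D)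
    (hDsmul : ∀ x ∈ D, ∀ c : ℝ, 0 ≤ c → c • x ∈ D)
    (hDpointed : D ∩ (-D) = {0})
    {V₁ : Finset M} (hmin : ∀ v ∈ V₁, v ∉ mconv (V₁.erase v) + D)
    {v : M} (hv : v ∈ V₁) :
    v ∈ Set.extremePoints ℝ (mconv V₁ + D) := by
  classical
  refine mem_extremePoints.2 ⟨Set.mem_add.2 ⟨v, mconv_self_mem hv, 0, hD0, add_zero v⟩, ?_⟩
  rintro y hy z hz ⟨t, s, ht, hs, hts, hv'⟩
  obtain ⟨py, hpy, cy, hcy, rfl⟩ := Set.mem_add.1 hy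
  obtain ⟨α, hα, hαsum, rfl⟩ := hpy
  obtain ⟨pz, hpz, cz, hcz, rfl⟩ := Set.mem_add.1 hz
  obtain ⟨β, hβ, hβsum, rfl⟩ := hpz
  set γ : M → ℝ := fun u => t * α u + s * β u with hγ
  have hγnn : ∀ u, 0 ≤ γ u := fun u =>
    add_nonneg (mul_nonneg (le_of_lt ht) (hα u)) (mul_nonneg (le_of_lt hs) (hβ u))
  have hγsum : ∑ u ∈ V₁, γ u = 1 := by
    simp only [hγ, Finset.sum_add_distrib, ← Finset.mul_sum, hαsum, hβsum]
    linarith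
  have hvrep : v = ∑ u ∈ V₁, γ u • u + (t • cy + s • cz) := by
    rw [← hv']
    have hterm : ∀ u ∈ V₁, γ u • u = t • (α u • u) + s • (β u • u) := by
      intro u _
      simp only [hγ, smul_smul, add_smul]
    rw [Finset.sum_congr rfl hterm, Finset.sum_add_distrib,
      smul_add, smul_add, Finset.smul_sum, Finset.smul_sum]
    abel
  have hγv1 : γ v ≤ 1 := by
    have := Finset.sum_erase_add V₁ γ hv
    have h1 : 0 ≤ ∑ u ∈ V₁.erase v, γ u := Finset.sum_nonneg fun u _ => hγnn u
    linarith [hγsum]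
  rcases lt_or_eq_of_le hγv1 with hlt | heq1
  · -- contradiction with minimality
    exfalso
    have hpos : 0 < 1 - γ v := by linarith
    have hrep2 : (1 - γ v) • v = ∑ u ∈ V₁.erase v, γ u • u + (t • cy + s • cz) := by
      have := hvrep
      rw [← Finset.sum_erase_add V₁ _ hv] at this
      have h2 : v - γ v • v = ∑ u ∈ V₁.erase v, γ u • u + (t • cy + s • cz) := by
        nth_rewrite 1 [this]
        abel
      rw [← h2, sub_smul, one_smul]
    have : v ∈ mconv (V₁.erase v) + D := by
      refine Set.mem_add.2 ⟨∑ u ∈ V₁.erase v, ((1 - γ v)⁻¹ * γ u) • u, ?_,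
        (1 - γ v)⁻¹ • (t • cy + s • cz), ?_, ?_⟩
      · refine ⟨fun u => (1 - γ v)⁻¹ * γ u,
          fun u => mul_nonneg (inv_nonneg.2 (le_of_lt hpos)) (hγnn u), ?_, rfl⟩
        rw [← Finset.mul_sum]
        have : ∑ u ∈ V₁.erase v, γ u = 1 - γ v := by
          have := Finset.sum_erase_add V₁ γ hv
          linarith [hγsum]
        rw [this, inv_mul_cancel₀ (ne_of_gt hpos)]
      · exact hDsmul _ (hDadd _ (hDsmul _ hcy _ (le_of_lt ht))
          _ (hDsmul _ hcz _ (le_of_lt hs))) _ (inv_nonneg.2 (le_of_lt hpos))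
      · have h3 : ∑ u ∈ V₁.erase v, ((1 - γ v)⁻¹ * γ u) • u
            = (1 - γ v)⁻¹ • ∑ u ∈ V₁.erase v, γ u • u := by
          rw [Finset.smul_sum]
          exact Finset.sum_congr rfl fun u _ => (smul_smul _ _ _).symm
        rw [h3, ← smul_add, ← hrep2, smul_smul,
          inv_mul_cancel₀ (ne_of_gt hpos), one_smul]
    exact hmin v hv this
  · -- γ v = 1 : all other coefficients vanish
    have herase0 : ∀ u ∈ V₁.erase v, γ u = 0 := by
      have hsum0 : ∑ u ∈ V₁.erase v, γ u = 0 := by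
        have := Finset.sum_erase_add V₁ γ hv
        rw [hγsum] at this
        linarith [heq1]
      intro u hu
      exact le_antisymm (by
        by_contra hgt
        push_neg at hgt
        have : 0 < ∑ u ∈ V₁.erase v, γ u :=
          Finset.sum_pos' (fun u _ => hγnn u) ⟨u, hu, hgt⟩
        linarith) (hγnn u)
    have hαv : α v = 1 ∧ β v = 1 := by
      have hαle : α v ≤ 1 := by
        have := Finset.sum_erase_add V₁ α hv
        have h1 : 0 ≤ ∑ u ∈ V₁.erase v, α u := Finset.sum_nonneg fun u _ => hα u
        linarith [hαsum]
      have hβle : β v ≤ 1 := by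
        have := Finset.sum_erase_add V₁ β hv
        have h1 : 0 ≤ ∑ u ∈ V₁.erase v, β u := Finset.sum_nonneg fun u _ => hβ u
        linarith [hβsum]
      have hγveq : t * α v + s * β v = 1 := heq1.symm ▸ rfl
      constructor
      · by_contra hne
        have : α v < 1 := lt_of_le_of_ne hαle hne
        nlinarith [mul_le_mul_of_nonneg_left hβle (le_of_lt hs)]
      · by_contra hne
        have : β v < 1 := lt_of_le_of_ne hβle hne
        nlinarith [mul_le_mul_of_nonneg_left hαle (le_of_lt ht)]
    have hαother : ∀ u ∈ V₁.erase v, α u = 0 := by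
      intro u hu
      have hsum0 : ∑ u ∈ V₁.erase v, α u = 0 := by
        have := Finset.sum_erase_add V₁ α hv
        rw [hαsum, hαv.1] at this
        linarith
      by_contra hne
      have : 0 < ∑ u ∈ V₁.erase v, α u :=
        Finset.sum_pos' (fun u _ => hα u) ⟨u, hu, lt_of_le_of_ne (hα u) (Ne.symm hne)⟩
      linarith
    have hβother : ∀ u ∈ V₁.erase v, β u = 0 := by
      intro u hu
      have hsum0 : ∑ u ∈ V₁.erase v, β u = 0 := by
        have := Finset.sum_erase_add V₁ β hv
        rw [hβsum, hαv.2] at this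
        linarith
      by_contra hne
      have : 0 < ∑ u ∈ V₁.erase v, β u :=
        Finset.sum_pos' (fun u _ => hβ u) ⟨u, hu, lt_of_le_of_ne (hβ u) (Ne.symm hne)⟩
      linarith
    have hyv : ∑ u ∈ V₁, α u • u = v := by
      rw [← Finset.sum_erase_add V₁ _ hv, Finset.sum_eq_zero
        (fun u hu => by rw [hαother u hu, zero_smul]), hαv.1, zero_add, one_smul]
    have hzv : ∑ u ∈ V₁, β u • u = v := by
      rw [← Finset.sum_erase_add V₁ _ hv, Finset.sum_eq_zero
        (fun u hu => by rw [hβother u hu, zero_smul]), hαv.2, zero_add, one_smul]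
    have hcomb : t • cy + s • cz = 0 := by
      have h3 : (t • v + s • v) = v := by rw [← add_smul, hts, one_smul]
      have h2 : (t • v + s • v) + (t • cy + s • cz) = v := by
        conv_rhs => rw [← hv']
        rw [smul_add, smul_add, hyv, hzv]
        abel
      rw [h3] at h2
      exact add_left_cancel (h2.trans (add_zero v).symm)
    have hcy0 : t • cy = 0 := by
      have h1 : t • cy ∈ D := hDsmul _ hcy _ (le_of_lt ht)
      have h2 : t • cy ∈ -D := by
        rw [Set.mem_neg]
        have : -(t • cy) = s • cz := neg_eq_of_add_eq_zero_right hcomb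
        rw [this]
        exact hDsmul _ hcz _ (le_of_lt hs)
      have : t • cy ∈ D ∩ (-D) := ⟨h1, h2⟩
      rw [hDpointed] at this
      exact this
    have hcy : cy = 0 := by
      rcases smul_eq_zero.1 hcy0 with h | h
      · exact absurd h (ne_of_gt ht)
      · exact h
    have hcz : cz = 0 := by
      rw [hcy, smul_zero, zero_add] at hcomb
      rcases smul_eq_zero.1 hcomb with h | h
      · exact absurd h (ne_of_gt hs)
      · exact h
    rw [hyv, hzv, hcy, hcz, add_zero]
    exact ⟨rfl, rfl⟩

/-- extreme points of `B + D` lie in `B` -/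
lemma extreme_mem_base {B : Set M} (hD0 : (0:M) ∈ D) (hDadd : ∀ x ∈ D, ∀ y ∈ D, x + y ∈ D)
    {e : M} (he : e ∈ Set.extremePoints ℝ (B + D)) : e ∈ B := by
  obtain ⟨heT, hext⟩ := mem_extremePoints.1 he
  obtain ⟨p, hp, c, hc, rfl⟩ := Set.mem_add.1 heT
  have hpT : p ∈ B + D := Set.mem_add.2 ⟨p, hp, 0, hD0, add_zero p⟩
  have hpcT : (p + c) + c ∈ B + D := Set.mem_add.2 ⟨p, hp, c + c, hDadd c hc c hc, by abel⟩
  have hseg : (p + c) ∈ openSegment ℝ p ((p + c) + c) := by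
    refine ⟨1/2, 1/2, by norm_num, by norm_num, by norm_num, ?_⟩
    show (1/2 : ℝ) • p + (1/2 : ℝ) • (p + c + c) = p + c
    module
  have h1 := (hext p hpT _ hpcT hseg).1
  rw [← h1]
  exact hp

/-- extreme points of `mconv V + D` lie in `V` -/
lemma extreme_mem_gen {V : Finset M} (hD0 : (0:M) ∈ D)
    (hDadd : ∀ x ∈ D, ∀ y ∈ D, x + y ∈ D)
    {e : M} (he : e ∈ Set.extremePoints ℝ (mconv V + D)) : e ∈ V := by
  classical
  have heconv : e ∈ mconv V := extreme_mem_base hD0 hDadd he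
  obtain ⟨heT, hext⟩ := mem_extremePoints.1 he
  obtain ⟨l, hl, hlsum, hrep⟩ := heconv
  have hex : ∃ u₀ ∈ V, l u₀ ≠ 0 := by
    by_contra hno
    push_neg at hno
    rw [Finset.sum_eq_zero hno] at hlsum
    norm_num at hlsum
  obtain ⟨u₀, hu₀V, hu₀⟩ := hex
  have hu₀pos : 0 < l u₀ := lt_of_le_of_ne (hl u₀) (Ne.symm hu₀)
  have hu₀le : l u₀ ≤ 1 := by
    have := Finset.sum_erase_add V l hu₀V
    have h1 : 0 ≤ ∑ u ∈ V.erase u₀, l u := Finset.sum_nonneg fun u _ => hl u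
    linarith [hlsum]
  rcases eq_or_lt_of_le hu₀le with heq | hlt
  · -- l u₀ = 1, e = u₀
    have hother : ∀ u ∈ V.erase u₀, l u = 0 := by
      intro u hu
      have hsum0 : ∑ u ∈ V.erase u₀, l u = 0 := by
        have := Finset.sum_erase_add V l hu₀V
        rw [hlsum, heq] at this
        linarith
      by_contra hne
      have : 0 < ∑ u ∈ V.erase u₀, l u :=
        Finset.sum_pos' (fun u _ => hl u) ⟨u, hu, lt_of_le_of_ne (hl u) (Ne.symm hne)⟩
      linarith
    have : e = u₀ := by
      rw [hrep, ← Finset.sum_erase_add V _ hu₀V, Finset.sum_eq_zero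
        (fun u hu => by rw [hother u hu, zero_smul]), heq, zero_add, one_smul]
    rw [this]; exact hu₀V
  · -- 0 < l u₀ < 1 : e is proper combination, extremity forces e = u₀
    set z' := ∑ u ∈ V.erase u₀, ((1 - l u₀)⁻¹ * l u) • u with hz'
    have hpos : 0 < 1 - l u₀ := by linarith
    have hz'conv : z' ∈ mconv V := by
      refine mconv_mono (Finset.erase_subset u₀ V) ?_
      refine ⟨fun u => (1 - l u₀)⁻¹ * l u,
        fun u => mul_nonneg (inv_nonneg.2 (le_of_lt hpos)) (hl u), ?_, rfl⟩
      rw [← Finset.mul_sum]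
      have : ∑ u ∈ V.erase u₀, l u = 1 - l u₀ := by
        have := Finset.sum_erase_add V l hu₀V
        linarith [hlsum]
      rw [this, inv_mul_cancel₀ (ne_of_gt hpos)]
    have hz'T : z' ∈ mconv V + D := Set.mem_add.2 ⟨z', hz'conv, 0, hD0, add_zero z'⟩
    have hu₀T : u₀ ∈ mconv V + D :=
      Set.mem_add.2 ⟨u₀, mconv_self_mem hu₀V, 0, hD0, add_zero u₀⟩
    have hseg : e ∈ openSegment ℝ u₀ z' := by
      refine ⟨l u₀, 1 - l u₀, hu₀pos, hpos, by ring, ?_⟩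
      rw [hz', Finset.smul_sum]
      have : ∀ u ∈ V.erase u₀, (1 - l u₀) • (((1 - l u₀)⁻¹ * l u) • u) = l u • u := by
        intro u _
        rw [smul_smul, ← mul_assoc, mul_inv_cancel₀ (ne_of_gt hpos), one_mul]
      rw [Finset.sum_congr rfl this, hrep, ← Finset.sum_erase_add V _ hu₀V]
      abel
    have := (hext u₀ hu₀T z' hz'T hseg).1
    rw [← this]; exact hu₀V

end Extreme

section Map
variable {M N : Type*} [AddCommGroup M] [Module ℝ M] [AddCommGroup N] [Module ℝ N]
  [DecidableEq M] [DecidableEq N]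

lemma map_mconv (f : M →ₗ[ℝ] N) {V : Finset M} {x : M} (hx : x ∈ mconv V) :
    f x ∈ mconv (V.image fun v => f v) := by
  obtain ⟨l, hl, hlsum, rfl⟩ := hx
  rw [map_sum, Finset.sum_congr rfl fun v (_ : v ∈ V) => f.map_smul (l v) v]
  exact sum_mem_mconv V l (fun v => f v) (fun v _ => hl v) hlsum

lemma map_mcone (f : M →ₗ[ℝ] N) {W : Finset M} {x : M} (hx : x ∈ mcone W) :
    f x ∈ mcone (W.image fun w => f w) := by
  obtain ⟨μ, hμ, rfl⟩ := hx
  rw [map_sum, Finset.sum_congr rfl fun w (_ : w ∈ W) => f.map_smul (μ w) w]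
  exact sum_mem_mcone W μ (fun w => f w) (fun w _ => hμ w)

lemma mconv_image_subset (f : M →ₗ[ℝ] N) (V : Finset M) :
    mconv (V.image fun v => f v) ⊆ (fun v => f v) '' (mconv V) := by
  classical
  rintro y ⟨l, hl, hlsum, rfl⟩
  have hrep : ∀ v' ∈ V.image (fun v => f v), ∃ v, v ∈ V ∧ f v = v' := by
    intro v' h
    obtain ⟨v, hv, hfv⟩ := Finset.mem_image.1 h
    exact ⟨v, hv, hfv⟩
  choose rep hrepV hrepf using hrep
  set s := (V.image fun v => f v).attach with hs
  refine ⟨∑ a ∈ s, l a.1 • rep a.1 a.2, ?_, ?_⟩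
  · have hmem : (∑ a ∈ s, l a.1 • rep a.1 a.2)
        ∈ mconv (s.image fun a => rep a.1 a.2) :=
      sum_mem_mconv s (fun a => l a.1) (fun a => rep a.1 a.2) (fun a _ => hl a.1)
        (by rw [hs, Finset.sum_attach _ l, hlsum])
    refine mconv_mono ?_ hmem
    intro u hu
    obtain ⟨a, _, rfl⟩ := Finset.mem_image.1 hu
    exact hrepV a.1 a.2
  · show f (∑ a ∈ s, l a.1 • rep a.1 a.2) = ∑ v ∈ V.image (fun v => f v), l v • v
    rw [map_sum]
    have : ∀ a ∈ s, f (l a.1 • rep a.1 a.2) = l a.1 • a.1 := by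
      intro a _
      rw [f.map_smul, hrepf a.1 a.2]
    rw [Finset.sum_congr rfl this, hs, Finset.sum_attach _ (fun v => l v • v)]

end Map

/-- Under quasi-concavity of `f`, `C`-monotonicity of `f` on `P[S] − C`,
`C`-boundedness of `P[S]` and `S ≠ ∅`, the problem `min f(Px) s.t. Ax ≥ b` has an optimal
solution `x*` with `f(Px*) = min {f(y) | y vertex of 𝒫}` where `𝒫 = P[S] + C`. -/
theorem stmt1 (q m n : ℕ)
    (A : Matrix (Fin m) (Fin n) ℝ) (P : Matrix (Fin q) (Fin n) ℝ) (b : Fin m → ℝ)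
    (S : Set (Fin n → ℝ)) (hS : S = {x | b ≤ A.mulVec x}) (hSne : S.Nonempty)
    (PS : Set (Fin q → ℝ)) (hPS : PS = (fun x => P.mulVec x) '' S)
    (f : (Fin q → ℝ) → EReal)
    (hf_qc : ∀ r : ℝ, Convex ℝ {y | (r : EReal) ≤ f y})
    (C : Set (Fin q → ℝ))
    (hC_poly : ∃ (p : ℕ) (Z : Matrix (Fin p) (Fin q) ℝ), C = {y | 0 ≤ Z.mulVec y})
    (hC_pointed : C ∩ (-C) = {0})
    (hmono : ∀ x ∈ PS - C, ∀ y ∈ PS - C, y - x ∈ C → f x ≤ f y)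
    (hrec : {d | ∀ y ∈ PS, ∀ t : ℝ, 0 ≤ t → y + t • d ∈ PS} ⊆ C) :
    ∃ xstar ∈ S, (∀ x ∈ S, f (P.mulVec xstar) ≤ f (P.mulVec x)) ∧
      IsLeast (f '' Set.extremePoints ℝ (PS + C)) (f (P.mulVec xstar)) := by
  classical
  obtain ⟨cp, Z, hCZ⟩ := hC_poly
  -- closure properties of C
  have hC0 : (0 : Fin q → ℝ) ∈ C := by
    rw [hCZ]
    show (0 : Fin cp → ℝ) ≤ Z.mulVec 0
    rw [Matrix.mulVec_zero]
  have hCadd : ∀ x ∈ C, ∀ y ∈ C, x + y ∈ C := by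
    intro x hx y hy
    rw [hCZ] at hx hy ⊢
    intro i
    have := Matrix.mulVec_add Z x y
    rw [show Z.mulVec (x + y) = Z.mulVec x + Z.mulVec y from this]
    exact add_nonneg (hx i) (hy i)
  have hCsmul : ∀ x ∈ C, ∀ c : ℝ, 0 ≤ c → c • x ∈ C := by
    intro x hx c hc
    rw [hCZ] at hx ⊢
    intro i
    rw [Matrix.mulVec_smul]
    exact mul_nonneg hc (hx i)
  -- polyhedral decomposition of S
  obtain ⟨V, W, hQ⟩ := poly_decomp A b
  rw [← hS] at hQ
  set Pm : (Fin n → ℝ) →ₗ[ℝ] (Fin q → ℝ) := Matrix.mulVecLin P with hPmdef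
  have hPm : ∀ x, P.mulVec x = Pm x := fun x => rfl
  -- directions map into C
  have hdirW : ∀ w ∈ W, Pm w ∈ C := by
    intro w hw
    apply hrec
    intro y hy t ht
    rw [hPS] at hy ⊢
    obtain ⟨x, hxS, rfl⟩ := hy
    refine ⟨x + t • w, ?_, ?_⟩
    · have hxQ : x ∈ mconv V + mcone W := by rw [← hQ]; exact hxS
      obtain ⟨xc, hxc, xr, hxr, rfl⟩ := Set.mem_add.1 hxQ
      have : (xc + xr) + t • w ∈ mconv V + mcone W :=
        Set.mem_add.2 ⟨xc, hxc, xr + t • w,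
          mcone_add_mem hxr (mcone_smul_single_mem hw ht), by abel⟩
      rw [hQ]
      exact this
    · show P.mulVec (x + t • w) = P.mulVec x + t • P.mulVec w
      rw [Matrix.mulVec_add, Matrix.mulVec_smul]
  set Vp : Finset (Fin q → ℝ) := V.image (fun v => Pm v) with hVp
  have hconeWp : ∀ x ∈ mcone (W.image fun w => Pm w), x ∈ C := by
    refine fun x hx => mcone_subset hC0 hCadd hCsmul ?_ hx
    intro w' hw'
    obtain ⟨w, hw, rfl⟩ := Finset.mem_image.1 hw'
    exact hdirW w hw
  have hconvVQ : ∀ x ∈ mconv V, x ∈ S := by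
    intro x hx
    rw [hQ]
    exact Set.mem_add.2 ⟨x, hx, 0, mcone_zero_mem W, add_zero x⟩
  -- upper image decomposition
  have hT : PS + C = mconv Vp + C := by
    apply Set.eq_of_subset_of_subset
    · rintro yz hyz
      obtain ⟨yp, hyp, c, hc, rfl⟩ := Set.mem_add.1 hyz
      rw [hPS] at hyp
      obtain ⟨x, hxS, rfl⟩ := hyp
      have hxQ : x ∈ mconv V + mcone W := by rw [← hQ]; exact hxS
      obtain ⟨xc, hxc, xr, hxr, rfl⟩ := Set.mem_add.1 hxQ
      refine Set.mem_add.2 ⟨Pm xc, ?_, Pm xr + c, ?_, ?_⟩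
      · exact map_mconv Pm hxc
      · exact hCadd _ (hconeWp _ (map_mcone Pm hxr)) _ hc
      · show Pm xc + (Pm xr + c) = P.mulVec (xc + xr) + c
        rw [hPm, map_add]
        abel
    · rintro yz hyz
      obtain ⟨z, hz, c, hc, rfl⟩ := Set.mem_add.1 hyz
      obtain ⟨x, hx, rfl⟩ := mconv_image_subset Pm V hz
      refine Set.add_mem_add ?_ hc
      rw [hPS]
      exact ⟨x, hconvVQ x hx, rfl⟩
  -- minimal generating subset
  obtain ⟨V₁, hV₁sub, hT1, hmin⟩ :=
    exists_minimal_gen hC0 hCadd hCsmul Vp.card Vp le_rfl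
  have hTT : PS + C = mconv V₁ + C := hT.trans hT1
  have hV₁E : ∀ v ∈ V₁, v ∈ Set.extremePoints ℝ (PS + C) := by
    rw [hTT]
    exact fun v hv => minimal_mem_extreme hC0 hCadd hCsmul hC_pointed hmin hv
  have hEsub : Set.extremePoints ℝ (PS + C) ⊆ ↑Vp := fun e he =>
    extreme_mem_gen hC0 hCadd (hT ▸ he)
  have hEPS : Set.extremePoints ℝ (PS + C) ⊆ PS := fun e he =>
    extreme_mem_base hC0 hCadd he
  have hEfin : (Set.extremePoints ℝ (PS + C)).Finite :=
    Set.Finite.subset (Vp.finite_toSet) hEsub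
  -- nonemptiness of V₁
  obtain ⟨x₀, hx₀S⟩ := hSne
  have hx₀T : Pm x₀ ∈ mconv V₁ + C := by
    rw [← hTT]
    have hmem : Pm x₀ ∈ PS := by rw [hPS]; exact ⟨x₀, hx₀S, rfl⟩
    have h0 : Pm x₀ + 0 ∈ PS + C := Set.add_mem_add hmem hC0
    simpa using h0
  obtain ⟨z₀, hz₀, c₀, hc₀, _⟩ := Set.mem_add.1 hx₀T
  obtain ⟨l₀, hl₀, hl₀sum, _⟩ := hz₀
  have hV₁ne : ∃ v₁, v₁ ∈ V₁ := by
    by_contra hno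
    push_neg at hno
    have hemp : V₁ = ∅ := Finset.eq_empty_of_forall_notMem hno
    rw [hemp] at hl₀sum
    simp at hl₀sum
  obtain ⟨v₁, hv₁⟩ := hV₁ne
  have hEne : (Set.extremePoints ℝ (PS + C)).Nonempty := ⟨v₁, hV₁E v₁ hv₁⟩
  obtain ⟨vstar, hvE, hvmin⟩ := Set.exists_min_image _ f hEfin hEne
  have hvPS : vstar ∈ PS := hEPS hvE
  rw [hPS] at hvPS
  obtain ⟨xstar, hxstarS, hxstarP⟩ := hvPS
  have hPxs : f (P.mulVec xstar) = f vstar := by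
    rw [show P.mulVec xstar = vstar from hxstarP]
  have hkey : ∀ u ∈ V₁, f vstar ≤ f u := fun u hu => hvmin u (hV₁E u hu)
  have hmain : ∀ x ∈ S, f vstar ≤ f (P.mulVec x) := by
    intro x hx
    have hxPS : P.mulVec x ∈ PS := by rw [hPS]; exact ⟨x, hx, rfl⟩
    have hxT : P.mulVec x ∈ mconv V₁ + C := by
      rw [← hTT]
      simpa using Set.add_mem_add hxPS hC0
    obtain ⟨z, hz, c, hc, hzc⟩ := Set.mem_add.1 hxT
    have hsup : ∀ r : ℝ, (r : EReal) ≤ f vstar → (r : EReal) ≤ f z := by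
      intro r hr
      obtain ⟨l, hl, hlsum, rfl⟩ := hz
      exact Convex.sum_mem (hf_qc r) (fun u _ => hl u) hlsum
        (fun u hu => le_trans hr (hkey u hu))
    have hfz : f vstar ≤ f z := by
      rcases eq_or_ne (f vstar) ⊥ with hb | hb
      · rw [hb]; exact bot_le
      rcases eq_or_ne (f vstar) ⊤ with htop | htop
      · by_contra hlt
        push_neg at hlt
        rw [htop] at hlt
        obtain ⟨r, hr1, _⟩ := EReal.lt_iff_exists_real_btwn.1 hlt
        exact absurd (hsup r (by rw [htop]; exact le_top)) (not_le.2 hr1)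
      · have hr : f vstar = ((f vstar).toReal : EReal) := (EReal.coe_toReal htop hb).symm
        rw [hr]
        exact hsup _ (le_of_eq hr.symm)
    have hzsub : z ∈ PS - C :=
      Set.mem_sub.2 ⟨P.mulVec x, hxPS, c, hc, by rw [← hzc]; abel⟩
    have hxsub : P.mulVec x ∈ PS - C :=
      Set.mem_sub.2 ⟨P.mulVec x, hxPS, 0, hC0, sub_zero _⟩
    have hdiff : P.mulVec x - z ∈ C := by
      have heqc : P.mulVec x - z = c := by rw [← hzc]; abel
      rw [heqc]; exact hc
    exact le_trans hfz (hmono z hzsub _ hxsub hdiff)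
  refine ⟨xstar, hxstarS, ?_, ?_, ?_⟩
  · intro x hx
    rw [hPxs]
    exact hmain x hx
  · exact ⟨vstar, hvE, hPxs.symm⟩
  · rintro y ⟨e, he, rfl⟩
    rw [hPxs]
    exact hvmin e he
end

section
/- Let C ⊆ ℝ^q be a pointed convex cone, let 𝒫 ⊆ 𝒪 ⊆ ℝ^q be convex sets with C + 𝒪 ⊆ 𝒪 (in particular this holds when the recession cone of the polyhedron 𝒪 equals C), and let t be an extreme point (vertex) of 𝒪. If y ∈ 𝒫 satisfies t − y ∈ C, then y = t. -/
open Pointwise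

/-- Let `C` be a pointed convex cone, `UpperIm ⊆ O` convex sets with
`C + O ⊆ O`, and let `t` be an extreme point (vertex) of `O`.  If `y ∈ UpperIm` satisfies
`t − y ∈ C`, then `y = t`. -/
theorem stmt2 (q : ℕ) (C UpperIm O : Set (Fin q → ℝ))
    (hC_convex : Convex ℝ C)
    (hC_cone : ∀ (t : ℝ), 0 ≤ t → ∀ c ∈ C, t • c ∈ C)
    (hC_pointed : C ∩ (-C) = {0})
    (hP : Convex ℝ UpperIm) (hO : Convex ℝ O) (hsub : UpperIm ⊆ O)
    (hCO : C + O ⊆ O)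
    (t : Fin q → ℝ) (ht : t ∈ Set.extremePoints ℝ O)
    (y : Fin q → ℝ) (hy : y ∈ UpperIm) (hty : t - y ∈ C) : y = t := by
  have h1 : (t - y) + t ∈ O := hCO (Set.add_mem_add hty ht.1)
  have hmid : t ∈ openSegment ℝ y ((t - y) + t) := by
    refine ⟨1/2, 1/2, by norm_num, by norm_num, by norm_num, ?_⟩
    funext i
    simp [Pi.add_apply, Pi.sub_apply]
    ring
  exact ht.2 (hsub hy) h1 hmid
end

section
/- Let S := {x ∈ ℝ^n | Ax ≥ b} be nonempty, let C = {y ∈ ℝ^q | Zᵀy ≥ 0} be a solid pointed polyhedral convex cone containing the recession cone of P[S], let c ∈ int C, and let t ∈ ℝ^q. Let (x̄, z̄) be an optimal solution of P2(t) and (ū, w̄) an optimal solution of D2(t). Then: (i) the half-space H := {y ∈ ℝ^q | w̄ᵀy ≥ bᵀū} contains the upper image 𝒫 := P[S] + C; (ii) the point s := t + z̄·c satisfies s ∈ 𝒫 and w̄ᵀs ≤ bᵀū (so s lies on the boundary of H and hence on the boundary of 𝒫); (iii) t ∉ 𝒫 if and only if z̄ > 0. -/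
open Matrix

lemma coneClosed {ι κ : Type*} [Fintype ι] [DecidableEq ι] [Fintype κ]
    (v : ι → EuclideanSpace ℝ κ) (s : Finset ι) :
    IsClosed {x : EuclideanSpace ℝ κ | ∃ l : ι → ℝ, (∀ i, 0 ≤ l i) ∧ x = ∑ i ∈ s, l i • v i} := by
  induction s using Finset.strongInduction with
  | _ s ih =>
  by_cases hli : LinearIndependent ℝ (fun i : {x // x ∈ s} => v i)
  · -- image of the nonneg orthant under an injective linear map
    set f : ({x // x ∈ s} → ℝ) →ₗ[ℝ] EuclideanSpace ℝ κ :=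
      { toFun := fun l => ∑ i, l i • v i
        map_add' := by intro a b; simp [add_smul, Finset.sum_add_distrib]
        map_smul' := by intro r a; simp [smul_smul, Finset.smul_sum] }
    have hfinj : Function.Injective f := by
      rw [← LinearMap.ker_eq_bot, LinearMap.ker_eq_bot']
      intro l hl
      exact funext (Fintype.linearIndependent_iff.mp hli l hl)
    have hset : {x : EuclideanSpace ℝ κ | ∃ l : ι → ℝ, (∀ i, 0 ≤ l i) ∧ x = ∑ i ∈ s, l i • v i}
        = f '' {l | ∀ i, 0 ≤ l i} := by
      ext x
      constructor
      · rintro ⟨l, hl, rfl⟩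
        refine ⟨fun i => l i, fun i => hl i, ?_⟩
        show ∑ i : {x // x ∈ s}, l i • v i = _
        rw [← Finset.sum_attach s (fun i => l i • v i)]
        rfl
      · rintro ⟨l, hl, rfl⟩
        classical
        refine ⟨fun i => if h : i ∈ s then l ⟨i, h⟩ else 0, fun i => ?_, ?_⟩
        · by_cases h : i ∈ s 
          · simpa [h] using hl ⟨i, h⟩
          · simp [h]
        · show ∑ i : {x // x ∈ s}, l i • v i = _
          rw [← Finset.sum_attach s (fun i => (if h : i ∈ s then l ⟨i, h⟩ else 0) • v i)]
          exact Finset.sum_congr rfl (fun i _ => by simp [i.2])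
    rw [hset]
    have hcl : IsClosed {l : {x // x ∈ s} → ℝ | ∀ i, 0 ≤ l i} := by
      have : {l : {x // x ∈ s} → ℝ | ∀ i, 0 ≤ l i} = ⋂ i, {l | 0 ≤ l i} := by
        ext l; simp [Set.mem_iInter]
      rw [this]
      exact isClosed_iInter (fun i => isClosed_le continuous_const (continuous_apply i))
    exact (f.isClosedEmbedding_of_injective (LinearMap.ker_eq_bot.mpr hfinj)).isClosedMap _ hcl
  · -- dependent case: reduce to eliminating one generator
    obtain ⟨g, hgsum, j0, hj0⟩ := Fintype.not_linearIndependent_iff.mp hli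
    classical
    set mm : ι → ℝ := fun i => if h : i ∈ s then g ⟨i, h⟩ else 0 with hmm
    have hmm0 : ∀ i ∉ s, mm i = 0 := fun i hi => by simp [mm, hi]
    have hmmsum : ∑ i ∈ s, mm i • v i = 0 := by
      rw [← Finset.sum_attach s (fun i => mm i • v i)]
      rw [← hgsum]
      exact Finset.sum_congr rfl (fun i _ => by simp [mm, i.2])
    have key : ∀ m : ι → ℝ, (∀ i ∉ s, m i = 0) → (∑ i ∈ s, m i • v i = 0) →
        (∃ i ∈ s, 0 < m i) →
        {x : EuclideanSpace ℝ κ | ∃ l : ι → ℝ, (∀ i, 0 ≤ l i) ∧ x = ∑ i ∈ s, l i • v i} ⊆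
        ⋃ i ∈ s, {x : EuclideanSpace ℝ κ | ∃ l : ι → ℝ, (∀ i, 0 ≤ l i) ∧
          x = ∑ j ∈ s.erase i, l j • v j} := by
      rintro m hm0 hmsum hmpos x ⟨l, hl, rfl⟩
      set Pf : Finset ι := s.filter (fun i => 0 < m i) with hPf
      have hPne : Pf.Nonempty := by
        obtain ⟨i, hi, hip⟩ := hmpos
        exact ⟨i, Finset.mem_filter.mpr ⟨hi, hip⟩⟩
      obtain ⟨i0, hi0P, hi0min⟩ := Finset.exists_mem_eq_inf' hPne (fun i => l i / m i)
      have hi0s : i0 ∈ s := (Finset.mem_filter.mp hi0P).1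
      have hi0pos : 0 < m i0 := (Finset.mem_filter.mp hi0P).2
      set r : ℝ := Pf.inf' hPne (fun i => l i / m i) with hr
      have hr0 : 0 ≤ r := by
        apply Finset.le_inf'
        intro i hi
        exact div_nonneg (hl i) (le_of_lt (Finset.mem_filter.mp hi).2)
      have hl' : ∀ i, 0 ≤ l i - r * m i := by
        intro i
        by_cases hi : i ∈ s
        · by_cases him : 0 < m i
          · have : r ≤ l i / m i := by
              rw [hr]; exact Finset.inf'_le _ (Finset.mem_filter.mpr ⟨hi, him⟩)
            have := (le_div_iff₀ him).mp this
            linarith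
          · nlinarith [hl i, mul_nonpos_of_nonneg_of_nonpos hr0 (le_of_not_gt him)]
        · simp [hm0 i hi, hl i]
      have hi0z : l i0 - r * m i0 = 0 := by
        rw [hi0min]; field_simp; ring
      refine Set.mem_iUnion.mpr ⟨i0, Set.mem_iUnion.mpr ⟨hi0s, ⟨fun i => l i - r * m i, hl', ?_⟩⟩⟩
      rw [Finset.sum_erase _ (by simp [hi0z])]
      have : ∑ i ∈ s, (l i - r * m i) • v i
          = ∑ i ∈ s, l i • v i - r • ∑ i ∈ s, m i • v i := by
        rw [Finset.smul_sum, ← Finset.sum_sub_distrib]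
        exact Finset.sum_congr rfl (fun i _ => by rw [sub_smul, smul_smul])
      rw [this, hmsum, smul_zero, sub_zero]
    have hunion : {x : EuclideanSpace ℝ κ | ∃ l : ι → ℝ, (∀ i, 0 ≤ l i) ∧ x = ∑ i ∈ s, l i • v i}
        = ⋃ i ∈ s, {x : EuclideanSpace ℝ κ | ∃ l : ι → ℝ, (∀ i, 0 ≤ l i) ∧
          x = ∑ j ∈ s.erase i, l j • v j} := by
      apply Set.Subset.antisymm
      · by_cases hpos : ∃ i ∈ s, 0 < mm i
        · exact key mm hmm0 hmmsum hpos
        · apply key (fun i => -mm i) (fun i hi => by simp [hmm0 i hi])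
            (by simpa [Finset.sum_neg_distrib] using congrArg Neg.neg hmmsum)
          push_neg at hpos
          refine ⟨j0, j0.2, ?_⟩
          have : mm (j0 : ι) = g j0 := by simp [mm, j0.2]
          have hne : mm (j0 : ι) ≠ 0 := by rw [this]; exact hj0
          have := hpos (j0 : ι) j0.2
          simp only [neg_pos]
          exact lt_of_le_of_ne this hne
      · intro x hx
        obtain ⟨i, hiU⟩ := Set.mem_iUnion.mp hx
        obtain ⟨hi, l, hl, rfl⟩ := by
          simpa using hiU
        refine ⟨Function.update l i 0, fun j => ?_, ?_⟩
        · by_cases hj : j = i <;> simp [Function.update, hj, hl j]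
        · rw [← Finset.add_sum_erase _ _ hi]
          simp only [Function.update_self, zero_smul, zero_add]
          exact (Finset.sum_congr rfl (fun j hj => by
            rw [Function.update_of_ne (Finset.ne_of_mem_erase hj)])).symm
    rw [hunion]
    apply Set.Finite.isClosed_biUnion (s.finite_toSet)
    intro i hi
    exact ih (s.erase i) (Finset.erase_ssubset hi)

lemma farkas {κ ν : Type*} [Fintype κ] [Fintype ν] [DecidableEq κ] [DecidableEq ν]
    (M : Matrix κ ν ℝ) (d : κ → ℝ) (h : ¬ ∃ x : ν → ℝ, d ≤ M.mulVec x) :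
    ∃ y : κ → ℝ, 0 ≤ y ∧ M.transpose.mulVec y = 0 ∧ 0 < d ⬝ᵥ y := by
  classical
  set v : (ν ⊕ ν ⊕ κ) → EuclideanSpace ℝ κ := fun i =>
    WithLp.toLp 2 (Sum.elim (fun j => (fun i' => M i' j : κ → ℝ))
      (Sum.elim (fun j => (fun i' => -(M i' j) : κ → ℝ))
        (fun i0 => (-(Pi.single i0 1) : κ → ℝ))) i) with hv
  set Kset : Set (EuclideanSpace ℝ κ) :=
    {x | ∃ l : (ν ⊕ ν ⊕ κ) → ℝ, (∀ i, 0 ≤ l i) ∧ x = ∑ i ∈ Finset.univ, l i • v i} with hK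
  have hclosed : IsClosed Kset := coneClosed v Finset.univ
  have hgen : ∀ i0, v i0 ∈ Kset := by
    intro i0
    refine ⟨Pi.single i0 1, fun i => ?_, ?_⟩
    · by_cases hi : i = i0 <;> simp [Pi.single, Function.update, hi]
    · rw [Finset.sum_eq_single i0 (fun i _ hne => by simp [Pi.single_eq_of_ne hne])
        (fun hi => absurd (Finset.mem_univ i0) hi)]
      simp
  set K : ConvexCone ℝ (EuclideanSpace ℝ κ) :=
    { carrier := Kset
      smul_mem' := by
        rintro cc hcc x ⟨l, hl, rfl⟩
        refine ⟨fun i => cc * l i, fun i => mul_nonneg (le_of_lt hcc) (hl i), ?_⟩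
        rw [Finset.smul_sum]
        exact Finset.sum_congr rfl (fun i _ => smul_smul cc (l i) (v i))
      add_mem' := by
        rintro x ⟨l1, hl1, rfl⟩ y ⟨l2, hl2, rfl⟩
        refine ⟨fun i => l1 i + l2 i, fun i => add_nonneg (hl1 i) (hl2 i), ?_⟩
        rw [← Finset.sum_add_distrib]
        exact Finset.sum_congr rfl (fun i _ => by rw [add_smul]) } with hKC
  have hne : (K : Set (EuclideanSpace ℝ κ)).Nonempty :=
    ⟨0, ⟨fun _ => 0, fun _ => le_refl 0, by simp⟩⟩
  have hdK : WithLp.toLp 2 d ∉ K := by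
    rintro ⟨l, hl, hrep⟩
    apply h
    refine ⟨fun j => l (Sum.inl j) - l (Sum.inr (Sum.inl j)), fun i => ?_⟩
    have hdi : d i = ∑ j, l (Sum.inl j) * M i j - ∑ j, l (Sum.inr (Sum.inl j)) * M i j
        - l (Sum.inr (Sum.inr i)) := by
      have := congrArg (fun x : EuclideanSpace ℝ κ => WithLp.ofLp x i) hrep
      simp only [WithLp.ofLp_sum, Finset.sum_apply] at this
      rw [this]
      rw [Fintype.sum_sum_type, Fintype.sum_sum_type]
      simp only [hv]
      simp only [Sum.elim_inl, Sum.elim_inr, Pi.smul_apply, smul_eq_mul, Pi.neg_apply]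
      rw [Finset.sum_eq_single i (fun b _ hne => by simp [Pi.single_eq_of_ne (Ne.symm hne), Ne.symm hne])
        (fun hi => absurd (Finset.mem_univ i) hi)]
      simp only [PiLp.smul_apply, PiLp.neg_apply, smul_eq_mul, Pi.neg_apply,
        Pi.single_eq_same, mul_neg, mul_one, Finset.sum_neg_distrib]
      ring
    rw [hdi]
    have : M.mulVec (fun j => l (Sum.inl j) - l (Sum.inr (Sum.inl j))) i
        = ∑ j, l (Sum.inl j) * M i j - ∑ j, l (Sum.inr (Sum.inl j)) * M i j := by
      simp only [Matrix.mulVec, dotProduct]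
      rw [← Finset.sum_sub_distrib]
      exact Finset.sum_congr rfl (fun j _ => by ring)
    rw [this]
    have := hl (Sum.inr (Sum.inr i))
    linarith
  obtain ⟨y, hy1, hy2⟩ :=
    ProperCone.hyperplane_separation' ⟨K.toPointedCone (show (0 : EuclideanSpace ℝ κ) ∈ K from ⟨fun _ => 0, fun _ => le_refl 0, by simp⟩), hclosed⟩ hdK
  refine ⟨fun i => -(y i), fun i => ?_, ?_, ?_⟩
  · have := hy1 _ (hgen (Sum.inr (Sum.inr i)))
    rw [PiLp.inner_apply] at this
    simp only [hv, Sum.elim_inr, Pi.neg_apply, RCLike.inner_apply, conj_trivial] at this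
    rw [Finset.sum_eq_single i (fun b _ hne => by simp [Pi.single_eq_of_ne hne])
      (fun hi => absurd (Finset.mem_univ i) hi)] at this
    simpa using this
  · funext j
    have h1 := hy1 _ (hgen (Sum.inl j))
    have h2 := hy1 _ (hgen (Sum.inr (Sum.inl j)))
    rw [PiLp.inner_apply] at h1 h2
    simp only [hv, Sum.elim_inl, Sum.elim_inr, Pi.neg_apply, RCLike.inner_apply,
      conj_trivial, neg_mul, Finset.sum_neg_distrib] at h1 h2
    simp only [mul_comm (WithLp.ofLp y _), neg_mul, Finset.sum_neg_distrib] at h1 h2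
    have heq : ∑ i, M i j * y i = 0 := le_antisymm (by linarith) h1
    simp only [Matrix.mulVec, dotProduct, Matrix.transpose_apply, Pi.zero_apply, mul_neg]
    rw [Finset.sum_neg_distrib, heq, neg_zero]
  · rw [PiLp.inner_apply] at hy2
    simp only [RCLike.inner_apply, conj_trivial] at hy2
    simp only [dotProduct]
    have : ∑ i, d i * -(y i) = -∑ i, y i * d i := by
      rw [← Finset.sum_neg_distrib]; exact Finset.sum_congr rfl (fun i _ => by ring)
    rw [this]
    linarith

lemma dmv {a b : Type*} [Fintype a] [Fintype b] (M : Matrix a b ℝ) (v : a → ℝ) (w : b → ℝ) :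
    v ⬝ᵥ M.mulVec w = M.transpose.mulVec v ⬝ᵥ w := by
  rw [Matrix.mulVec_transpose, Matrix.dotProduct_mulVec]

lemma dnn {a : Type*} [Fintype a] {u w : a → ℝ} (hu : 0 ≤ u) (hw : 0 ≤ w) : 0 ≤ u ⬝ᵥ w :=
  Finset.sum_nonneg fun i _ => mul_nonneg (hu i) (hw i)

lemma dmono {a : Type*} [Fintype a] {u c d : a → ℝ} (hu : 0 ≤ u) (h : c ≤ d) :
    u ⬝ᵥ c ≤ u ⬝ᵥ d :=
  Finset.sum_le_sum fun i _ => mul_le_mul_of_nonneg_left (h i) (hu i)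

lemma strongdual {m n p q : ℕ} (A : Matrix (Fin m) (Fin n) ℝ) (b : Fin m → ℝ)
    (P : Matrix (Fin q) (Fin n) ℝ) (Z : Matrix (Fin q) (Fin p) ℝ) (c t : Fin q → ℝ)
    (xbar : Fin n → ℝ) (zbar : ℝ)
    (hfeas1 : b ≤ A.mulVec xbar)
    (hfeas2 : Z.transpose.mulVec (P.mulVec xbar)
      ≤ Z.transpose.mulVec t + zbar • Z.transpose.mulVec c)
    (hopt : ∀ x z, b ≤ A.mulVec x →
      Z.transpose.mulVec (P.mulVec x) ≤ Z.transpose.mulVec t + z • Z.transpose.mulVec c → zbar ≤ z)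
    (D : ℝ)
    (hdual : ∀ (u : Fin m → ℝ) (wZ : Fin p → ℝ), 0 ≤ u → 0 ≤ wZ →
      A.transpose.mulVec u = P.transpose.mulVec (Z.mulVec wZ) → c ⬝ᵥ (Z.mulVec wZ) = 1 →
      b ⬝ᵥ u - t ⬝ᵥ (Z.mulVec wZ) ≤ D) :
    zbar ≤ D := by
  by_contra hcon
  push_neg at hcon
  set ε : ℝ := zbar - D with hε
  have hεpos : 0 < ε := by linarith
  classical
  -- Farkas setup
  set M' : Matrix ((Fin m ⊕ Fin p) ⊕ Unit) (Fin n ⊕ Unit) ℝ := fun k j =>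
    match k, j with
    | .inl (.inl i), .inl jj => A i jj
    | .inl (.inl _), .inr _ => 0
    | .inl (.inr kk), .inl jj => -((Z.transpose * P) kk jj)
    | .inl (.inr kk), .inr _ => Z.transpose.mulVec c kk
    | .inr _, .inl _ => 0
    | .inr _, .inr _ => -1 with hM'
  set d' : (Fin m ⊕ Fin p) ⊕ Unit → ℝ := fun k =>
    match k with
    | .inl (.inl i) => b i
    | .inl (.inr kk) => -(Z.transpose.mulVec t kk)
    | .inr _ => -(zbar - ε) with hd'
  have hinfeas : ¬ ∃ x : (Fin n ⊕ Unit) → ℝ, d' ≤ M'.mulVec x := by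
    rintro ⟨x', hx'⟩
    have h1 : b ≤ A.mulVec (fun j => x' (Sum.inl j)) := by
      intro i
      have := hx' (Sum.inl (Sum.inl i))
      simp only [Matrix.mulVec, dotProduct, Fintype.sum_sum_type, Fintype.sum_unique,
        hM', hd', zero_mul, Finset.sum_const_zero, add_zero] at this
      simpa [Matrix.mulVec, dotProduct] using this
    have h2 : Z.transpose.mulVec (P.mulVec (fun j => x' (Sum.inl j)))
        ≤ Z.transpose.mulVec t + x' (Sum.inr ()) • Z.transpose.mulVec c := by
      have hcomb : Z.transpose.mulVec (P.mulVec (fun j => x' (Sum.inl j)))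
          = (Z.transpose * P).mulVec (fun j => x' (Sum.inl j)) := by
        rw [Matrix.mulVec_mulVec]
      rw [hcomb]
      intro k
      have := hx' (Sum.inl (Sum.inr k))
      simp only [Matrix.mulVec, dotProduct, Fintype.sum_sum_type, Fintype.sum_unique,
        hM', hd', neg_mul, Finset.sum_neg_distrib] at this
      simp only [Pi.add_apply, Pi.smul_apply, smul_eq_mul, Matrix.mulVec, dotProduct]
      linarith [this]
    have h3 : x' (Sum.inr ()) ≤ zbar - ε := by
      have := hx' (Sum.inr ())
      simp only [Matrix.mulVec, dotProduct, Fintype.sum_sum_type, Fintype.sum_unique,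
        hM', hd', zero_mul, Finset.sum_const_zero, neg_mul, one_mul, zero_add] at this
      linarith [this]
    have := hopt _ _ h1 h2
    linarith
  obtain ⟨y, hy0, hyT, hyd⟩ := farkas M' d' hinfeas
  set u : Fin m → ℝ := fun i => y (Sum.inl (Sum.inl i)) with hu
  set wZ : Fin p → ℝ := fun k => y (Sum.inl (Sum.inr k)) with hwZ
  set μ : ℝ := y (Sum.inr ()) with hμ
  set w : Fin q → ℝ := Z.mulVec wZ with hw
  have hu0 : 0 ≤ u := fun i => hy0 (Sum.inl (Sum.inl i))
  have hwZ0 : 0 ≤ wZ := fun k => hy0 (Sum.inl (Sum.inr k))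
  have hμ0 : 0 ≤ μ := hy0 (Sum.inr ())
  -- column equations
  have hcol1 : A.transpose.mulVec u = P.transpose.mulVec w := by
    funext j
    have := congrFun hyT (Sum.inl j)
    simp only [Matrix.mulVec, dotProduct, Matrix.transpose_apply, Matrix.mul_apply,
      Fintype.sum_sum_type, Fintype.sum_unique, hM', Matrix.transpose, Matrix.of_apply, Pi.zero_apply, zero_mul,
      Finset.sum_const_zero, add_zero, neg_mul, Finset.sum_neg_distrib] at this
    simp only [Matrix.mulVec, dotProduct, Matrix.transpose_apply, hu, hw, hwZ,
      Matrix.mul_apply]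
    have hswap : ∑ i : Fin q, P i j * ∑ k, Z i k * y (Sum.inl (Sum.inr k))
        = ∑ k, (∑ i, Z i k * P i j) * y (Sum.inl (Sum.inr k)) := by
      calc ∑ i : Fin q, P i j * ∑ k, Z i k * y (Sum.inl (Sum.inr k))
          = ∑ i : Fin q, ∑ k, P i j * (Z i k * y (Sum.inl (Sum.inr k))) :=
            Finset.sum_congr rfl fun i _ => Finset.mul_sum _ _ _
        _ = ∑ k, ∑ i : Fin q, P i j * (Z i k * y (Sum.inl (Sum.inr k))) := Finset.sum_comm
        _ = ∑ k, (∑ i, Z i k * P i j) * y (Sum.inl (Sum.inr k)) :=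
            Finset.sum_congr rfl fun k _ => by
              rw [Finset.sum_mul]; exact Finset.sum_congr rfl fun i _ => by ring
    rw [hswap]
    linarith [this]
  have hcw : c ⬝ᵥ w = μ := by
    have := congrFun hyT (Sum.inr ())
    simp only [Matrix.mulVec, dotProduct, Matrix.transpose_apply,
      Fintype.sum_sum_type, Fintype.sum_unique, hM', Matrix.transpose, Matrix.of_apply, Pi.zero_apply, zero_mul,
      Finset.sum_const_zero, neg_mul, one_mul, zero_add] at this
    have hzc : c ⬝ᵥ w = Z.transpose.mulVec c ⬝ᵥ wZ := by rw [hw, dmv]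
    rw [hzc]
    simp only [dotProduct, Matrix.mulVec, Matrix.transpose_apply, hwZ, hμ] at this ⊢
    linarith [this]
  have hval : 0 < b ⬝ᵥ u - Z.transpose.mulVec t ⬝ᵥ wZ - μ * (zbar - ε) := by
    simp only [dotProduct, Fintype.sum_sum_type, Fintype.sum_unique, hd',
      neg_mul, Finset.sum_neg_distrib] at hyd
    simp only [dotProduct, Matrix.mulVec, Matrix.transpose_apply, hu, hwZ, hμ,
      neg_mul, Finset.sum_neg_distrib]
    simp only [Matrix.mulVec, dotProduct, Matrix.transpose_apply] at hyd
    linarith [hyd]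
  have htw : Z.transpose.mulVec t ⬝ᵥ wZ = t ⬝ᵥ w := by rw [hw, dmv]
  rw [htw] at hval
  rcases eq_or_lt_of_le hμ0 with hμz | hμpos
  · -- μ = 0 : contradiction with primal feasibility
    have hbu : b ⬝ᵥ u ≤ u ⬝ᵥ A.mulVec xbar := by
      rw [dotProduct_comm]
      exact dmono hu0 hfeas1
    have h5 : u ⬝ᵥ A.mulVec xbar = w ⬝ᵥ P.mulVec xbar := by
      rw [dmv, hcol1, ← dmv]
    have h6 : wZ ⬝ᵥ Z.transpose.mulVec (P.mulVec xbar)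
        ≤ wZ ⬝ᵥ (Z.transpose.mulVec t + zbar • Z.transpose.mulVec c) := dmono hwZ0 hfeas2
    have h7 : wZ ⬝ᵥ Z.transpose.mulVec (P.mulVec xbar) = w ⬝ᵥ P.mulVec xbar := by
      rw [dotProduct_comm wZ, ← dmv, dotProduct_comm, hw]
    have h8 : wZ ⬝ᵥ (Z.transpose.mulVec t + zbar • Z.transpose.mulVec c)
        = t ⬝ᵥ w + zbar * (c ⬝ᵥ w) := by
      rw [dotProduct_add, dotProduct_smul]
      rw [dotProduct_comm _ (Z.transpose.mulVec t), htw,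
        dotProduct_comm _ (Z.transpose.mulVec c)]
      have : Z.transpose.mulVec c ⬝ᵥ wZ = c ⬝ᵥ w := by rw [hw, dmv]
      rw [this]
      simp [smul_eq_mul]
    rw [hcw, ← hμz] at h8
    simp only [mul_zero, add_zero] at h8
    rw [h7, h8] at h6
    rw [← hμz] at hval
    linarith
  · -- μ > 0 : dual feasible point with value > zbar - ε
    have hkey := hdual (μ⁻¹ • u) (μ⁻¹ • wZ)
      (smul_nonneg (inv_nonneg.mpr hμ0) hu0) (smul_nonneg (inv_nonneg.mpr hμ0) hwZ0)
      (by rw [Matrix.mulVec_smul, Matrix.mulVec_smul, Matrix.mulVec_smul, hcol1, hw])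
      (by rw [Matrix.mulVec_smul, dotProduct_smul, ← hw, hcw, smul_eq_mul,
          inv_mul_cancel₀ (ne_of_gt hμpos)])
    rw [dotProduct_smul, Matrix.mulVec_smul, dotProduct_smul, ← hw] at hkey
    simp only [smul_eq_mul] at hkey
    have : b ⬝ᵥ u - t ⬝ᵥ w ≤ μ * D := by
      have := mul_le_mul_of_nonneg_left hkey (le_of_lt hμpos)
      rw [mul_sub] at this
      field_simp at this
      linarith [this]
    nlinarith [hval, hμpos]

/-- With `S ≠ ∅`, `C = {y | Zᵀy ≥ 0} = {Yλ | λ ≥ 0}` solid pointed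
polyhedral and `C`-bounding `P[S]`, `c ∈ int C`, `t ∈ ℝ^q`: if `(x̄, z̄)` is optimal for
`P₂(t)` and `(ū, w̄)` optimal for `D₂(t)`, then (i) `𝒫 := P[S] + C ⊆ H := {y | w̄ᵀy ≥ bᵀū}`,
(ii) `s := t + z̄·c ∈ 𝒫` and `w̄ᵀs ≤ bᵀū`, and (iii) `t ∉ 𝒫 ↔ z̄ > 0`. -/
theorem stmt4 (q m n o p : ℕ)
    (A : Matrix (Fin m) (Fin n) ℝ) (P : Matrix (Fin q) (Fin n) ℝ) (b : Fin m → ℝ)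
    (Y : Matrix (Fin q) (Fin o) ℝ) (Z : Matrix (Fin q) (Fin p) ℝ)
    (C : Set (Fin q → ℝ))
    (hCZ : C = {y | 0 ≤ Z.transpose.mulVec y})
    (hCY : C = {y | ∃ l : Fin o → ℝ, 0 ≤ l ∧ y = Y.mulVec l})
    (hC_pointed : C ∩ (-C) = {0})
    (hC_solid : (interior C).Nonempty)
    (c : Fin q → ℝ) (hc : c ∈ interior C)
    (S : Set (Fin n → ℝ)) (hS : S = {x | b ≤ A.mulVec x}) (hSne : S.Nonempty)
    (hrec : {d | ∀ y ∈ (fun x => P.mulVec x) '' S, ∀ t : ℝ, 0 ≤ t →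
        y + t • d ∈ (fun x => P.mulVec x) '' S} ⊆ C)
    (t : Fin q → ℝ)
    (UpperIm : Set (Fin q → ℝ))
    (hUpperIm : UpperIm = {y | ∃ x ∈ S, ∃ cc ∈ C, y = P.mulVec x + cc})
    (xbar : Fin n → ℝ) (zbar : ℝ)
    (hxz_feas : b ≤ A.mulVec xbar ∧
      Z.transpose.mulVec (P.mulVec xbar) ≤ Z.transpose.mulVec t + zbar • Z.transpose.mulVec c)
    (hxz_opt : ∀ xz : (Fin n → ℝ) × ℝ,
      (b ≤ A.mulVec xz.1 ∧
        Z.transpose.mulVec (P.mulVec xz.1) ≤ Z.transpose.mulVec t + xz.2 • Z.transpose.mulVec c) →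
      zbar ≤ xz.2)
    (ubar : Fin m → ℝ) (wbar : Fin q → ℝ)
    (huw_feas : A.transpose.mulVec ubar = P.transpose.mulVec wbar ∧ c ⬝ᵥ wbar = 1 ∧
      0 ≤ Y.transpose.mulVec wbar ∧ 0 ≤ ubar)
    (huw_opt : ∀ uw : (Fin m → ℝ) × (Fin q → ℝ),
      (A.transpose.mulVec uw.1 = P.transpose.mulVec uw.2 ∧ c ⬝ᵥ uw.2 = 1 ∧
        0 ≤ Y.transpose.mulVec uw.2 ∧ 0 ≤ uw.1) →
      b ⬝ᵥ uw.1 - t ⬝ᵥ uw.2 ≤ b ⬝ᵥ ubar - t ⬝ᵥ wbar) :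
    UpperIm ⊆ {y | b ⬝ᵥ ubar ≤ wbar ⬝ᵥ y} ∧
    ((t + zbar • c) ∈ UpperIm ∧ wbar ⬝ᵥ (t + zbar • c) ≤ b ⬝ᵥ ubar) ∧
    (t ∉ UpperIm ↔ 0 < zbar) := by
  have hcC : c ∈ C := interior_subset hc
  have hZc : 0 ≤ Z.transpose.mulVec c := by rw [hCZ] at hcC; exact hcC
  have hxbarS : xbar ∈ S := by rw [hS]; exact hxz_feas.1
  have hwdual : ∀ cc ∈ C, 0 ≤ wbar ⬝ᵥ cc := by
    intro cc hcc
    rw [hCY] at hcc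
    obtain ⟨l, hl, rfl⟩ := hcc
    rw [dmv]
    exact dnn huw_feas.2.2.1 hl
  have part1 : UpperIm ⊆ {y | b ⬝ᵥ ubar ≤ wbar ⬝ᵥ y} := by
    rintro y hy
    rw [hUpperIm] at hy
    obtain ⟨x, hxS, cc, hcc, rfl⟩ := hy
    have hx : b ≤ A.mulVec x := by rw [hS] at hxS; exact hxS
    have e1 : wbar ⬝ᵥ (P.mulVec x + cc) = wbar ⬝ᵥ P.mulVec x + wbar ⬝ᵥ cc :=
      dotProduct_add _ _ _
    have e2 : wbar ⬝ᵥ P.mulVec x = ubar ⬝ᵥ A.mulVec x := by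
      rw [dmv, ← huw_feas.1, ← dmv]
    have e3 : b ⬝ᵥ ubar ≤ ubar ⬝ᵥ A.mulVec x := by
      rw [dotProduct_comm]; exact dmono huw_feas.2.2.2 hx
    have h4 := hwdual cc hcc
    show b ⬝ᵥ ubar ≤ wbar ⬝ᵥ (P.mulVec x + cc)
    rw [e1, e2]; linarith
  have hstrong : zbar ≤ b ⬝ᵥ ubar - t ⬝ᵥ wbar := by
    apply strongdual A b P Z c t xbar zbar hxz_feas.1 hxz_feas.2
      (fun x z h1 h2 => hxz_opt (x, z) ⟨h1, h2⟩)
    intro u wZ hu0 hwZ0 hAu hcw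
    have hYw : 0 ≤ Y.transpose.mulVec (Z.mulVec wZ) := by
      intro j
      have hcol : (fun i => Y i j) ∈ C := by
        rw [hCY]
        refine ⟨Pi.single j 1, fun k => ?_, ?_⟩
        · by_cases h : k = j <;> simp [Pi.single_apply, h]
        · rw [Matrix.mulVec_single]
          simp
          rfl
      rw [hCZ] at hcol
      have e : Y.transpose.mulVec (Z.mulVec wZ) j
          = Z.transpose.mulVec (fun i => Y i j) ⬝ᵥ wZ := by
        rw [← dmv]
        rfl
      rw [e]
      exact dnn hcol hwZ0
    exact huw_opt (u, Z.mulVec wZ) ⟨hAu, hcw, hYw, hu0⟩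
  have hsmem : (t + zbar • c) ∈ UpperIm := by
    rw [hUpperIm]
    refine ⟨xbar, hxbarS, t + zbar • c - P.mulVec xbar, ?_, by abel⟩
    rw [hCZ]
    intro k
    have h2 := hxz_feas.2 k
    rw [Matrix.mulVec_sub, Matrix.mulVec_add, Matrix.mulVec_smul]
    simp only [Pi.sub_apply, Pi.add_apply, Pi.smul_apply, smul_eq_mul, Pi.zero_apply] at *
    linarith
  have hineq : wbar ⬝ᵥ (t + zbar • c) ≤ b ⬝ᵥ ubar := by
    have e : wbar ⬝ᵥ (t + zbar • c) = wbar ⬝ᵥ t + zbar * (wbar ⬝ᵥ c) := by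
      rw [dotProduct_add, dotProduct_smul]; simp
    have e2 : wbar ⬝ᵥ c = 1 := by rw [dotProduct_comm]; exact huw_feas.2.1
    have e3 : wbar ⬝ᵥ t = t ⬝ᵥ wbar := dotProduct_comm _ _
    rw [e, e2, e3]; linarith
  refine ⟨part1, ⟨hsmem, hineq⟩, ?_, ?_⟩
  · intro htn
    by_contra hz
    push_neg at hz
    apply htn
    rw [hUpperIm]
    refine ⟨xbar, hxbarS, t - P.mulVec xbar, ?_, by abel⟩
    rw [hCZ]
    intro k
    have h2 := hxz_feas.2 k
    have h3 := hZc k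
    rw [Matrix.mulVec_sub]
    simp only [Pi.sub_apply, Pi.add_apply, Pi.smul_apply, smul_eq_mul, Pi.zero_apply] at *
    nlinarith
  · intro hz htmem
    rw [hUpperIm] at htmem
    obtain ⟨x, hxS, cc, hcc, heq⟩ := htmem
    have hx : b ≤ A.mulVec x := by rw [hS] at hxS; exact hxS
    rw [hCZ] at hcc
    have hfeas0 : Z.transpose.mulVec (P.mulVec x)
        ≤ Z.transpose.mulVec t + (0 : ℝ) • Z.transpose.mulVec c := by
      intro k
      have h4 := hcc k
      have hPx : P.mulVec x = t - cc := by rw [heq]; abel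
      rw [hPx, Matrix.mulVec_sub]
      simp only [Pi.sub_apply, Pi.add_apply, Pi.smul_apply, smul_eq_mul, Pi.zero_apply,
        zero_mul, add_zero] at *
      linarith
    have h5 : zbar ≤ (0 : ℝ) := hxz_opt (x, 0) ⟨hx, hfeas0⟩
    linarith
end

section
/- (Weak duality for vector linear programs.) For every y ∈ 𝒫 and every y* ∈ 𝒟*, one has φ(y, y*) ≥ 0, where φ(y, y*) := Σ_{i=1}^{q−1} y_i y*_i + y_q (1 − Σ_{i=1}^{q−1} c_i y*_i) − y*_q. -/
open Matrix

/-- **weak duality for VLP.**  Ambient space `ℝ^{q+1}` (the paper's `ℝ^q`,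
with the first `q` coordinates playing the role of indices `1, …, q−1` and `Fin.last q`
the role of index `q`).  For every `y` in the upper image and every `y*` in the lower
image, `φ(y, y*) ≥ 0`. -/
theorem stmt5 (q m n o p : ℕ)
    (A : Matrix (Fin m) (Fin n) ℝ) (P : Matrix (Fin (q + 1)) (Fin n) ℝ) (b : Fin m → ℝ)
    (Y : Matrix (Fin (q + 1)) (Fin o) ℝ) (Z : Matrix (Fin (q + 1)) (Fin p) ℝ)
    (C : Set (Fin (q + 1) → ℝ))
    (hCZ : C = {y | 0 ≤ Z.transpose.mulVec y})
    (hCY : C = {y | ∃ l : Fin o → ℝ, 0 ≤ l ∧ y = Y.mulVec l})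
    (hC_pointed : C ∩ (-C) = {0})
    (hC_solid : (interior C).Nonempty)
    (c : Fin (q + 1) → ℝ) (hc : c ∈ interior C) (hcq : c (Fin.last q) = 1)
    (S : Set (Fin n → ℝ)) (hS : S = {x | b ≤ A.mulVec x})
    (UpperIm : Set (Fin (q + 1) → ℝ))
    (hUpperIm : UpperIm = {y | ∃ x ∈ S, ∃ cc ∈ C, y = P.mulVec x + cc})
    (T : Set ((Fin m → ℝ) × (Fin (q + 1) → ℝ)))
    (hT : T = {uw | 0 ≤ uw.1 ∧ A.transpose.mulVec uw.1 = P.transpose.mulVec uw.2 ∧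
      c ⬝ᵥ uw.2 = 1 ∧ 0 ≤ Y.transpose.mulVec uw.2})
    (LowerIm : Set (Fin (q + 1) → ℝ))
    (hLowerIm : LowerIm = {ys | ∃ uw ∈ T, ∃ k : ℝ, 0 ≤ k ∧
      ys = Function.update uw.2 (Fin.last q) (b ⬝ᵥ uw.1) - k • (Pi.single (Fin.last q) 1 : Fin (q + 1) → ℝ)})
    (φ : (Fin (q + 1) → ℝ) → (Fin (q + 1) → ℝ) → ℝ)
    (hφ : ∀ y ys, φ y ys = (∑ i : Fin q, y i.castSucc * ys i.castSucc) +
      y (Fin.last q) * (1 - ∑ i : Fin q, c i.castSucc * ys i.castSucc) - ys (Fin.last q)) :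
    ∀ y ∈ UpperIm, ∀ ys ∈ LowerIm, 0 ≤ φ y ys := by
  intro y hy ys hys
  subst hUpperIm hLowerIm hT hS hCY
  obtain ⟨x, hx, cc, ⟨l, hl, rfl⟩, rfl⟩ := hy
  obtain ⟨⟨u, w⟩, ⟨hu, hAu, hcw, hYw⟩, k, hk, rfl⟩ := hys
  rw [hφ]
  set y : Fin (q + 1) → ℝ := P.mulVec x + Y.mulVec l with hy
  have hcast : ∀ i : Fin q,
      (Function.update w (Fin.last q) (b ⬝ᵥ u) -
        k • (Pi.single (Fin.last q) 1 : Fin (q + 1) → ℝ)) i.castSucc = w i.castSucc := by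
    intro i
    have hne : i.castSucc ≠ Fin.last q := (Fin.castSucc_lt_last i).ne
    simp [Function.update_of_ne hne, Pi.single_eq_of_ne hne]
  have hlast : (Function.update w (Fin.last q) (b ⬝ᵥ u) -
      k • (Pi.single (Fin.last q) 1 : Fin (q + 1) → ℝ)) (Fin.last q) = b ⬝ᵥ u - k := by
    simp
  simp only [hcast, hlast]
  -- from c ⬝ᵥ w = 1 and c last = 1:
  have hsplit : (∑ i : Fin q, c i.castSucc * w i.castSucc) + w (Fin.last q) = 1 := by
    have := hcw
    simp only [dotProduct] at this
    rw [Fin.sum_univ_castSucc] at this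
    rw [hcq, one_mul] at this
    exact this
  have h1 : 1 - ∑ i : Fin q, c i.castSucc * w i.castSucc = w (Fin.last q) := by
    linarith
  rw [h1]
  have hdot : (∑ i : Fin q, y i.castSucc * w i.castSucc) + y (Fin.last q) * w (Fin.last q)
      = y ⬝ᵥ w := by
    simp only [dotProduct]
    rw [Fin.sum_univ_castSucc]
  have hPw : P.mulVec x ⬝ᵥ w = u ⬝ᵥ A.mulVec x := by
    calc P.mulVec x ⬝ᵥ w = w ⬝ᵥ P.mulVec x := dotProduct_comm _ _
    _ = P.vecMul w ⬝ᵥ x := dotProduct_mulVec _ _ _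
    _ = P.transpose.mulVec w ⬝ᵥ x := by rw [mulVec_transpose]
    _ = A.transpose.mulVec u ⬝ᵥ x := by rw [hAu]
    _ = A.vecMul u ⬝ᵥ x := by rw [mulVec_transpose]
    _ = u ⬝ᵥ A.mulVec x := (dotProduct_mulVec _ _ _).symm
  have hYwl : 0 ≤ Y.mulVec l ⬝ᵥ w := by
    have : Y.mulVec l ⬝ᵥ w = l ⬝ᵥ Y.transpose.mulVec w := by
      calc Y.mulVec l ⬝ᵥ w = w ⬝ᵥ Y.mulVec l := dotProduct_comm _ _
      _ = Y.vecMul w ⬝ᵥ l := dotProduct_mulVec _ _ _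
      _ = Y.transpose.mulVec w ⬝ᵥ l := by rw [mulVec_transpose]
      _ = l ⬝ᵥ Y.transpose.mulVec w := dotProduct_comm _ _
    rw [this]
    exact Finset.sum_nonneg fun i _ => mul_nonneg (hl i) (hYw i)
  have hbu : b ⬝ᵥ u ≤ u ⬝ᵥ A.mulVec x := by
    rw [dotProduct_comm]
    exact Finset.sum_le_sum fun i _ => mul_le_mul_of_nonneg_left (hx i) (hu i)
  have hyw : b ⬝ᵥ u ≤ y ⬝ᵥ w := by
    rw [hy, add_dotProduct, hPw]
    linarith
  rw [hdot]
  linarith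
end

section
/- (Strong duality for vector linear programs.) Assume S ≠ ∅ and T ≠ ∅. Then: (i) if y ∈ ℝ^q satisfies φ(y, y*) ≥ 0 for all y* ∈ 𝒟*, then y ∈ 𝒫; (ii) if y* ∈ ℝ^q satisfies φ(y, y*) ≥ 0 for all y ∈ 𝒫, then y* ∈ 𝒟*. -/
open Matrix

private lemma nonneg_aux {a β r : ℝ} (h : ∀ t : ℝ, 0 ≤ t → β ≤ a + t * r) : 0 ≤ r := by
  by_contra hr
  push_neg at hr
  have h0 := h 0 le_rfl
  rw [zero_mul, add_zero] at h0
  have hden : 0 < -r := by linarith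
  have ht : (0:ℝ) ≤ (a - β + 1) / (-r) := div_nonneg (by linarith) hden.le
  have h2 := h _ ht
  have heq : a + (a - β + 1) / (-r) * r = β - 1 := by
    rw [div_mul_eq_mul_div, div_neg, mul_div_assoc, div_self hr.ne]
    ring
  rw [heq] at h2
  linarith

/-- Conic Carathéodory. -/
private lemma cara {ι κ : Type*} [Fintype ι] [DecidableEq ι] [Fintype κ]
    (v : ι → κ → ℝ) (x : κ → ℝ) (l : ι → ℝ) (hl : 0 ≤ l) (hx : x = ∑ i, l i • v i) :
    ∃ m : ι → ℝ, 0 ≤ m ∧ x = ∑ i, m i • v i ∧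
      LinearIndependent ℝ (fun i : {i // m i ≠ 0} => v i) := by
  classical
  generalize hN : (Finset.univ.filter fun i => l i ≠ 0).card = N
  induction N using Nat.strong_induction_on generalizing l with
  | _ N ih =>
    by_cases hind : LinearIndependent ℝ (fun i : {i // l i ≠ 0} => v i)
    · exact ⟨l, hl, hx, hind⟩
    · obtain ⟨g, hg0, i0, hgi0⟩ := Fintype.not_linearIndependent_iff.mp hind
      set G0 : ι → ℝ := fun i => if h : l i ≠ 0 then g ⟨i, h⟩ else 0 with hG0def
      have hG0sum : ∑ i, G0 i • v i = 0 := by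
        rw [← Finset.sum_filter_add_sum_filter_not Finset.univ (fun i => l i ≠ 0)]
        have h1 : ∑ i ∈ Finset.univ.filter (fun i => l i ≠ 0), G0 i • v i
            = ∑ i : {i // l i ≠ 0}, g i • v i := by
          rw [Finset.sum_subtype (p := fun i => l i ≠ 0) _ (by simp) (fun i => G0 i • v i)]
          apply Finset.sum_congr rfl
          rintro ⟨i, hi⟩ _
          simp [hG0def, hi]
        have h2 : ∑ i ∈ Finset.univ.filter (fun i => ¬ l i ≠ 0), G0 i • v i = 0 := by
          apply Finset.sum_eq_zero
          intro i hi
          simp only [Finset.mem_filter] at hi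
          simp [hG0def, hi.2]
        rw [h1, h2, hg0, add_zero]
      have hG0supp : ∀ i, l i = 0 → G0 i = 0 := by
        intro i hi; simp [hG0def, hi]
      have hG0ne : G0 (i0 : ι) ≠ 0 := by
        simpa [hG0def, i0.2] using hgi0
      -- key step, for G with a positive entry
      have key : ∀ G : ι → ℝ, (∑ i, G i • v i = 0) → (∀ i, l i = 0 → G i = 0) →
          (∃ i, 0 < G i) → ∃ m : ι → ℝ, 0 ≤ m ∧ x = ∑ i, m i • v i ∧
            LinearIndependent ℝ (fun i : {i // m i ≠ 0} => v i) := by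
        intro G hGsum hGsupp ⟨j, hj⟩
        set pos := Finset.univ.filter (fun i => 0 < G i) with hposdef
        have hpos : pos.Nonempty := ⟨j, by simp [hposdef, hj]⟩
        set t := pos.inf' hpos (fun i => l i / G i) with htdef
        have ht0 : 0 ≤ t := by
          apply Finset.le_inf'
          intro i hi
          simp only [hposdef, Finset.mem_filter] at hi
          exact div_nonneg (hl i) hi.2.le
        obtain ⟨i1, hi1mem, hi1⟩ := Finset.exists_mem_eq_inf' hpos (fun i => l i / G i)
        simp only [hposdef, Finset.mem_filter] at hi1mem
        set l' : ι → ℝ := fun i => l i - t * G i with hl'def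
        have hl'0 : 0 ≤ l' := by
          intro i
          by_cases hGi : 0 < G i
          · have : t ≤ l i / G i := Finset.inf'_le _ (by simp [hposdef, hGi])
            have := (le_div_iff₀ hGi).mp this
            simp only [hl'def, Pi.zero_apply]; linarith
          · push_neg at hGi
            have : t * G i ≤ 0 := mul_nonpos_of_nonneg_of_nonpos ht0 hGi
            have := hl i
            simp only [hl'def, Pi.zero_apply] at *; linarith
        have hl'sum : x = ∑ i, l' i • v i := by
          simp only [hl'def, sub_smul, Finset.sum_sub_distrib]
          have h2 : ∑ i, (t * G i) • v i = t • ∑ i, G i • v i := by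
            rw [Finset.smul_sum]
            exact Finset.sum_congr rfl (fun i _ => (smul_smul t (G i) (v i)).symm)
          rw [h2, hGsum, smul_zero, sub_zero, hx]
        have hl'supp : ∀ i, l i = 0 → l' i = 0 := by
          intro i hi
          simp [hl'def, hi, hGsupp i hi]
        have hl'i1 : l' i1 = 0 := by
          have hGne : G i1 ≠ 0 := ne_of_gt hi1mem.2
          show l i1 - t * G i1 = 0
          rw [htdef, hi1, div_mul_cancel₀ _ hGne, sub_self]
        have hli1 : l i1 ≠ 0 := by
          intro h
          have := hGsupp i1 h
          rw [this] at hi1mem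
          exact lt_irrefl 0 hi1mem.2
        have hsub : (Finset.univ.filter fun i => l' i ≠ 0) ⊂ (Finset.univ.filter fun i => l i ≠ 0) := by
          constructor
          · intro i hi
            simp only [Finset.mem_filter, Finset.mem_univ, true_and] at *
            intro h; exact hi (hl'supp i h)
          · intro h
            have := h (by simp [hli1] : i1 ∈ Finset.univ.filter fun i => l i ≠ 0)
            simp only [Finset.mem_filter] at this
            exact this.2 hl'i1
        have hcard : (Finset.univ.filter fun i => l' i ≠ 0).card < N := by
          rw [← hN]; exact Finset.card_lt_card hsub
        exact ih _ hcard l' hl'0 hl'sum rfl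
      by_cases hGpos : ∃ i, 0 < G0 i
      · exact key G0 hG0sum hG0supp hGpos
      · push_neg at hGpos
        apply key (-G0)
        · simp only [Pi.neg_apply, neg_smul, Finset.sum_neg_distrib, hG0sum, neg_zero]
        · intro i hi; simp [hG0supp i hi]
        · refine ⟨i0, ?_⟩
          have := hGpos i0
          simp only [Pi.neg_apply]
          rcases lt_or_eq_of_le this with h | h
          · linarith
          · exact absurd h hG0ne

private noncomputable def coneMap {ι κ : Type*} [Fintype ι] [Fintype κ]
    (v : ι → κ → ℝ) (s : Finset ι) : ((i : {i // i ∈ s}) → ℝ) →ₗ[ℝ] (κ → ℝ) where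
  toFun := fun l => ∑ i : {i // i ∈ s}, l i • v ↑i
  map_add' := by intro a b; simp [add_smul, Finset.sum_add_distrib]
  map_smul' := by intro c a; simp [Finset.smul_sum, mul_smul]

private lemma cone_isClosed {ι κ : Type*} [Fintype ι] [DecidableEq ι] [Fintype κ]
    (v : ι → κ → ℝ)
    (cara : ∀ (x : κ → ℝ) (l : ι → ℝ), 0 ≤ l → x = ∑ i, l i • v i →
      ∃ m : ι → ℝ, 0 ≤ m ∧ x = ∑ i, m i • v i ∧
        LinearIndependent ℝ (fun i : {i // m i ≠ 0} => v i)) :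
    IsClosed {x : κ → ℝ | ∃ l : ι → ℝ, 0 ≤ l ∧ x = ∑ i, l i • v i} := by
  classical
  have hset : {x : κ → ℝ | ∃ l : ι → ℝ, 0 ≤ l ∧ x = ∑ i, l i • v i} =
      ⋃ s : Finset ι, (if LinearIndependent ℝ (fun i : {i // i ∈ s} => v i)
        then coneMap v s '' Set.Ici 0 else ∅) := by
    ext x
    simp only [Set.mem_iUnion, Set.mem_setOf_eq]
    constructor
    · rintro ⟨l, hl, hx⟩
      obtain ⟨m, hm, hxm, hind⟩ := cara x l hl hx
      set s := Finset.univ.filter (fun i => m i ≠ 0) with hs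
      have hindS : LinearIndependent ℝ (fun i : {i // i ∈ s} => v i) := by
        let e : {i // i ∈ s} ≃ {i // m i ≠ 0} := Equiv.subtypeEquivRight (by simp [hs])
        have hfe : ((fun i : {i // m i ≠ 0} => v ↑i) ∘ ⇑e) = (fun i : {i // i ∈ s} => v ↑i) := by
          funext i; rfl
        exact hfe ▸ hind.comp e e.injective
      refine ⟨s, ?_⟩
      rw [if_pos hindS]
      refine ⟨fun i => m ↑i, fun i => hm ↑i, ?_⟩
      show ∑ i : {i // i ∈ s}, m ↑i • v ↑i = x
      rw [← Finset.sum_subtype (p := fun i => i ∈ s) s (fun i => Iff.rfl) (fun i => m i • v i)]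
      rw [hxm]
      apply Finset.sum_subset (Finset.subset_univ s)
      intro i _ hi
      simp only [hs, Finset.mem_filter, Finset.mem_univ, true_and, not_not] at hi
      simp [hi]
    · rintro ⟨s, hx⟩
      by_cases hind : LinearIndependent ℝ (fun i : {i // i ∈ s} => v i)
      · rw [if_pos hind] at hx
        obtain ⟨l, hl, hx⟩ := hx
        refine ⟨fun i => if h : i ∈ s then l ⟨i, h⟩ else 0, ?_, ?_⟩
        · intro i
          by_cases h : i ∈ s <;> simp [h]
          exact hl ⟨i, h⟩
        · rw [← hx]
          show (∑ i : {i // i ∈ s}, l i • v ↑i) = _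
          set F : ι → κ → ℝ := fun j => (if h : j ∈ s then l ⟨j, h⟩ else 0) • v j with hF
          have h1 : ∀ i : {i // i ∈ s}, l i • v ↑i = F ↑i := by
            rintro ⟨i, hi⟩; simp [hF, hi]
          rw [Finset.sum_congr rfl (fun i _ => h1 i),
            ← Finset.sum_subtype (p := fun i => i ∈ s) s (fun i => Iff.rfl) F]
          apply Finset.sum_subset (Finset.subset_univ s)
          intro i _ hi
          simp [hF, hi]
      · rw [if_neg hind] at hx
        exact absurd hx (Set.notMem_empty x)
  rw [hset]
  apply isClosed_iUnion_of_finite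
  intro s
  by_cases hind : LinearIndependent ℝ (fun i : {i // i ∈ s} => v i)
  · rw [if_pos hind]
    have hinj : Function.Injective (coneMap v s) := by
      rw [injective_iff_map_eq_zero]
      intro a ha
      have := Fintype.linearIndependent_iff.mp hind a ha
      funext i
      exact this i
    exact ((coneMap v s).isClosedEmbedding_of_injective (LinearMap.ker_eq_bot.mpr hinj)).isClosedMap _ isClosed_Ici
  · rw [if_neg hind]
    exact isClosed_empty

private lemma farkas_s6 {ι κ : Type*} [Fintype ι] [DecidableEq ι] [Fintype κ] [DecidableEq κ]
    (v : ι → κ → ℝ) (d : κ → ℝ)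
    (hclosed : IsClosed {x : κ → ℝ | ∃ l : ι → ℝ, 0 ≤ l ∧ x = ∑ i, l i • v i})
    (h : ∀ x : κ → ℝ, (∀ i, 0 ≤ v i ⬝ᵥ x) → 0 ≤ d ⬝ᵥ x) :
    ∃ l : ι → ℝ, 0 ≤ l ∧ d = ∑ i, l i • v i := by
  classical
  by_contra hcon
  set cone := {x : κ → ℝ | ∃ l : ι → ℝ, 0 ≤ l ∧ x = ∑ i, l i • v i} with hcone
  have hd : d ∉ cone := fun ⟨l, hl, hx⟩ => hcon ⟨l, hl, hx⟩
  have hconv : Convex ℝ cone := by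
    rintro x ⟨lx, hlx, hlx2⟩ y ⟨ly, hly, hly2⟩ a b ha hb hab
    refine ⟨fun i => a * lx i + b * ly i, ?_, ?_⟩
    · intro i
      exact add_nonneg (mul_nonneg ha (hlx i)) (mul_nonneg hb (hly i))
    · rw [hlx2, hly2]
      simp [Finset.smul_sum, Finset.sum_add_distrib, add_smul, mul_smul]
  obtain ⟨f, u, hfs, hfd⟩ := geometric_hahn_banach_closed_point hconv hclosed hd
  have h0 : (0 : κ → ℝ) ∈ cone := ⟨0, le_rfl, by simp⟩
  have hu : 0 < u := by simpa using hfs 0 h0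
  have hnonpos : ∀ x ∈ cone, f x ≤ 0 := by
    intro x hx
    by_contra hpos
    push_neg at hpos
    obtain ⟨l, hl, hxl⟩ := hx
    have hmem : ∀ t : ℝ, 0 ≤ t → t • x ∈ cone := by
      intro t ht
      refine ⟨t • l, fun i => mul_nonneg ht (hl i), ?_⟩
      rw [hxl, Finset.smul_sum]
      exact Finset.sum_congr rfl fun i _ => by simp [mul_smul]
    have hlt : f (((u + 1) / f x) • x) < u := hfs _ (hmem _ (by positivity))
    rw [_root_.map_smul, smul_eq_mul, div_mul_cancel₀ _ (ne_of_gt hpos)] at hlt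
    linarith
  set g : κ → ℝ := fun j => f (Pi.single j 1) with hg
  have hfg : ∀ x : κ → ℝ, f x = x ⬝ᵥ g := by
    intro x
    have hx : x = ∑ j, x j • (Pi.single j 1 : κ → ℝ) := by
      conv_lhs => rw [← Finset.univ_sum_single x]
      exact Finset.sum_congr rfl fun j _ => by rw [← Pi.single_smul, smul_eq_mul, mul_one]
    conv_lhs => rw [hx]
    rw [map_sum]
    simp only [_root_.map_smul, smul_eq_mul]
    rfl
  have hvg : ∀ i, v i ⬝ᵥ (-g) ≥ 0 := by
    intro i
    have hvc : v i ∈ cone := by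
      refine ⟨fun i' => if i' = i then 1 else 0, fun i' => by positivity, ?_⟩
      rw [Finset.sum_congr rfl (fun i' _ => by rw [ite_smul, one_smul, zero_smul]),
        Finset.sum_ite_eq' Finset.univ i v]
      simp
    have := hnonpos _ hvc
    rw [hfg] at this
    rw [dotProduct_neg]
    linarith
  have hdg := h (-g) hvg
  rw [dotProduct_neg, ← hfg] at hdg
  linarith

private lemma farkas' {ι κ : Type*} [Fintype ι] [Fintype κ] [DecidableEq κ]
    (v : ι → κ → ℝ) (d : κ → ℝ)
    (h : ∀ x : κ → ℝ, (∀ i, 0 ≤ v i ⬝ᵥ x) → 0 ≤ d ⬝ᵥ x) :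
    ∃ l : ι → ℝ, 0 ≤ l ∧ d = ∑ i, l i • v i := by
  classical
  exact farkas_s6 v d (cone_isClosed v (fun x l hl hx => cara v x l hl hx)) h

private lemma dot_mulVec_comm {ι κ : Type*} [Fintype ι] [Fintype κ]
    (M : Matrix ι κ ℝ) (w : ι → ℝ) (x : κ → ℝ) :
    w ⬝ᵥ M.mulVec x = M.transpose.mulVec w ⬝ᵥ x := by
  rw [Matrix.dotProduct_mulVec, Matrix.mulVec_transpose]


/-- **strong duality for VLP.**  Ambient space `ℝ^{q+1}` (the paper's `ℝ^q`).
If `S ≠ ∅` and `T ≠ ∅`, then (i) any `y` with `φ(y, y*) ≥ 0` for all `y*` in the lower image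
lies in the upper image, and (ii) any `y*` with `φ(y, y*) ≥ 0` for all `y` in the upper image
lies in the lower image. -/
theorem stmt6 (q m n o p : ℕ)
    (A : Matrix (Fin m) (Fin n) ℝ) (P : Matrix (Fin (q + 1)) (Fin n) ℝ) (b : Fin m → ℝ)
    (Y : Matrix (Fin (q + 1)) (Fin o) ℝ) (Z : Matrix (Fin (q + 1)) (Fin p) ℝ)
    (C : Set (Fin (q + 1) → ℝ))
    (hCZ : C = {y | 0 ≤ Z.transpose.mulVec y})
    (hCY : C = {y | ∃ l : Fin o → ℝ, 0 ≤ l ∧ y = Y.mulVec l})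
    (hC_pointed : C ∩ (-C) = {0})
    (hC_solid : (interior C).Nonempty)
    (c : Fin (q + 1) → ℝ) (hc : c ∈ interior C) (hcq : c (Fin.last q) = 1)
    (S : Set (Fin n → ℝ)) (hS : S = {x | b ≤ A.mulVec x}) (hSne : S.Nonempty)
    (UpperIm : Set (Fin (q + 1) → ℝ))
    (hUpperIm : UpperIm = {y | ∃ x ∈ S, ∃ cc ∈ C, y = P.mulVec x + cc})
    (T : Set ((Fin m → ℝ) × (Fin (q + 1) → ℝ)))
    (hT : T = {uw | 0 ≤ uw.1 ∧ A.transpose.mulVec uw.1 = P.transpose.mulVec uw.2 ∧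
      c ⬝ᵥ uw.2 = 1 ∧ 0 ≤ Y.transpose.mulVec uw.2})
    (hTne : T.Nonempty)
    (LowerIm : Set (Fin (q + 1) → ℝ))
    (hLowerIm : LowerIm = {ys | ∃ uw ∈ T, ∃ k : ℝ, 0 ≤ k ∧
      ys = Function.update uw.2 (Fin.last q) (b ⬝ᵥ uw.1) - k • (Pi.single (Fin.last q) 1 : Fin (q + 1) → ℝ)})
    (φ : (Fin (q + 1) → ℝ) → (Fin (q + 1) → ℝ) → ℝ)
    (hφ : ∀ y ys, φ y ys = (∑ i : Fin q, y i.castSucc * ys i.castSucc) +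
      y (Fin.last q) * (1 - ∑ i : Fin q, c i.castSucc * ys i.castSucc) - ys (Fin.last q)) :
    (∀ y : Fin (q + 1) → ℝ, (∀ ys ∈ LowerIm, 0 ≤ φ y ys) → y ∈ UpperIm) ∧
    (∀ ys : Fin (q + 1) → ℝ, (∀ y ∈ UpperIm, 0 ≤ φ y ys) → ys ∈ LowerIm) := by
  classical
  -- basic facts about C
  have hC0 : (0 : Fin (q+1) → ℝ) ∈ C := by
    rw [hCY]; exact ⟨0, le_rfl, by simp⟩
  have hCsmul : ∀ z ∈ C, ∀ t : ℝ, 0 ≤ t → t • z ∈ C := by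
    intro z hz t ht
    rw [hCY] at hz ⊢
    obtain ⟨l, hl, hzl⟩ := hz
    exact ⟨t • l, fun i => mul_nonneg ht (hl i), by rw [hzl, Matrix.mulVec_smul]⟩
  have hcol : ∀ jo : Fin o, (fun iq => Y iq jo) ∈ C := by
    intro jo
    rw [hCY]
    refine ⟨Pi.single jo 1, fun i => ?_, ?_⟩
    · by_cases h : i = jo <;> simp [Pi.single_apply, h]
    · funext iq
      simp [Matrix.mulVec, dotProduct, Pi.single_apply, mul_ite, Finset.sum_ite_eq']
  have hdotC : ∀ (w : Fin (q+1) → ℝ), 0 ≤ Y.transpose.mulVec w → ∀ z ∈ C, 0 ≤ w ⬝ᵥ z := by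
    intro w hYw z hz
    rw [hCY] at hz
    obtain ⟨l, hl, hzl⟩ := hz
    rw [hzl, dot_mulVec_comm Y w l]
    exact Finset.sum_nonneg fun i _ => mul_nonneg (hYw i) (hl i)
  have hKc : ∀ w : Fin (q+1) → ℝ, 0 ≤ Y.transpose.mulVec w → w ≠ 0 → 0 < c ⬝ᵥ w := by
    intro w hYw hw
    obtain ⟨ε, hε, hball⟩ := Metric.mem_nhds_iff.mp (mem_interior_iff_mem_nhds.mp hc)
    have hwn : 0 < ‖w‖ := norm_pos_iff.mpr hw
    set r := ε / 2 / ‖w‖ with hr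
    have hrpos : 0 < r := by positivity
    have hz : c - r • w ∈ C := by
      apply hball
      simp only [Metric.mem_ball, dist_eq_norm, sub_sub_cancel_left, norm_neg, norm_smul,
        Real.norm_eq_abs, abs_of_pos hrpos]
      rw [hr, div_mul_cancel₀ _ (ne_of_gt hwn)]
      linarith
    have h1 : 0 ≤ w ⬝ᵥ (c - r • w) := hdotC w hYw _ hz
    have h2 : w ⬝ᵥ (c - r • w) = w ⬝ᵥ c - r * (w ⬝ᵥ w) := by
      simp [dotProduct_sub, dotProduct_smul, smul_eq_mul]
    have hww : 0 < w ⬝ᵥ w := by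
      have hnn : 0 ≤ w ⬝ᵥ w := Finset.sum_nonneg fun i _ => mul_self_nonneg (w i)
      rcases hnn.lt_or_eq with h | h
      · exact h
      · exact absurd ((dotProduct_self_eq_zero).mp h.symm) hw
    rw [dotProduct_comm]
    nlinarith
  constructor
  · -- part (i)
    intro y hy
    have hkey : ∀ uw ∈ T, b ⬝ᵥ uw.1 ≤ uw.2 ⬝ᵥ y := by
      intro uw huw
      have hys : Function.update uw.2 (Fin.last q) (b ⬝ᵥ uw.1) ∈ LowerIm := by
        rw [hLowerIm]
        exact ⟨uw, huw, 0, le_rfl, by simp⟩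
      have h0 := hy _ hys
      rw [hφ] at h0
      rw [hT] at huw
      obtain ⟨-, -, hcw, -⟩ := huw
      rw [dotProduct, Fin.sum_univ_castSucc, hcq, one_mul] at hcw
      have hupne : ∀ i : Fin q, Function.update uw.2 (Fin.last q) (b ⬝ᵥ uw.1) i.castSucc
          = uw.2 i.castSucc := fun i => Function.update_of_ne (Fin.castSucc_lt_last i).ne _ _
      simp only [hupne, Function.update_self] at h0
      have hdot : uw.2 ⬝ᵥ y = (∑ i : Fin q, y i.castSucc * uw.2 i.castSucc)
          + y (Fin.last q) * uw.2 (Fin.last q) := by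
        rw [dotProduct, Fin.sum_univ_castSucc]
        congr 1
        · exact Finset.sum_congr rfl fun i _ => mul_comm _ _
        · exact mul_comm _ _
      have hsum : (1 : ℝ) - ∑ i : Fin q, c i.castSucc * uw.2 i.castSucc = uw.2 (Fin.last q) := by
        linarith
      rw [hsum] at h0
      rw [hdot]
      linarith
    by_contra hny
    rw [hUpperIm, Set.mem_setOf_eq] at hny
    push_neg at hny
    have hns : ∀ x : Fin n → ℝ, b ≤ A.mulVec x → ¬ (0 ≤ Z.transpose.mulVec (y - P.mulVec x)) := by
      intro x hx hZ
      have hyC : y - P.mulVec x ∈ C := by rw [hCZ]; exact hZ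
      exact hny x (by rw [hS]; exact hx) _ hyC (by abel)
    have hZP : ∀ (xx : Fin n → ℝ) (jp : Fin p), Z.transpose.mulVec (P.mulVec xx) jp
        = ∑ j, (∑ iq, Z iq jp * P iq j) * xx j := by
      intro xx jp
      simp only [Matrix.mulVec, dotProduct, Matrix.transpose_apply, Finset.mul_sum,
        Finset.sum_mul]
      rw [Finset.sum_comm]
      exact Finset.sum_congr rfl fun j _ => Finset.sum_congr rfl fun iq _ => by ring
    set V : (Fin m ⊕ (Fin p ⊕ Unit)) → (Fin n ⊕ Unit) → ℝ :=
      Sum.elim (fun i => Sum.elim (fun j => A i j) (fun _ => -b i))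
        (Sum.elim
          (fun jp => Sum.elim (fun j => -(∑ iq, Z iq jp * P iq j))
            (fun _ => Z.transpose.mulVec y jp))
          (fun _ => Sum.elim (fun _ => (0:ℝ)) (fun _ => 1))) with hV
    set D : (Fin n ⊕ Unit) → ℝ := Sum.elim (fun _ => 0) (fun _ => -1) with hD
    have hfar : ∀ xt : (Fin n ⊕ Unit) → ℝ, (∀ i, 0 ≤ V i ⬝ᵥ xt) → 0 ≤ D ⬝ᵥ xt := by
      intro xt hxt
      set x : Fin n → ℝ := fun j => xt (Sum.inl j) with hxdef
      set t : ℝ := xt (Sum.inr ()) with htdef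
      have hdots : ∀ f : (Fin n ⊕ Unit) → ℝ, f ⬝ᵥ xt
          = (∑ j, f (Sum.inl j) * x j) + f (Sum.inr ()) * t := by
        intro f
        rw [dotProduct, Fintype.sum_sum_type]
        simp [hxdef, htdef]
      have h1 : ∀ i : Fin m, b i * t ≤ A.mulVec x i := by
        intro i
        have hh := hxt (Sum.inl i)
        rw [hdots] at hh
        simp only [hV, Sum.elim_inl, Sum.elim_inr] at hh
        simp only [Matrix.mulVec, dotProduct]
        linarith
      have h2 : 0 ≤ t := by
        have hh := hxt (Sum.inr (Sum.inr ()))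
        rw [hdots] at hh
        simp only [hV, Sum.elim_inl, Sum.elim_inr] at hh
        simpa using hh
      have h3 : ∀ jp : Fin p, (∑ j, (∑ iq, Z iq jp * P iq j) * x j)
          ≤ Z.transpose.mulVec y jp * t := by
        intro jp
        have hh := hxt (Sum.inr (Sum.inl jp))
        rw [hdots] at hh
        simp only [hV, Sum.elim_inl, Sum.elim_inr] at hh
        rw [show (∑ j, -(∑ iq, Z iq jp * P iq j) * x j)
            = -(∑ j, (∑ iq, Z iq jp * P iq j) * x j) by simp [neg_mul]] at hh
        linarith
      have h4 : t ≤ 0 := by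
        by_contra h4
        push_neg at h4
        refine hns (t⁻¹ • x) ?_ ?_
        · intro i
          have := mul_le_mul_of_nonneg_left (h1 i) (inv_nonneg.mpr h4.le)
          rw [Matrix.mulVec_smul]
          have hbi : t⁻¹ * (b i * t) = b i := by field_simp
          rw [hbi] at this
          simpa using this
        · intro jp
          rw [Matrix.mulVec_sub, Matrix.mulVec_smul, Matrix.mulVec_smul]
          have hle := mul_le_mul_of_nonneg_left (h3 jp) (inv_nonneg.mpr h4.le)
          have hZy : t⁻¹ * (Z.transpose.mulVec y jp * t) = Z.transpose.mulVec y jp := by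
            field_simp
          rw [hZy] at hle
          have : (Z.transpose.mulVec y - t⁻¹ • Z.transpose.mulVec (P.mulVec x)) jp
              = Z.transpose.mulVec y jp - t⁻¹ * Z.transpose.mulVec (P.mulVec x) jp := by
            simp
          rw [this, hZP]
          simpa using hle
      rw [hdots]
      simp only [hD, Sum.elim_inl, Sum.elim_inr]
      simp only [zero_mul, Finset.sum_const_zero, zero_add, neg_mul, one_mul]
      linarith
    obtain ⟨l, hl, hlD⟩ := farkas' V D hfar
    set u : Fin m → ℝ := fun i => l (Sum.inl i) with hu
    set vv : Fin p → ℝ := fun jp => l (Sum.inr (Sum.inl jp)) with hvvdef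
    set w : Fin (q+1) → ℝ := Z.mulVec vv with hwdef
    have hcoord : ∀ k, D k = (∑ i, u i * V (Sum.inl i) k)
        + ((∑ jp, vv jp * V (Sum.inr (Sum.inl jp)) k)
          + l (Sum.inr (Sum.inr ())) * V (Sum.inr (Sum.inr ())) k) := by
      intro k
      conv_lhs => rw [hlD]
      rw [Finset.sum_apply]
      rw [Fintype.sum_sum_type, Fintype.sum_sum_type]
      simp [Pi.smul_apply, smul_eq_mul]
      rfl
    have heq1 : A.transpose.mulVec u = P.transpose.mulVec w := by
      funext j
      have h := hcoord (Sum.inl j)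
      simp only [hV, hD, Sum.elim_inl, Sum.elim_inr] at h
      have hAT : A.transpose.mulVec u j = ∑ i, u i * A i j := by
        simp [Matrix.mulVec, dotProduct, Matrix.transpose_apply, mul_comm]
      have hPT : P.transpose.mulVec w j = ∑ jp, vv jp * (∑ iq, Z iq jp * P iq j) := by
        simp only [hwdef, Matrix.mulVec, dotProduct, Matrix.transpose_apply, Finset.mul_sum,
          Finset.sum_mul]
        rw [Finset.sum_comm]
        exact Finset.sum_congr rfl fun jp _ => Finset.sum_congr rfl fun iq _ => by ring
      have hneg : ∑ jp, vv jp * (-(∑ iq, Z iq jp * P iq j))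
          = -∑ jp, vv jp * (∑ iq, Z iq jp * P iq j) := by
        simp [mul_neg]
      rw [hAT, hPT]
      rw [hneg] at h
      linarith
    have hwy : ∑ jp, vv jp * Z.transpose.mulVec y jp = w ⬝ᵥ y := by
      rw [show (∑ jp, vv jp * Z.transpose.mulVec y jp) = vv ⬝ᵥ Z.transpose.mulVec y from rfl,
        dot_mulVec_comm, Matrix.transpose_transpose]
    have heq2 : b ⬝ᵥ u = 1 + l (Sum.inr (Sum.inr ())) + w ⬝ᵥ y := by
      have h := hcoord (Sum.inr ())
      simp only [hV, hD, Sum.elim_inl, Sum.elim_inr] at h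
      have hby : ∑ i, u i * (-b i) = -(b ⬝ᵥ u) := by
        rw [dotProduct]
        simp [mul_neg, mul_comm]
      rw [hby, hwy, mul_one] at h
      linarith
    have hwC : ∀ z ∈ C, 0 ≤ w ⬝ᵥ z := by
      intro z hz
      have hz' : 0 ≤ Z.transpose.mulVec z := by rw [hCZ] at hz; exact hz
      rw [hwdef, dotProduct_comm, dot_mulVec_comm Z z vv]
      exact Finset.sum_nonneg fun jp _ => mul_nonneg (hz' jp) (hl _)
    have hYw : 0 ≤ Y.transpose.mulVec w := by
      intro jo
      have hcc := hwC _ (hcol jo)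
      rw [dotProduct] at hcc
      have : Y.transpose.mulVec w jo = ∑ iq, w iq * Y iq jo := by
        simp [Matrix.mulVec, dotProduct, Matrix.transpose_apply, mul_comm]
      rw [this]
      exact hcc
    have hsnn : (0:ℝ) ≤ l (Sum.inr (Sum.inr ())) := hl _
    by_cases hw0 : w = 0
    · obtain ⟨x0, hx0⟩ := hSne
      rw [hS] at hx0
      have hAu : A.transpose.mulVec u = 0 := by
        rw [heq1, hw0, Matrix.mulVec_zero]
      have h1 : u ⬝ᵥ A.mulVec x0 = 0 := by rw [dot_mulVec_comm, hAu, zero_dotProduct]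
      have h2 : b ⬝ᵥ u ≤ u ⬝ᵥ A.mulVec x0 := by
        rw [dotProduct_comm b u]
        exact Finset.sum_le_sum fun i _ => mul_le_mul_of_nonneg_left (hx0 i) (hl (Sum.inl i))
      have h3 : w ⬝ᵥ y = 0 := by rw [hw0, zero_dotProduct]
      rw [h3] at heq2
      linarith
    · have hγ : 0 < c ⬝ᵥ w := hKc w hYw hw0
      have hmem : (((c ⬝ᵥ w)⁻¹ • u, (c ⬝ᵥ w)⁻¹ • w) : (Fin m → ℝ) × (Fin (q+1) → ℝ)) ∈ T := by
        rw [hT]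
        refine ⟨fun i => mul_nonneg (inv_nonneg.mpr hγ.le) (hl (Sum.inl i)), ?_, ?_, ?_⟩
        · rw [Matrix.mulVec_smul, Matrix.mulVec_smul, heq1]
        · rw [dotProduct_smul, smul_eq_mul, inv_mul_cancel₀ (ne_of_gt hγ)]
        · rw [Matrix.mulVec_smul]
          intro i
          exact mul_nonneg (inv_nonneg.mpr hγ.le) (hYw i)
      have hk := hkey _ hmem
      simp only [dotProduct_smul, smul_dotProduct, smul_eq_mul] at hk
      have h6 := mul_le_mul_of_nonneg_left hk hγ.le
      rw [← mul_assoc, ← mul_assoc, mul_inv_cancel₀ (ne_of_gt hγ), one_mul, one_mul] at h6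
      linarith
  · -- part (ii)
    intro ys hys
    set β := ys (Fin.last q) with hβ
    set w : Fin (q+1) → ℝ := Function.update ys (Fin.last q)
      (1 - ∑ i : Fin q, c i.castSucc * ys i.castSucc) with hwdef
    have hwcast : ∀ i : Fin q, w i.castSucc = ys i.castSucc :=
      fun i => Function.update_of_ne (Fin.castSucc_lt_last i).ne _ _
    have hwlast : w (Fin.last q) = 1 - ∑ i : Fin q, c i.castSucc * ys i.castSucc :=
      Function.update_self _ _ _
    have hphi : ∀ y, φ y ys = y ⬝ᵥ w - β := by
      intro y
      rw [hφ, dotProduct, Fin.sum_univ_castSucc]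
      simp only [hwcast, hwlast]
      rfl
    have hkey2 : ∀ y ∈ UpperIm, β ≤ y ⬝ᵥ w := by
      intro y hyU
      have := hys y hyU
      rw [hphi] at this
      linarith
    have hcw : c ⬝ᵥ w = 1 := by
      rw [dotProduct, Fin.sum_univ_castSucc, hcq, one_mul]
      simp only [hwcast, hwlast]
      ring
    obtain ⟨x0, hx0⟩ := hSne
    have hx0' : b ≤ A.mulVec x0 := by rw [hS] at hx0; exact hx0
    have hPx0 : P.mulVec x0 ∈ UpperIm := by
      rw [hUpperIm]; exact ⟨x0, hx0, 0, hC0, by simp⟩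
    have hwC2 : ∀ z ∈ C, 0 ≤ z ⬝ᵥ w := by
      intro z hz
      apply nonneg_aux (a := P.mulVec x0 ⬝ᵥ w) (β := β)
      intro t ht
      have hmem : P.mulVec x0 + t • z ∈ UpperIm := by
        rw [hUpperIm]; exact ⟨x0, hx0, t • z, hCsmul z hz t ht, rfl⟩
      have := hkey2 _ hmem
      rw [add_dotProduct, smul_dotProduct, smul_eq_mul] at this
      exact this
    have hYw2 : 0 ≤ Y.transpose.mulVec w := by
      intro jo
      have hcc := hwC2 _ (hcol jo)
      rw [dotProduct] at hcc
      have : Y.transpose.mulVec w jo = ∑ iq, Y iq jo * w iq := by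
        simp [Matrix.mulVec, dotProduct, Matrix.transpose_apply]
      rw [this]
      exact hcc
    have hrec : ∀ x : Fin n → ℝ, 0 ≤ A.mulVec x → 0 ≤ P.transpose.mulVec w ⬝ᵥ x := by
      intro x hAx
      apply nonneg_aux (a := P.mulVec x0 ⬝ᵥ w) (β := β)
      intro t ht
      have hmemS : x0 + t • x ∈ S := by
        rw [hS]
        intro i
        rw [Matrix.mulVec_add, Matrix.mulVec_smul]
        have : 0 ≤ t * A.mulVec x i := mul_nonneg ht (hAx i)
        have h0 := hx0' i
        simp only [Pi.add_apply, Pi.smul_apply, smul_eq_mul]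
        linarith
      have hmemU : P.mulVec (x0 + t • x) ∈ UpperIm := by
        rw [hUpperIm]; exact ⟨x0 + t • x, hmemS, 0, hC0, by simp⟩
      have := hkey2 _ hmemU
      rw [Matrix.mulVec_add, Matrix.mulVec_smul, add_dotProduct, smul_dotProduct,
        smul_eq_mul] at this
      rw [show (P.mulVec x ⬝ᵥ w) = P.transpose.mulVec w ⬝ᵥ x by
        rw [dotProduct_comm, dot_mulVec_comm]] at this
      exact this
    set V2 : (Fin m ⊕ Unit) → (Fin n ⊕ Unit) → ℝ :=
      Sum.elim (fun i => Sum.elim (fun j => A i j) (fun _ => -b i))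
        (fun _ => Sum.elim (fun _ => (0:ℝ)) (fun _ => 1)) with hV2
    set D2 : (Fin n ⊕ Unit) → ℝ :=
      Sum.elim (fun j => P.transpose.mulVec w j) (fun _ => -β) with hD2
    have hfar2 : ∀ xt : (Fin n ⊕ Unit) → ℝ, (∀ i, 0 ≤ V2 i ⬝ᵥ xt) → 0 ≤ D2 ⬝ᵥ xt := by
      intro xt hxt
      set x : Fin n → ℝ := fun j => xt (Sum.inl j) with hxdef
      set t : ℝ := xt (Sum.inr ()) with htdef
      have hdots : ∀ f : (Fin n ⊕ Unit) → ℝ, f ⬝ᵥ xt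
          = (∑ j, f (Sum.inl j) * x j) + f (Sum.inr ()) * t := by
        intro f
        rw [dotProduct, Fintype.sum_sum_type]
        simp [hxdef, htdef]
      have h1 : ∀ i : Fin m, b i * t ≤ A.mulVec x i := by
        intro i
        have hh := hxt (Sum.inl i)
        rw [hdots] at hh
        simp only [hV2, Sum.elim_inl, Sum.elim_inr] at hh
        simp only [Matrix.mulVec, dotProduct]
        linarith
      have h2 : 0 ≤ t := by
        have hh := hxt (Sum.inr ())
        rw [hdots] at hh
        simp only [hV2, Sum.elim_inl, Sum.elim_inr] at hh
        simpa using hh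
      have hgoal : β * t ≤ P.transpose.mulVec w ⬝ᵥ x := by
        rcases h2.lt_or_eq with hpos | hzero
        · have hmemS : t⁻¹ • x ∈ S := by
            rw [hS]
            intro i
            have := mul_le_mul_of_nonneg_left (h1 i) (inv_nonneg.mpr hpos.le)
            have hbi : t⁻¹ * (b i * t) = b i := by field_simp
            rw [hbi] at this
            rw [Matrix.mulVec_smul]
            simpa using this
          have hmemU : P.mulVec (t⁻¹ • x) ∈ UpperIm := by
            rw [hUpperIm]; exact ⟨t⁻¹ • x, hmemS, 0, hC0, by simp⟩
          have hk := hkey2 _ hmemU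
          rw [Matrix.mulVec_smul, smul_dotProduct, smul_eq_mul] at hk
          rw [show (P.mulVec x ⬝ᵥ w) = P.transpose.mulVec w ⬝ᵥ x by
            rw [dotProduct_comm, dot_mulVec_comm]] at hk
          have h6 := mul_le_mul_of_nonneg_left hk hpos.le
          rw [← mul_assoc, mul_inv_cancel₀ (ne_of_gt hpos), one_mul] at h6
          linarith [h6]
        · have hAx : 0 ≤ A.mulVec x := by
            intro i
            have := h1 i
            rw [← hzero, mul_zero] at this
            exact this
          have := hrec x hAx
          rw [← hzero, mul_zero]
          exact this
      rw [hdots]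
      simp only [hD2, Sum.elim_inl, Sum.elim_inr]
      have : (∑ j, P.transpose.mulVec w j * x j) = P.transpose.mulVec w ⬝ᵥ x := rfl
      rw [this]
      linarith
    obtain ⟨l, hl, hlD⟩ := farkas' V2 D2 hfar2
    set u : Fin m → ℝ := fun i => l (Sum.inl i) with hu
    have hcoord : ∀ k, D2 k = (∑ i, u i * V2 (Sum.inl i) k)
        + l (Sum.inr ()) * V2 (Sum.inr ()) k := by
      intro k
      conv_lhs => rw [hlD]
      rw [Finset.sum_apply]
      rw [Fintype.sum_sum_type]
      simp [Pi.smul_apply, smul_eq_mul]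
      rfl
    have heq1 : A.transpose.mulVec u = P.transpose.mulVec w := by
      funext j
      have h := hcoord (Sum.inl j)
      simp only [hV2, hD2, Sum.elim_inl, Sum.elim_inr] at h
      have hAT : A.transpose.mulVec u j = ∑ i, u i * A i j := by
        simp [Matrix.mulVec, dotProduct, Matrix.transpose_apply, mul_comm]
      rw [hAT]
      linarith
    have heq2 : b ⬝ᵥ u = β + l (Sum.inr ()) := by
      have h := hcoord (Sum.inr ())
      simp only [hV2, hD2, Sum.elim_inl, Sum.elim_inr] at h
      have hby : ∑ i, u i * (-b i) = -(b ⬝ᵥ u) := by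
        rw [dotProduct]
        simp [mul_neg, mul_comm]
      rw [hby, mul_one] at h
      linarith
    have hsnn : (0:ℝ) ≤ l (Sum.inr ()) := hl _
    rw [hLowerIm]
    refine ⟨(u, w), ?_, b ⬝ᵥ u - β, by linarith, ?_⟩
    · rw [hT]
      exact ⟨fun i => hl (Sum.inl i), heq1, hcw, hYw2⟩
    · funext i
      refine Fin.lastCases ?_ ?_ i
      · simp only [Pi.sub_apply, Pi.smul_apply, Function.update_self, Pi.single_eq_same,
          smul_eq_mul, mul_one]
        rw [← hβ]
        ring
      · intro i'
        have hne : i'.castSucc ≠ Fin.last q := (Fin.castSucc_lt_last i').ne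
        simp only [Pi.sub_apply, Pi.smul_apply, Function.update_of_ne hne,
          Pi.single_eq_of_ne hne, smul_eq_mul, mul_zero, sub_zero]
        exact (hwcast i').symm
end

section
/- Let S := {x ∈ ℝ^n | Ax ≥ b} be nonempty, let C = {y | Zᵀy ≥ 0} be a solid pointed polyhedral convex cone containing the recession cone of P[S], with c ∈ int C and c_q = 1. Let t* ∈ Δ and set w := ω(t*). Then the linear program P1(w): minimize wᵀPx subject to Ax ≥ b, has an optimal solution x; and every optimal solution x of P1(w) satisfies: (i) the half-space H*(Px) := {y* ∈ ℝ^q | φ(Px, y*) ≥ 0} contains 𝒟*; (ii) the point s* := (t*_1, …, t*_{q−1}, wᵀPx)ᵀ satisfies s* ∈ 𝒟* and φ(Px, s*) ≤ 0; (iii) Px lies on the boundary of 𝒫; (iv) t* ∉ 𝒟* if and only if wᵀPx < t*_q. -/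
open Matrix Set Topology

set_option linter.unusedSectionVars false
set_option linter.unusedVariables false
set_option maxHeartbeats 1600000

section ConeClosed

variable {E : Type*} [NormedAddCommGroup E] [InnerProductSpace ℝ E] [FiniteDimensional ℝ E]
variable {ι : Type*} [Fintype ι]

/-- Carathéodory-type reduction for conic combinations. -/
lemma cone_carath (v : ι → E) (s : Finset ι) :
    ∀ (u : ι → ℝ), 0 ≤ u → (∀ i ∉ s, u i = 0) →
    ∃ (t : Finset ι) (u' : ι → ℝ), 0 ≤ u' ∧ (∀ i ∉ t, u' i = 0) ∧
      (∑ i, u' i • v i = ∑ i, u i • v i) ∧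
      LinearIndependent ℝ (fun i : {x // x ∈ t} => v i) := by
  classical
  induction s using Finset.strongInduction with
  | _ s ih =>
    intro u hu hsupp
    by_cases hli : LinearIndependent ℝ (fun i : {x // x ∈ s} => v i)
    · exact ⟨s, u, hu, hsupp, rfl, hli⟩
    · obtain ⟨g, hg0, j, hgj⟩ := Fintype.not_linearIndependent_iff.mp hli
      set l0 : ι → ℝ := fun i => if h : i ∈ s then g ⟨i, h⟩ else 0 with hl0
      have hl0supp : ∀ i ∉ s, l0 i = 0 := fun i hi => by simp [hl0, hi]
      have hl0sum : ∑ i, l0 i • v i = 0 := by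
        rw [← Finset.sum_subset (Finset.subset_univ s)
          (fun i _ hi => by rw [hl0supp i hi, zero_smul])]
        rw [← Finset.sum_attach s (fun i => l0 i • v i)]
        have : ∀ i : {x // x ∈ s}, l0 i = g i := fun i => by simp [hl0, i.2]
        rw [Finset.sum_congr rfl (fun i _ => by rw [this i]), ← Finset.univ_eq_attach]
        exact hg0
      have hl0j : l0 (j : ι) ≠ 0 := by simpa [hl0, j.2] using hgj
      obtain ⟨l, hlsum, hlsupp, i₁, hi₁⟩ :
          ∃ l : ι → ℝ, (∑ i, l i • v i = 0) ∧ (∀ i ∉ s, l i = 0) ∧ ∃ i₁, 0 < l i₁ := by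
        rcases lt_or_gt_of_ne hl0j with h | h
        · refine ⟨-l0, by simpa using hl0sum, fun i hi => by simp [hl0supp i hi], ⟨j, ?_⟩⟩
          simpa using h
        · exact ⟨l0, hl0sum, hl0supp, ⟨j, h⟩⟩
      have hi₁s : (i₁ : ι) ∈ s := by
        by_contra h; rw [hlsupp _ h] at hi₁; exact lt_irrefl _ hi₁
      have hFne : (s.filter (fun i => 0 < l i)).Nonempty :=
        ⟨i₁, Finset.mem_filter.mpr ⟨hi₁s, hi₁⟩⟩
      obtain ⟨i₀, hi₀F, hi₀min⟩ := Finset.exists_min_image _ (fun i => u i / l i) hFne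
      rw [Finset.mem_filter] at hi₀F
      obtain ⟨hi₀s, hi₀pos⟩ := hi₀F
      set tc : ℝ := u i₀ / l i₀ with htc
      have htc0 : 0 ≤ tc := div_nonneg (hu i₀) hi₀pos.le
      set u' : ι → ℝ := fun i => u i - tc * l i with hu'
      have hu'0 : 0 ≤ u' := by
        intro i
        have key : tc * l i ≤ u i := by
          by_cases h : 0 < l i
          · have his : i ∈ s := by
              by_contra hc; rw [hlsupp _ hc] at h; exact lt_irrefl _ h
            have hmin := hi₀min i (Finset.mem_filter.mpr ⟨his, h⟩)
            calc tc * l i ≤ u i / l i * l i := mul_le_mul_of_nonneg_right hmin h.le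
            _ = u i := div_mul_cancel₀ _ h.ne'
          · push_neg at h
            exact (mul_nonpos_of_nonneg_of_nonpos htc0 h).trans (hu i)
        simpa [hu'] using sub_nonneg.mpr key
      have hu'supp : ∀ i ∉ s.erase i₀, u' i = 0 := by
        intro i hi
        by_cases h : i = i₀
        · subst h
          simp only [hu', htc]
          rw [div_mul_cancel₀ _ hi₀pos.ne', sub_self]
        · have his : i ∉ s := fun hc => hi (Finset.mem_erase.mpr ⟨h, hc⟩)
          simp [hu', hsupp i his, hlsupp i his]
      have hsum' : ∑ i, u' i • v i = ∑ i, u i • v i := by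
        simp only [hu', sub_smul, Finset.sum_sub_distrib, mul_smul,
          ← Finset.smul_sum, hlsum, smul_zero, sub_zero]
      obtain ⟨t, u'', h1, h2, h3, h4⟩ :=
        ih (s.erase i₀) (Finset.erase_ssubset hi₀s) u' hu'0 hu'supp
      exact ⟨t, u'', h1, h2, h3.trans hsum', h4⟩

lemma sum_shrink (v : ι → E) (t : Finset ι) (u : ι → ℝ) (hsupp : ∀ i ∉ t, u i = 0) :
    ∑ i, u i • v i = ∑ i : {x // x ∈ t}, u i • v i := by
  rw [← Finset.sum_subset (Finset.subset_univ t)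
    (fun i _ hi => by rw [hsupp i hi, zero_smul]),
    ← Finset.sum_attach t (fun i => u i • v i), Finset.univ_eq_attach]

lemma isClosed_piece (v : ι → E) (t : Finset ι)
    (hli : LinearIndependent ℝ (fun i : {x // x ∈ t} => v i)) :
    IsClosed {x : E | ∃ u : ι → ℝ, 0 ≤ u ∧ (∀ i ∉ t, u i = 0) ∧ x = ∑ i, u i • v i} := by
  classical
  set f : ({x // x ∈ t} → ℝ) →ₗ[ℝ] E :=
    { toFun := fun u => ∑ i, u i • v (i : ι)
      map_add' := fun a b => by simp [add_smul, Finset.sum_add_distrib]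
      map_smul' := fun c a => by simp [mul_smul, ← Finset.smul_sum] } with hf
  have hker : LinearMap.ker f = ⊥ := by
    rw [LinearMap.ker_eq_bot']
    intro m hm
    have := Fintype.linearIndependent_iff.mp hli m hm
    funext i; exact this i
  have hce : IsClosedEmbedding f := LinearMap.isClosedEmbedding_of_injective hker
  have hset : {x : E | ∃ u : ι → ℝ, 0 ≤ u ∧ (∀ i ∉ t, u i = 0) ∧ x = ∑ i, u i • v i}
      = f '' {u : {x // x ∈ t} → ℝ | 0 ≤ u} := by
    ext x
    constructor
    · rintro ⟨u, hu, hsupp, rfl⟩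
      exact ⟨fun i => u i, fun i => hu i, (sum_shrink v t u hsupp).symm⟩
    · rintro ⟨u, hu, rfl⟩
      refine ⟨fun i => if h : i ∈ t then u ⟨i, h⟩ else 0, fun i => ?_, fun i hi => by simp [hi], ?_⟩
      · by_cases h : i ∈ t
        · simpa [h] using hu ⟨i, h⟩
        · simp [h]
      · rw [sum_shrink v t _ (fun i hi => by simp [hi])]
        simp only [hf, LinearMap.coe_mk, AddHom.coe_mk]
        try exact Finset.sum_congr rfl (fun i _ => by simp [i.2])
  rw [hset]
  apply hce.isClosedMap
  have : {u : {x // x ∈ t} → ℝ | 0 ≤ u} = ⋂ i, {u | 0 ≤ u i} := by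
    ext u; simp [Pi.le_def]
  rw [this]
  exact isClosed_iInter (fun i => isClosed_Ici.preimage (continuous_apply i))

lemma isClosed_fgCone (v : ι → E) :
    IsClosed {x : E | ∃ u : ι → ℝ, 0 ≤ u ∧ x = ∑ i, u i • v i} := by
  classical
  have : {x : E | ∃ u : ι → ℝ, 0 ≤ u ∧ x = ∑ i, u i • v i} =
      ⋃ (t : {t : Finset ι // LinearIndependent ℝ (fun i : {x // x ∈ t} => v i)}),
        {x : E | ∃ u : ι → ℝ, 0 ≤ u ∧ (∀ i ∉ (t : Finset ι), u i = 0) ∧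
          x = ∑ i, u i • v i} := by
    ext x
    simp only [mem_setOf_eq, mem_iUnion]
    constructor
    · rintro ⟨u, hu, rfl⟩
      obtain ⟨t, u', h1, h2, h3, h4⟩ :=
        cone_carath v Finset.univ u hu (fun i hi => absurd (Finset.mem_univ i) hi)
      exact ⟨⟨t, h4⟩, u', h1, h2, h3.symm⟩
    · rintro ⟨t, u, hu, _, rfl⟩
      exact ⟨u, hu, rfl⟩
  rw [this]
  exact isClosed_iUnion_of_finite (fun t => isClosed_piece v t t.2)

open scoped InnerProductSpace in
lemma farkas_s8 [CompleteSpace E] (v : ι → E) (g : E) :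
    (∃ u : ι → ℝ, 0 ≤ u ∧ g = ∑ i, u i • v i) ∨
    (∃ d : E, (∀ i, 0 ≤ ⟪v i, d⟫_ℝ) ∧ ⟪g, d⟫_ℝ < 0) := by
  classical
  set K : ConvexCone ℝ E :=
    { carrier := {x : E | ∃ u : ι → ℝ, 0 ≤ u ∧ x = ∑ i, u i • v i}
      smul_mem' := by
        rintro c hc x ⟨u, hu, rfl⟩
        exact ⟨c • u, smul_nonneg hc.le hu, by
          simp [Finset.smul_sum, mul_smul]⟩
      add_mem' := by
        rintro x ⟨u, hu, rfl⟩ y ⟨u', hu', rfl⟩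
        exact ⟨u + u', add_nonneg hu hu', by
          simp [add_smul, Finset.sum_add_distrib]⟩ } with hK
  by_cases hg : g ∈ K
  · exact Or.inl hg
  · have hne : (K : Set E).Nonempty := ⟨0, ⟨0, le_refl _, by simp⟩⟩
    have hcl : IsClosed (K : Set E) := isClosed_fgCone v
    obtain ⟨y, hy1, hy2⟩ :=
      ProperCone.hyperplane_separation' (x₀ := g)
        ({ toSubmodule := K.toPointedCone (show (0:E) ∈ K from ⟨0, le_refl _, by simp⟩),
           isClosed' := hcl } : ProperCone ℝ E) hg
    refine Or.inr ⟨y, fun i => ?_, hy2⟩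
    refine hy1 (v i) ⟨fun j => if j = i then 1 else 0, fun j => by positivity, ?_⟩
    simp [ite_smul]

end ConeClosed


open scoped InnerProductSpace in
lemma farkas_dot {κ n : Type*} [Fintype κ] [Fintype n] (v : κ → n → ℝ) (g : n → ℝ) :
    (∃ u : κ → ℝ, 0 ≤ u ∧ g = ∑ i, u i • v i) ∨
    (∃ d : n → ℝ, (∀ i, 0 ≤ v i ⬝ᵥ d) ∧ g ⬝ᵥ d < 0) := by
  classical
  have := farkas_s8 (E := EuclideanSpace ℝ n) (fun i => WithLp.toLp 2 (v i)) (WithLp.toLp 2 g)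
  rcases this with ⟨u, hu, hg⟩ | ⟨d, hd, hgd⟩
  · exact Or.inl ⟨u, hu, by simpa using congrArg WithLp.ofLp hg⟩
  · refine Or.inr ⟨d, fun i => ?_, ?_⟩
    · have := hd i
      simpa [PiLp.inner_apply, dotProduct, mul_comm] using this
    · simpa [PiLp.inner_apply, dotProduct, mul_comm] using hgd

lemma gale {κ n : Type*} [Fintype κ] [Fintype n] (v : κ → n → ℝ) (r : κ → ℝ) :
    (∃ z : n → ℝ, ∀ i, r i ≤ v i ⬝ᵥ z) ∨
    (∃ y : κ → ℝ, 0 ≤ y ∧ ∑ i, y i • v i = 0 ∧ 0 < ∑ i, y i * r i) := by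
  classical
  set vv : Option κ → Option n → ℝ := fun i =>
    Option.elim i (fun j => Option.elim j 1 (fun _ => 0))
      (fun i' j => Option.elim j (-(r i')) (fun j' => v i' j')) with hvv
  set gg : Option n → ℝ := fun j => Option.elim j (-1) (fun _ => 0) with hgg
  rcases farkas_dot vv gg with ⟨u, hu, hg⟩ | ⟨d, hd, hgd⟩
  · refine Or.inr ⟨fun i => u (some i), fun i => hu (some i), ?_, ?_⟩
    · funext j
      have h1 := congrFun hg (some j)
      rw [Fintype.sum_option] at h1
      simp only [hvv, hgg, Pi.add_apply, Finset.sum_apply, Pi.smul_apply, smul_eq_mul,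
        Option.elim_none, Option.elim_some, mul_zero, zero_add] at h1
      simpa using h1.symm
    · have h1 := congrFun hg none
      rw [Fintype.sum_option] at h1
      simp only [hvv, hgg, Pi.add_apply, Finset.sum_apply, Pi.smul_apply, smul_eq_mul,
        Option.elim_none, Option.elim_some, mul_one, mul_neg, Finset.sum_neg_distrib] at h1
      have h2 : (0:ℝ) ≤ u none := hu none
      show 0 < ∑ i : κ, u (some i) * r i
      linarith
  · have ht : 0 < d none := by
      have h0 : gg ⬝ᵥ d = -d none := by
        simp only [hgg, dotProduct]
        rw [Fintype.sum_option]
        simp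
      rw [h0] at hgd; linarith
    refine Or.inl ⟨(d none)⁻¹ • (fun j => d (some j)), fun i => ?_⟩
    have h1 := hd (some i)
    simp only [hvv, dotProduct] at h1 ⊢
    rw [Fintype.sum_option] at h1
    simp only [Option.elim_none, Option.elim_some, Pi.smul_apply, smul_eq_mul] at h1 ⊢
    have hS : r i * d none ≤ ∑ j, v i j * d (some j) := by linarith
    have hrw : ∑ j, v i j * ((d none)⁻¹ * d (some j))
        = (d none)⁻¹ * ∑ j, v i j * d (some j) := by
      rw [Finset.mul_sum]
      exact Finset.sum_congr rfl (fun j _ => by ring)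
    rw [hrw, le_inv_mul_iff₀ ht]
    linarith [hS]


lemma dot_mono {n : Type*} [Fintype n] {u v w : n → ℝ} (hu : 0 ≤ u) (h : v ≤ w) :
    u ⬝ᵥ v ≤ u ⬝ᵥ w :=
  Finset.sum_le_sum (fun i _ => mul_le_mul_of_nonneg_left (h i) (hu i))

lemma dot_nonpos {n : Type*} [Fintype n] {u v : n → ℝ} (hu : 0 ≤ u) (h : v ≤ 0) :
    u ⬝ᵥ v ≤ 0 :=
  Finset.sum_nonpos (fun i _ => mul_nonpos_of_nonneg_of_nonpos (hu i) (h i))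

lemma weak_dual {m n : ℕ} (A : Matrix (Fin m) (Fin n) ℝ) (b : Fin m → ℝ)
    {u : Fin m → ℝ} (hu : 0 ≤ u) {x : Fin n → ℝ} (hx : b ≤ A.mulVec x) :
    b ⬝ᵥ u ≤ A.transpose.mulVec u ⬝ᵥ x := by
  calc b ⬝ᵥ u = u ⬝ᵥ b := dotProduct_comm _ _
  _ ≤ u ⬝ᵥ A.mulVec x := dot_mono hu hx
  _ = A.vecMul u ⬝ᵥ x := dotProduct_mulVec _ _ _
  _ = A.transpose.mulVec u ⬝ᵥ x := by rw [Matrix.mulVec_transpose]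

lemma dot_sumElim {α β : Type*} [Fintype α] [Fintype β] (f : α → ℝ) (g : β → ℝ)
    (z : α ⊕ β → ℝ) :
    Sum.elim f g ⬝ᵥ z = f ⬝ᵥ (z ∘ Sum.inl) + g ⬝ᵥ (z ∘ Sum.inr) := by
  simp [dotProduct, Fintype.sum_sum_type, Function.comp]

/-- Strong LP duality with attainment, given primal and dual feasible points. -/
lemma lp_exists {m n : ℕ} (A : Matrix (Fin m) (Fin n) ℝ) (b : Fin m → ℝ) (c0 : Fin n → ℝ)
    (x₀ : Fin n → ℝ) (hx₀ : b ≤ A.mulVec x₀)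
    (u₀ : Fin m → ℝ) (hu₀ : 0 ≤ u₀) (hAu₀ : A.transpose.mulVec u₀ = c0) :
    ∃ x u, b ≤ A.mulVec x ∧ 0 ≤ u ∧ A.transpose.mulVec u = c0 ∧
      b ⬝ᵥ u = c0 ⬝ᵥ x ∧ ∀ x', b ≤ A.mulVec x' → c0 ⬝ᵥ x ≤ c0 ⬝ᵥ x' := by
  classical
  set V : ((Fin m ⊕ Fin m) ⊕ ((Fin n ⊕ Fin n) ⊕ Unit)) → (Fin n ⊕ Fin m → ℝ) :=
    Sum.elim
      (Sum.elim (fun i => Sum.elim (A i) 0)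
                (fun i => Sum.elim 0 (fun i' => if i' = i then 1 else 0)))
      (Sum.elim (Sum.elim (fun j => Sum.elim 0 (fun i => A i j))
                          (fun j => Sum.elim 0 (fun i => -A i j)))
                (fun _ => Sum.elim (-c0) b)) with hV
  set R : ((Fin m ⊕ Fin m) ⊕ ((Fin n ⊕ Fin n) ⊕ Unit)) → ℝ :=
    Sum.elim (Sum.elim b 0) (Sum.elim (Sum.elim c0 (fun j => -c0 j)) 0) with hR
  rcases gale V R with ⟨z, hz⟩ | ⟨y, hy0, hysum, hyr⟩
  · set x : Fin n → ℝ := z ∘ Sum.inl with hxdef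
    set u : Fin m → ℝ := z ∘ Sum.inr with hudef
    have hfeas : b ≤ A.mulVec x := by
      intro i
      have := hz (Sum.inl (Sum.inl i))
      simpa [hV, hR, dot_sumElim, Matrix.mulVec, hxdef] using this
    have hunn : 0 ≤ u := by
      intro i
      have := hz (Sum.inl (Sum.inr i))
      simpa [hV, hR, dot_sumElim, dotProduct, Finset.sum_ite_eq', hudef] using this
    have hAu : A.transpose.mulVec u = c0 := by
      funext j
      have h1 := hz (Sum.inr (Sum.inl (Sum.inl j)))
      have h2 := hz (Sum.inr (Sum.inl (Sum.inr j)))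
      simp only [hV, hR, dot_sumElim, Sum.elim_inl, Sum.elim_inr, zero_dotProduct,
        zero_add] at h1 h2
      have h3 : (fun i => A i j) ⬝ᵥ u = A.transpose.mulVec u j := by
        simp [Matrix.mulVec, dotProduct, Matrix.transpose_apply, mul_comm]
      have h4 : (fun i => -A i j) ⬝ᵥ u = -((fun i => A i j) ⬝ᵥ u) := by
        simp [dotProduct, Finset.sum_neg_distrib]
      rw [h3] at h1
      rw [h4, h3] at h2
      linarith
    have hdual : c0 ⬝ᵥ x ≤ b ⬝ᵥ u := by
      have := hz (Sum.inr (Sum.inr ()))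
      simp only [hV, hR, dot_sumElim, Sum.elim_inl, Sum.elim_inr] at this
      have hneg : (-c0) ⬝ᵥ (z ∘ Sum.inl) = -(c0 ⬝ᵥ (z ∘ Sum.inl)) := by
        simp [dotProduct, Finset.sum_neg_distrib]
      rw [hneg] at this
      simp only [Pi.zero_apply] at this
      linarith [this]
    have hwd : b ⬝ᵥ u ≤ c0 ⬝ᵥ x := by
      have := weak_dual A b hunn hfeas
      rwa [hAu] at this
    refine ⟨x, u, hfeas, hunn, hAu, le_antisymm hwd hdual, fun x' hx' => ?_⟩
    have := weak_dual A b hunn hx'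
    rw [hAu] at this
    linarith [le_antisymm hwd hdual]
  · set y₁ : Fin m → ℝ := fun i => y (Sum.inl (Sum.inl i)) with hy₁
    set y₂ : Fin m → ℝ := fun i => y (Sum.inl (Sum.inr i)) with hy₂
    set y₃ : Fin n → ℝ := fun j => y (Sum.inr (Sum.inl (Sum.inl j))) with hy₃
    set y₄ : Fin n → ℝ := fun j => y (Sum.inr (Sum.inl (Sum.inr j))) with hy₄
    set y₅ : ℝ := y (Sum.inr (Sum.inr ())) with hy₅
    set e : Fin n → ℝ := y₃ - y₄ with he
    exfalso
    -- coordinate equations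
    have hcoordl : ∀ j : Fin n, A.transpose.mulVec y₁ j = y₅ * c0 j := by
      intro j
      have h1 := congrFun hysum (Sum.inl j)
      simp only [Finset.sum_apply, Pi.smul_apply, smul_eq_mul, Pi.zero_apply] at h1
      rw [Fintype.sum_sum_type, Fintype.sum_sum_type, Fintype.sum_sum_type,
        Fintype.sum_sum_type] at h1
      simp only [hV, Sum.elim_inl, Sum.elim_inr, Pi.zero_apply, mul_zero,
        Finset.sum_const_zero, add_zero, zero_add, Pi.neg_apply,
        Fintype.sum_unique, mul_neg] at h1
      have : A.transpose.mulVec y₁ j = ∑ i, y₁ i * A i j := by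
        simp [Matrix.mulVec, dotProduct, Matrix.transpose_apply, mul_comm]
      rw [this]
      linarith [h1]
    have hcoordr : ∀ i : Fin m, y₂ i + A.mulVec e i + y₅ * b i = 0 := by
      intro i
      have h1 := congrFun hysum (Sum.inr i)
      simp only [Finset.sum_apply, Pi.smul_apply, smul_eq_mul, Pi.zero_apply] at h1
      rw [Fintype.sum_sum_type, Fintype.sum_sum_type, Fintype.sum_sum_type,
        Fintype.sum_sum_type] at h1
      simp only [hV, Sum.elim_inl, Sum.elim_inr, Pi.zero_apply, mul_zero,
        Finset.sum_const_zero, add_zero, zero_add, Pi.neg_apply,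
        Fintype.sum_unique, mul_neg, mul_ite, mul_one] at h1
      have h2 : (∑ x : Fin m, if i = x then y (Sum.inl (Sum.inr x)) else 0) = y₂ i := by
        simp [hy₂]
      have h3 : A.mulVec e i = ∑ x : Fin n, y (Sum.inr (Sum.inl (Sum.inl x))) * A i x
          - ∑ x : Fin n, y (Sum.inr (Sum.inl (Sum.inr x))) * A i x := by
        simp only [he, Matrix.mulVec, dotProduct, Pi.sub_apply, mul_sub,
          Finset.sum_sub_distrib, hy₃, hy₄]
        congr 1 <;> exact Finset.sum_congr rfl (fun x _ => mul_comm _ _)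
      have h4 : y (Sum.inr (Sum.inr default)) = y₅ := rfl
      have h5 : ∑ x : Fin n, -(y (Sum.inr (Sum.inl (Sum.inr x))) * A i x)
          = -∑ x : Fin n, y (Sum.inr (Sum.inl (Sum.inr x))) * A i x := by
        simp [Finset.sum_neg_distrib]
      rw [h2, h4, h5] at h1
      rw [h3]
      linarith [h1]
    -- key inequality
    have hAty : A.transpose.mulVec y₁ = y₅ • c0 := funext (fun j => by
      simpa using hcoordl j)
    have heq : y₁ ⬝ᵥ A.mulVec e = y₅ * (c0 ⬝ᵥ e) := by
      rw [dotProduct_mulVec, ← Matrix.mulVec_transpose, hAty]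
      simp [smul_dotProduct]
    have hy₁nn : 0 ≤ y₁ := fun i => hy0 _
    have hrpos : 0 < b ⬝ᵥ y₁ + c0 ⬝ᵥ e := by
      rw [Fintype.sum_sum_type, Fintype.sum_sum_type, Fintype.sum_sum_type,
        Fintype.sum_sum_type] at hyr
      simp only [hR, Sum.elim_inl, Sum.elim_inr, Pi.zero_apply, mul_zero,
        Finset.sum_const_zero, add_zero, zero_add, Fintype.sum_unique] at hyr
      have h1 : b ⬝ᵥ y₁ = ∑ i, y (Sum.inl (Sum.inl i)) * b i := by
        simp [dotProduct, hy₁, mul_comm]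
      have h2 : c0 ⬝ᵥ e = ∑ j, y (Sum.inr (Sum.inl (Sum.inl j))) * c0 j
          - ∑ j, y (Sum.inr (Sum.inl (Sum.inr j))) * c0 j := by
        simp [he, hy₃, hy₄, dotProduct, mul_sub, Finset.sum_sub_distrib, mul_comm]
      rw [h1, h2]
      have h3 : ∑ j, y (Sum.inr (Sum.inl (Sum.inr j))) * (-c0 j)
          = -∑ j, y (Sum.inr (Sum.inl (Sum.inr j))) * c0 j := by
        simp [Finset.sum_neg_distrib]
      rw [h3] at hyr
      linarith [hyr]
    have hy₅nn : 0 ≤ y₅ := hy0 _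
    rcases eq_or_lt_of_le hy₅nn with h5 | h5
    · -- y₅ = 0
      have hAe : A.mulVec e ≤ 0 := by
        intro i
        have := hcoordr i
        have h2 : (0:ℝ) ≤ y₂ i := hy0 _
        rw [← h5] at this
        simp only [Pi.zero_apply]
        linarith
      have hc0e : c0 ⬝ᵥ e ≤ 0 := by
        have : c0 ⬝ᵥ e = u₀ ⬝ᵥ A.mulVec e := by
          rw [dotProduct_mulVec, ← Matrix.mulVec_transpose, hAu₀]
        rw [this]
        exact dot_nonpos hu₀ hAe
      have hby₁ : b ⬝ᵥ y₁ ≤ 0 := by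
        have h1 : b ⬝ᵥ y₁ ≤ A.transpose.mulVec y₁ ⬝ᵥ x₀ := weak_dual A b hy₁nn hx₀
        rw [hAty, ← h5] at h1
        simpa using h1
      linarith
    · -- y₅ > 0
      have hkey : y₁ ⬝ᵥ (A.mulVec e) + y₅ * (b ⬝ᵥ y₁) ≤ 0 := by
        have h1 : y₁ ⬝ᵥ (A.mulVec e + y₅ • b) ≤ 0 := by
          apply dot_nonpos hy₁nn
          intro i
          have := hcoordr i
          have h2 : (0:ℝ) ≤ y₂ i := hy0 _
          simp only [Pi.add_apply, Pi.smul_apply, smul_eq_mul, Pi.zero_apply]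
          linarith
        rw [dotProduct_add, dotProduct_smul] at h1
        have : y₁ ⬝ᵥ b = b ⬝ᵥ y₁ := dotProduct_comm _ _
        rw [this] at h1
        simpa using h1
      rw [heq] at hkey
      nlinarith [mul_pos h5 hrpos]


/-- Ambient space `ℝ^{q+1}` (the paper's `ℝ^q`).  For `t* ∈ Δ` and
`w := ω(t*)`, the weighted-sum scalarization `P₁(w)` has an optimal solution, and every
optimal solution `x` satisfies: (i) the half-space `{y* | φ(Px, y*) ≥ 0}` contains the
lower image; (ii) `s* := (t*_1, …, t*_{q−1}, wᵀPx)` belongs to the lower image and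
`φ(Px, s*) ≤ 0`; (iii) `Px` lies on the boundary of the upper image; (iv) `t*` is not
in the lower image iff `wᵀPx < t*_q`. -/
theorem stmt8 (q m n o p : ℕ)
    (A : Matrix (Fin m) (Fin n) ℝ) (P : Matrix (Fin (q + 1)) (Fin n) ℝ) (b : Fin m → ℝ)
    (Y : Matrix (Fin (q + 1)) (Fin o) ℝ) (Z : Matrix (Fin (q + 1)) (Fin p) ℝ)
    (C : Set (Fin (q + 1) → ℝ))
    (hCZ : C = {y | 0 ≤ Z.transpose.mulVec y})
    (hCY : C = {y | ∃ l : Fin o → ℝ, 0 ≤ l ∧ y = Y.mulVec l})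
    (hC_pointed : C ∩ (-C) = {0})
    (hC_solid : (interior C).Nonempty)
    (c : Fin (q + 1) → ℝ) (hc : c ∈ interior C) (hcq : c (Fin.last q) = 1)
    (S : Set (Fin n → ℝ)) (hS : S = {x | b ≤ A.mulVec x}) (hSne : S.Nonempty)
    (hrec : {d | ∀ y ∈ (fun x => P.mulVec x) '' S, ∀ t : ℝ, 0 ≤ t →
        y + t • d ∈ (fun x => P.mulVec x) '' S} ⊆ C)
    (UpperIm : Set (Fin (q + 1) → ℝ))
    (hUpperIm : UpperIm = {y | ∃ x ∈ S, ∃ cc ∈ C, y = P.mulVec x + cc})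
    (T : Set ((Fin m → ℝ) × (Fin (q + 1) → ℝ)))
    (hT : T = {uw | 0 ≤ uw.1 ∧ A.transpose.mulVec uw.1 = P.transpose.mulVec uw.2 ∧
      c ⬝ᵥ uw.2 = 1 ∧ 0 ≤ Y.transpose.mulVec uw.2})
    (LowerIm : Set (Fin (q + 1) → ℝ))
    (hLowerIm : LowerIm = {ys | ∃ uw ∈ T, ∃ k : ℝ, 0 ≤ k ∧
      ys = Function.update uw.2 (Fin.last q) (b ⬝ᵥ uw.1) - k • (Pi.single (Fin.last q) 1 : Fin (q + 1) → ℝ)})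
    (φ : (Fin (q + 1) → ℝ) → (Fin (q + 1) → ℝ) → ℝ)
    (hφ : ∀ y ys, φ y ys = (∑ i : Fin q, y i.castSucc * ys i.castSucc) +
      y (Fin.last q) * (1 - ∑ i : Fin q, c i.castSucc * ys i.castSucc) - ys (Fin.last q))
    (ω : (Fin (q + 1) → ℝ) → (Fin (q + 1) → ℝ))
    (hω : ∀ ts, ω ts = Function.update ts (Fin.last q)
      (1 - ∑ i : Fin q, c i.castSucc * ts i.castSucc))
    (tstar : Fin (q + 1) → ℝ)
    (htstar : ∀ y ∈ C, 0 ≤ y ⬝ᵥ ω tstar)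
    (w : Fin (q + 1) → ℝ) (hw : w = ω tstar) :
    (∃ x ∈ S, ∀ x' ∈ S, w ⬝ᵥ P.mulVec x ≤ w ⬝ᵥ P.mulVec x') ∧
    (∀ x ∈ S, (∀ x' ∈ S, w ⬝ᵥ P.mulVec x ≤ w ⬝ᵥ P.mulVec x') →
      (LowerIm ⊆ {ys | 0 ≤ φ (P.mulVec x) ys}) ∧
      (Function.update tstar (Fin.last q) (w ⬝ᵥ P.mulVec x) ∈ LowerIm ∧
        φ (P.mulVec x) (Function.update tstar (Fin.last q) (w ⬝ᵥ P.mulVec x)) ≤ 0) ∧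
      P.mulVec x ∈ frontier UpperIm ∧
      (tstar ∉ LowerIm ↔ w ⬝ᵥ P.mulVec x < tstar (Fin.last q))) := by
  classical
  subst hS hT
  -- basic facts about w
  have hwlast : w (Fin.last q) = 1 - ∑ i : Fin q, c i.castSucc * tstar i.castSucc := by
    rw [hw, hω]; simp
  have hwcast : ∀ i : Fin q, w i.castSucc = tstar i.castSucc := by
    intro i; rw [hw, hω]
    exact Function.update_of_ne (Fin.castSucc_lt_last i).ne _ _
  have hwne : ∀ i : Fin (q + 1), i ≠ Fin.last q → w i = tstar i := by
    intro i hi; rw [hw, hω]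
    exact Function.update_of_ne hi _ _
  have hcw : c ⬝ᵥ w = 1 := by
    rw [dotProduct, Fin.sum_univ_castSucc]
    simp only [hwcast, hwlast, hcq, one_mul]
    ring
  have hwC : ∀ y ∈ C, 0 ≤ y ⬝ᵥ w := by intro y hy; rw [hw]; exact htstar y hy
  have h0C : (0 : Fin (q + 1) → ℝ) ∈ C := by
    rw [hCY]; exact ⟨0, le_refl _, by simp⟩
  have hYw : 0 ≤ Y.transpose.mulVec w := by
    intro j
    have hcol : Y.mulVec (Pi.single j 1) ∈ C := by
      rw [hCY]
      refine ⟨Pi.single j 1, ?_, rfl⟩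
      intro i; by_cases h : i = j <;> simp [Pi.single_apply, h]
    have h1 := hwC _ hcol
    have h2 : Y.mulVec (Pi.single j 1) ⬝ᵥ w = Y.transpose.mulVec w j := by
      simp [Matrix.mulVec, dotProduct, Pi.single_apply, Finset.sum_ite_eq,
        Matrix.transpose_apply, mul_comm]
    rwa [h2] at h1
  -- objective rewriting
  have hobjg : ∀ (wh : Fin (q+1) → ℝ) (x : Fin n → ℝ),
      P.transpose.mulVec wh ⬝ᵥ x = wh ⬝ᵥ P.mulVec x := by
    intro wh x
    rw [Matrix.mulVec_transpose, ← dotProduct_mulVec]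
  have hobj : ∀ x : Fin n → ℝ, P.transpose.mulVec w ⬝ᵥ x = w ⬝ᵥ P.mulVec x := hobjg w
  -- dual feasibility
  obtain ⟨x₀, hx₀⟩ := hSne
  have hdualfeas : ∃ u₀ : Fin m → ℝ, 0 ≤ u₀ ∧
      A.transpose.mulVec u₀ = P.transpose.mulVec w := by
    rcases farkas_dot (fun i => A i) (P.transpose.mulVec w) with ⟨u₀, hu₀, hg⟩ | ⟨d, hd, hgd⟩
    · refine ⟨u₀, hu₀, ?_⟩
      funext j
      have := congrFun hg j
      simp only [Finset.sum_apply, Pi.smul_apply, smul_eq_mul] at this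
      rw [this]
      simp [Matrix.mulVec, dotProduct, Matrix.transpose_apply, mul_comm]
    · exfalso
      have hAd : 0 ≤ A.mulVec d := fun i => hd i
      have hPdC : P.mulVec d ∈ C := by
        apply hrec
        intro y hy t ht
        obtain ⟨x', hx', rfl⟩ := hy
        refine ⟨x' + t • d, ?_, ?_⟩
        · show b ≤ A.mulVec (x' + t • d)
          rw [Matrix.mulVec_add, Matrix.mulVec_smul]
          intro i
          have h1 : b i ≤ A.mulVec x' i := hx' i
          have h2 : 0 ≤ t * A.mulVec d i := mul_nonneg ht (hAd i)
          simp only [Pi.add_apply, Pi.smul_apply, smul_eq_mul]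
          linarith
        · simp [Matrix.mulVec_add, Matrix.mulVec_smul]
      have := hwC _ hPdC
      rw [hobj d] at hgd
      rw [dotProduct_comm] at this
      linarith
  obtain ⟨u₀, hu₀, hAu₀⟩ := hdualfeas
  obtain ⟨xo, u, hxofeas, hun, hAu, hbu, hopt⟩ :=
    lp_exists A b (P.transpose.mulVec w) x₀ hx₀ u₀ hu₀ hAu₀
  constructor
  · refine ⟨xo, hxofeas, fun x' hx' => ?_⟩
    have := hopt x' hx'
    rwa [hobj, hobj] at this
  · intro x hxS hxopt
    set v : ℝ := w ⬝ᵥ P.mulVec x with hv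
    have hvu : b ⬝ᵥ u = v := by
      have h1 : v ≤ w ⬝ᵥ P.mulVec xo := hxopt xo hxofeas
      have h2 : w ⬝ᵥ P.mulVec xo ≤ v := by
        have := hopt x hxS; rwa [hobj, hobj] at this
      have h3 : b ⬝ᵥ u = w ⬝ᵥ P.mulVec xo := by rw [hbu, hobj]
      linarith
    have hTw : (0 ≤ u ∧ A.transpose.mulVec u = P.transpose.mulVec w ∧
        c ⬝ᵥ w = 1 ∧ 0 ≤ Y.transpose.mulVec w) := ⟨hun, hAu, hcw, hYw⟩
    -- the φ key identity
    have hφkey : ∀ (y wh : Fin (q + 1) → ℝ) (β k : ℝ), c ⬝ᵥ wh = 1 →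
        φ y (Function.update wh (Fin.last q) β - k • (Pi.single (Fin.last q) 1 : Fin (q+1) → ℝ))
          = y ⬝ᵥ wh - β + k := by
      intro y wh β k hcwh
      have h1 : ∀ i : Fin q,
          (Function.update wh (Fin.last q) β - k • (Pi.single (Fin.last q) 1 : Fin (q+1) → ℝ))
            i.castSucc = wh i.castSucc := by
        intro i
        have hne := (Fin.castSucc_lt_last i).ne
        simp [Function.update_of_ne hne, Pi.single_eq_of_ne hne]
      have h2 : (Function.update wh (Fin.last q) β
          - k • (Pi.single (Fin.last q) 1 : Fin (q+1) → ℝ)) (Fin.last q) = β - k := by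
        simp
      have h3 : 1 - ∑ i : Fin q, c i.castSucc * wh i.castSucc = wh (Fin.last q) := by
        rw [dotProduct, Fin.sum_univ_castSucc, hcq, one_mul] at hcwh
        linarith
      rw [hφ]
      simp only [h1, h2]
      rw [h3, dotProduct, Fin.sum_univ_castSucc]
      ring
    -- (i)
    have hi : LowerIm ⊆ {ys | 0 ≤ φ (P.mulVec x) ys} := by
      intro ys hys
      rw [hLowerIm] at hys
      obtain ⟨⟨uu, ww⟩, ⟨huu, hAww, hcww, hYww⟩, k, hk, rfl⟩ := hys
      have hkey := hφkey (P.mulVec x) ww (b ⬝ᵥ uu) k hcww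
      have hAww' : A.transpose.mulVec uu = P.transpose.mulVec ww := hAww
      have hwd : b ⬝ᵥ uu ≤ P.mulVec x ⬝ᵥ ww := by
        have h1 : b ⬝ᵥ uu ≤ A.transpose.mulVec uu ⬝ᵥ x := weak_dual A b huu hxS
        calc b ⬝ᵥ uu ≤ A.transpose.mulVec uu ⬝ᵥ x := h1
        _ = ww ⬝ᵥ P.mulVec x := by rw [hAww', hobjg]
        _ = P.mulVec x ⬝ᵥ ww := dotProduct_comm _ _
      simp only [mem_setOf_eq]
      rw [hkey]
      linarith
    -- (ii)
    have hslower : Function.update tstar (Fin.last q) v ∈ LowerIm := by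
      rw [hLowerIm]
      refine ⟨(u, w), hTw, 0, le_refl _, ?_⟩
      funext i
      by_cases hi2 : i = Fin.last q
      · subst hi2
        simp [hvu]
      · simp [Function.update_of_ne hi2, Pi.single_eq_of_ne hi2, hwne i hi2]
    have hphis : φ (P.mulVec x) (Function.update tstar (Fin.last q) v) ≤ 0 := by
      have hseq : Function.update tstar (Fin.last q) v
          = Function.update w (Fin.last q) (b ⬝ᵥ u)
            - (0:ℝ) • (Pi.single (Fin.last q) 1 : Fin (q+1) → ℝ) := by
        funext i
        by_cases hi2 : i = Fin.last q
        · subst hi2; simp [hvu]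
        · simp [Function.update_of_ne hi2, hwne i hi2]
      rw [hseq, hφkey (P.mulVec x) w (b ⬝ᵥ u) 0 hcw, hvu]
      have h4 : P.mulVec x ⬝ᵥ w = v := by rw [dotProduct_comm]
      rw [h4]
      linarith
    -- (iii)
    have hfront : P.mulVec x ∈ frontier UpperIm := by
      have hPxU : P.mulVec x ∈ UpperIm := by
        rw [hUpperIm]; exact ⟨x, hxS, 0, h0C, by simp⟩
      have hlb : ∀ y ∈ UpperIm, v ≤ w ⬝ᵥ y := by
        intro y hy
        rw [hUpperIm] at hy
        obtain ⟨x', hx', cc, hcc, rfl⟩ := hy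
        have h1 : v ≤ w ⬝ᵥ P.mulVec x' := hxopt x' hx'
        have h2 : 0 ≤ w ⬝ᵥ cc := by rw [dotProduct_comm]; exact hwC cc hcc
        rw [dotProduct_add]
        linarith
      refine ⟨subset_closure hPxU, ?_⟩
      intro hint
      rw [mem_interior_iff_mem_nhds, Metric.mem_nhds_iff] at hint
      obtain ⟨ε, hε, hball⟩ := hint
      set δ : ℝ := ε / (2 * (‖c‖ + 1)) with hδ
      have hδpos : 0 < δ := by positivity
      have hmem : P.mulVec x - δ • c ∈ Metric.ball (P.mulVec x) ε := by
        rw [Metric.mem_ball, dist_eq_norm]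
        have h1 : P.mulVec x - δ • c - P.mulVec x = -(δ • c) := sub_sub_cancel_left _ _
        rw [h1, norm_neg, norm_smul, Real.norm_eq_abs, abs_of_pos hδpos]
        have hc0 : 0 ≤ ‖c‖ := norm_nonneg c
        rw [hδ, div_mul_eq_mul_div, div_lt_iff₀ (by positivity)]
        nlinarith
      have h2 := hlb _ (hball hmem)
      rw [dotProduct_sub, dotProduct_smul] at h2
      have h3 : w ⬝ᵥ c = 1 := by rw [dotProduct_comm]; exact hcw
      rw [h3] at h2
      simp only [smul_eq_mul, mul_one] at h2
      linarith
    -- (iv)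
    have hφt : φ (P.mulVec x) tstar = v - tstar (Fin.last q) := by
      rw [hφ]
      have h1 : v = ∑ i : Fin q, P.mulVec x i.castSucc * tstar i.castSucc
          + P.mulVec x (Fin.last q) * (1 - ∑ i : Fin q, c i.castSucc * tstar i.castSucc) := by
        rw [hv, dotProduct_comm, dotProduct, Fin.sum_univ_castSucc]
        simp only [hwcast, hwlast]
      linarith [h1]
    refine ⟨hi, ⟨hslower, hphis⟩, hfront, ?_⟩
    constructor
    · intro hnot
      by_contra hcnt
      push_neg at hcnt
      apply hnot
      rw [hLowerIm]
      refine ⟨(u, w), hTw, v - tstar (Fin.last q), by linarith, ?_⟩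
      funext i
      by_cases hi2 : i = Fin.last q
      · subst hi2
        simp only [Pi.sub_apply, Function.update_self, Pi.smul_apply,
          Pi.single_eq_same, smul_eq_mul, mul_one, hvu]
        ring
      · simp [Function.update_of_ne hi2, Pi.single_eq_of_ne hi2, hwne i hi2]
    · intro hlt hmem
      have h5 := hi hmem
      rw [mem_setOf_eq, hφt] at h5
      linarith
end

section
/- Let C ⊆ ℝ^q be a pointed polyhedral convex cone with C ≠ {0}, let 𝒫 := P[S] + C ≠ ∅, and let ℳ := {(z, ζ) ∈ ℝ^q × ℝ | ∃ y ∈ 𝒫 : z ≥ y and ζ ≥ −eᵀy} be the upper image of the lifted problem VLP'. Then for every nonzero c ∈ C, the vector c̄ := (c, −eᵀc) ∈ ℝ^{q+1} is a recession direction of ℳ (i.e., z̄ + λc̄ ∈ ℳ for all z̄ ∈ ℳ and λ ≥ 0) and c̄ ∉ ℝ^{q+1}₊. In particular, the recession cone of ℳ is not contained in ℝ^{q+1}₊, i.e., VLP' is unbounded. -/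
/-- Let `C ≠ {0}` be a pointed polyhedral convex cone and suppose the
upper image `𝒫 = P[S] + C` is nonempty.  For the lifted upper image
`ℳ = {(z, ζ) | ∃ y ∈ 𝒫, y ≤ z ∧ −eᵀy ≤ ζ} ⊆ ℝ^q × ℝ`, every nonzero `c ∈ C` yields a
recession direction `c̄ = (c, −eᵀc)` of `ℳ` not lying in the nonnegative orthant; in
particular, the recession cone of `ℳ` is not contained in the nonnegative orthant
(VLP' is unbounded). -/
theorem stmt9 (q m n : ℕ)
    (A : Matrix (Fin m) (Fin n) ℝ) (P : Matrix (Fin q) (Fin n) ℝ) (b : Fin m → ℝ)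
    (S : Set (Fin n → ℝ)) (hS : S = {x | b ≤ A.mulVec x})
    (C : Set (Fin q → ℝ))
    (hC_poly : ∃ (p : ℕ) (Z : Matrix (Fin p) (Fin q) ℝ), C = {y | 0 ≤ Z.mulVec y})
    (hC_pointed : C ∩ (-C) = {0})
    (hC_ne : C ≠ {0})
    (UpperIm : Set (Fin q → ℝ))
    (hUpperIm : UpperIm = {y | ∃ x ∈ S, ∃ cc ∈ C, y = P.mulVec x + cc})
    (hUpperIm_ne : UpperIm.Nonempty)
    (M : Set ((Fin q → ℝ) × ℝ))
    (hM : M = {zζ | ∃ y ∈ UpperIm, y ≤ zζ.1 ∧ -(∑ i, y i) ≤ zζ.2}) :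
    (∀ c ∈ C, c ≠ 0 →
      (∀ zbar ∈ M, ∀ l : ℝ, 0 ≤ l → zbar + l • (c, -(∑ i, c i)) ∈ M) ∧
      ¬((0 : Fin q → ℝ) ≤ c ∧ (0 : ℝ) ≤ -(∑ i, c i))) ∧
    ¬({d : (Fin q → ℝ) × ℝ | ∀ zbar ∈ M, ∀ l : ℝ, 0 ≤ l → zbar + l • d ∈ M} ⊆
        {d | 0 ≤ d.1 ∧ 0 ≤ d.2}) := by
  obtain ⟨p, Z, hZ⟩ := hC_poly
  have hcone : ∀ c ∈ C, ∀ cc ∈ C, ∀ l : ℝ, 0 ≤ l → cc + l • c ∈ C := by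
    intro c hc cc hcc l hl
    rw [hZ] at hc hcc ⊢
    simp only [Set.mem_setOf_eq] at *
    rw [Matrix.mulVec_add, Matrix.mulVec_smul]
    intro i
    have h1 := hc i
    have h2 := hcc i
    simp only [Pi.zero_apply] at h1 h2
    simp only [Pi.add_apply, Pi.smul_apply, Pi.zero_apply, smul_eq_mul]
    nlinarith
  have key : ∀ c ∈ C, c ≠ 0 →
      (∀ zbar ∈ M, ∀ l : ℝ, 0 ≤ l → zbar + l • (c, -(∑ i, c i)) ∈ M) ∧
      ¬((0 : Fin q → ℝ) ≤ c ∧ (0 : ℝ) ≤ -(∑ i, c i)) := by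
    intro c hc hcne
    constructor
    · intro zbar hz l hl
      rw [hM] at hz ⊢
      obtain ⟨y, hy, hy1, hy2⟩ := hz
      refine ⟨y + l • c, ?_, ?_, ?_⟩
      · rw [hUpperIm] at hy ⊢
        obtain ⟨x, hx, cc, hcc, rfl⟩ := hy
        exact ⟨x, hx, cc + l • c, hcone c hc cc hcc l hl, by abel⟩
      · intro i
        have := hy1 i
        simp only [Pi.add_apply, Pi.smul_apply, Prod.fst_add, Prod.smul_fst, smul_eq_mul]
        linarith
      · have h2 : (zbar + l • (c, -(∑ i, c i))).2 = zbar.2 + l * (-(∑ i, c i)) := by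
          simp [Prod.snd_add, Prod.smul_snd]
        rw [h2]
        simp only [Pi.add_apply, Pi.smul_apply, smul_eq_mul]
        rw [Finset.sum_add_distrib]
        rw [← Finset.mul_sum]
        linarith
    · rintro ⟨h1, h2⟩
      have hnn : ∀ j ∈ Finset.univ, 0 ≤ c j := fun j _ => h1 j
      have hsum : ∑ j, c j = 0 := le_antisymm (by linarith) (Finset.sum_nonneg hnn)
      exact hcne (funext fun i =>
        (Finset.sum_eq_zero_iff_of_nonneg hnn).mp hsum i (Finset.mem_univ i))
  refine ⟨key, ?_⟩
  have h0 : (0 : Fin q → ℝ) ∈ C := by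
    rw [hZ]; simp [Matrix.mulVec_zero]
  obtain ⟨c, hc, hcne⟩ : ∃ c ∈ C, c ≠ 0 := by
    by_contra h
    push_neg at h
    apply hC_ne
    ext x
    constructor
    · intro hx; simpa using h x hx
    · intro hx; simpa using hx ▸ h0
  intro hsub
  obtain ⟨hrec, hnot⟩ := key c hc hcne
  exact hnot (hsub hrec)
end

section
/- Let C ⊆ ℝ^q be a polyhedral convex cone, define P̄x := (Px, −eᵀPx) ∈ ℝ^{q+1}, R := ℝ^{q+1}₊ + {(c, −eᵀc) | c ∈ C} ⊆ ℝ^{q+1}, H := {y ∈ ℝ^{q+1} | eᵀy = 0}, and let π : ℝ^{q+1} → ℝ^q be the projection cancelling the last component. Let ℳ := {P̄x | x ∈ S} + R be the upper image of the problem VLP''. Then 𝒫 = π(ℳ ∩ H), where 𝒫 := P[S] + C. -/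
/-- For a polyhedral convex cone `C`, the lifted problem VLP'' with
ordering cone `R = ℝ^{q+1}₊ + {(c, −eᵀc) | c ∈ C}` has upper image `ℳ` satisfying
`𝒫 = π(ℳ ∩ H)` where `H = {y | eᵀy = 0}` and `π` cancels the last component. -/
theorem stmt10 (q m n : ℕ)
    (A : Matrix (Fin m) (Fin n) ℝ) (P : Matrix (Fin q) (Fin n) ℝ) (b : Fin m → ℝ)
    (S : Set (Fin n → ℝ)) (hS : S = {x | b ≤ A.mulVec x})
    (C : Set (Fin q → ℝ))
    (hC_poly : ∃ (p : ℕ) (Z : Matrix (Fin p) (Fin q) ℝ), C = {y | 0 ≤ Z.mulVec y})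
    (R : Set ((Fin q → ℝ) × ℝ))
    (hR : R = {r | ∃ l : (Fin q → ℝ) × ℝ, 0 ≤ l.1 ∧ 0 ≤ l.2 ∧
      ∃ cc ∈ C, r = l + (cc, -(∑ i, cc i))})
    (M : Set ((Fin q → ℝ) × ℝ))
    (hM : M = {zζ | ∃ x ∈ S, ∃ r ∈ R, zζ = (P.mulVec x, -(∑ i, P.mulVec x i)) + r}) :
    {y | ∃ x ∈ S, ∃ cc ∈ C, y = P.mulVec x + cc} =
      Prod.fst '' (M ∩ {zζ | (∑ i, zζ.1 i) + zζ.2 = 0}) := by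
  subst hR hM
  ext y
  constructor
  · rintro ⟨x, hx, cc, hcc, rfl⟩
    refine ⟨(P.mulVec x + cc, -(∑ i, P.mulVec x i) + -(∑ i, cc i)), ⟨⟨x, hx,
      ((0 : Fin q → ℝ), (0 : ℝ)) + (cc, -(∑ i, cc i)),
      ⟨(0, 0), le_refl _, le_refl _, cc, hcc, rfl⟩, ?_⟩, ?_⟩, rfl⟩
    · simp [Prod.ext_iff]
    · simp only [Set.mem_setOf_eq, Pi.add_apply, Finset.sum_add_distrib]
      ring
  · rintro ⟨⟨z, ζ⟩, ⟨⟨x, hx, r, ⟨l, hl1, hl2, cc, hcc, rfl⟩, heq⟩, hsum⟩, rfl⟩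
    simp only [Prod.ext_iff, Prod.fst_add, Prod.snd_add] at heq
    obtain ⟨hz, hζ⟩ := heq
    -- sum condition forces l = 0
    have hsum' : (∑ i, l.1 i) + l.2 = 0 := by
      simp only [Set.mem_setOf_eq] at hsum
      rw [hz, hζ] at hsum
      have : ∑ i, (P.mulVec x + (l.1 + cc)) i
          = (∑ i, P.mulVec x i) + (∑ i, l.1 i) + (∑ i, cc i) := by
        simp only [Pi.add_apply, Finset.sum_add_distrib]; ring
      rw [this] at hsum
      linarith
    have hls : ∑ i, l.1 i = 0 := by
      have h1 : 0 ≤ ∑ i, l.1 i := Finset.sum_nonneg fun i _ => hl1 i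
      linarith
    have hl0 : l.1 = 0 := by
      funext i
      have := (Finset.sum_eq_zero_iff_of_nonneg (fun i _ => hl1 i)).1 hls i
        (Finset.mem_univ i)
      simpa using this
    exact ⟨x, hx, cc, hcc, by rw [hz, hl0]; simp⟩
end

section
/- Let f : ℝ^q → ℝ ∪ {±∞} and let C ⊆ ℝ^q be a convex cone such that f is C-monotone on P[S] − C. Define f̄ : ℝ^{q+1} → ℝ ∪ {±∞} by f̄(y, η) := f(y) if eᵀy + η ≥ 0 and f̄(y, η) := −∞ otherwise, P̄x := (Px, −eᵀPx), and R := ℝ^{q+1}₊ + {(c, −eᵀc) | c ∈ C}. Then f̄ is R-monotone on the set P̄[S] − R. -/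
/-- If `f` is `C`-monotone on `P[S] − C`, then the lifted function
`f̄(y, η) = f(y)` if `eᵀy + η ≥ 0`, `−∞` otherwise, is `R`-monotone on `P̄[S] − R`,
where `P̄x = (Px, −eᵀPx)` and `R = ℝ^{q+1}₊ + {(c, −eᵀc) | c ∈ C}`. -/
theorem stmt11 (q m n : ℕ)
    (A : Matrix (Fin m) (Fin n) ℝ) (P : Matrix (Fin q) (Fin n) ℝ) (b : Fin m → ℝ)
    (S : Set (Fin n → ℝ)) (hS : S = {x | b ≤ A.mulVec x})
    (C : Set (Fin q → ℝ))
    (hC_convex : Convex ℝ C)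
    (hC_cone : ∀ (t : ℝ), 0 ≤ t → ∀ c ∈ C, t • c ∈ C)
    (f : (Fin q → ℝ) → EReal)
    (hmono : ∀ x ∈ {v | ∃ s ∈ S, ∃ cc ∈ C, v = P.mulVec s - cc},
             ∀ y ∈ {v | ∃ s ∈ S, ∃ cc ∈ C, v = P.mulVec s - cc},
             y - x ∈ C → f x ≤ f y)
    (fbar : ((Fin q → ℝ) × ℝ) → EReal)
    (hfbar : ∀ y η, fbar (y, η) = if 0 ≤ (∑ i, y i) + η then f y else ⊥)
    (R : Set ((Fin q → ℝ) × ℝ))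
    (hR : R = {r | ∃ l : (Fin q → ℝ) × ℝ, 0 ≤ l.1 ∧ 0 ≤ l.2 ∧
      ∃ cc ∈ C, r = l + (cc, -(∑ i, cc i))}) :
    ∀ z1 ∈ {z | ∃ s ∈ S, ∃ r ∈ R, z = (P.mulVec s, -(∑ i, P.mulVec s i)) - r},
    ∀ z2 ∈ {z | ∃ s ∈ S, ∃ r ∈ R, z = (P.mulVec s, -(∑ i, P.mulVec s i)) - r},
      z1 - z2 ∈ R → fbar z2 ≤ fbar z1 := by
  subst hR
  intro z1 hz1 z2 hz2 hzr
  obtain ⟨s1, hs1, r1, ⟨l1, hl11, hl12, c1, hc1, hr1e⟩, hz1e⟩ := hz1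
  obtain ⟨s2, hs2, r2, ⟨l2, hl21, hl22, c2, hc2, hr2e⟩, hz2e⟩ := hz2
  obtain ⟨l, hl1, hl2, c, hc, he⟩ := hzr
  subst hr1e hr2e
  -- component equations
  have h1f : z1.1 = P.mulVec s1 - (l1.1 + c1) := by rw [hz1e]; rfl
  have h1s : z1.2 = -(∑ i, P.mulVec s1 i) - (l1.2 + -(∑ i, c1 i)) := by rw [hz1e]; rfl
  have h2f : z2.1 = P.mulVec s2 - (l2.1 + c2) := by rw [hz2e]; rfl
  have h2s : z2.2 = -(∑ i, P.mulVec s2 i) - (l2.2 + -(∑ i, c2 i)) := by rw [hz2e]; rfl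
  have hef : z1.1 - z2.1 = l.1 + c := congrArg Prod.fst he
  have hes : z1.2 - z2.2 = l.2 + -(∑ i, c i) := congrArg Prod.snd he
  -- sums
  have sum1 : (∑ i, z1.1 i) + z1.2 = -((∑ i, l1.1 i) + l1.2) := by
    rw [h1f, h1s]
    simp [Finset.sum_sub_distrib, Finset.sum_add_distrib]
    ring
  have sum2 : (∑ i, z2.1 i) + z2.2 = -((∑ i, l2.1 i) + l2.2) := by
    rw [h2f, h2s]
    simp [Finset.sum_sub_distrib, Finset.sum_add_distrib]
    ring
  have sumd : ((∑ i, z1.1 i) + z1.2) - ((∑ i, z2.1 i) + z2.2) = (∑ i, l.1 i) + l.2 := by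
    have := congrArg (fun v => ∑ i, v i) hef
    simp [Finset.sum_sub_distrib, Finset.sum_add_distrib] at this
    linarith [this, hes]
  have fb1 : fbar z1 = if 0 ≤ (∑ i, z1.1 i) + z1.2 then f z1.1 else ⊥ := hfbar z1.1 z1.2
  have fb2 : fbar z2 = if 0 ≤ (∑ i, z2.1 i) + z2.2 then f z2.1 else ⊥ := hfbar z2.1 z2.2
  by_cases h2 : 0 ≤ (∑ i, z2.1 i) + z2.2
  · -- then all nonneg slack parts vanish
    have hnn : ∀ (v : Fin q → ℝ), 0 ≤ v → 0 ≤ ∑ i, v i :=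
      fun v hv => Finset.sum_nonneg fun i _ => hv i
    have e2 : (∑ i, l2.1 i) + l2.2 = 0 := by
      have := hnn l2.1 hl21; linarith [sum2 ▸ h2]
    have e2' : (∑ i, l2.1 i) = 0 := by have := hnn l2.1 hl21; linarith
    have hl21z : l2.1 = 0 := by
      funext i
      exact (Finset.sum_eq_zero_iff_of_nonneg (fun j _ => hl21 j)).mp e2' i (Finset.mem_univ i)
    have h1 : 0 ≤ (∑ i, z1.1 i) + z1.2 := by
      have := hnn l.1 hl1; linarith
    have e1 : (∑ i, l1.1 i) + l1.2 = 0 := by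
      have := hnn l1.1 hl11; linarith
    have e1' : (∑ i, l1.1 i) = 0 := by have := hnn l1.1 hl11; linarith
    have hl11z : l1.1 = 0 := by
      funext i
      exact (Finset.sum_eq_zero_iff_of_nonneg (fun j _ => hl11 j)).mp e1' i (Finset.mem_univ i)
    have ed : (∑ i, l.1 i) = 0 := by
      have := hnn l.1 hl1; nlinarith [sumd, e1, e2, sum1, sum2, hl2]
    have hl1z : l.1 = 0 := by
      funext i
      exact (Finset.sum_eq_zero_iff_of_nonneg (fun j _ => hl1 j)).mp ed i (Finset.mem_univ i)
    have hmem1 : z1.1 ∈ {v | ∃ s ∈ S, ∃ cc ∈ C, v = P.mulVec s - cc} :=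
      ⟨s1, hs1, c1, hc1, by rw [h1f, hl11z]; simp⟩
    have hmem2 : z2.1 ∈ {v | ∃ s ∈ S, ∃ cc ∈ C, v = P.mulVec s - cc} :=
      ⟨s2, hs2, c2, hc2, by rw [h2f, hl21z]; simp⟩
    have hdC : z1.1 - z2.1 ∈ C := by rw [hef, hl1z]; simpa using hc
    rw [fb1, fb2, if_pos h1, if_pos h2]
    exact hmono z2.1 hmem2 z1.1 hmem1 hdC
  · rw [fb2, if_neg h2]
    exact bot_le
end
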